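/- arXiv:2510.02950 — 7 statements merged into one kernel-verified Lean document; each statement's English description precedes it below -/
import Mathlib

section
/- An arborescence forest F of a digraph G is maximum (has maximum arc cardinality among all arborescence forests of G) if and only if there do not exist two distinct roots r and r' of F such that G contains a directed path from r to r'. -/
open Finset

variable {V : Type*} [Fintype V] [DecidableEq V]

/-- The in-degree of a vertex `v` in the digraph with arc set `F`. -/
def inDeg (F : Finset (V × V)) (v : V) : ℕ := (F.filter fun a => a.2 = v).card

/-- A root is a vertex of in-degree `0`. -/
def IsRoot (F : Finset (V × V)) (v : V) : Prop := inDeg F v = 0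

/-- `F` is acyclic when arc directions are forgotten (no loops, no antiparallel
pairs, and the underlying simple graph is acyclic). -/
def UndirAcyclic (F : Finset (V × V)) : Prop :=
  (∀ a ∈ F, a.1 ≠ a.2 ∧ (a.2, a.1) ∉ F) ∧
  (SimpleGraph.fromRel fun u v => (u, v) ∈ F).IsAcyclic

/-- An arborescence forest: every vertex has in-degree at most `1`, and the
graph is acyclic ignoring directions. -/
def IsArbForest (F : Finset (V × V)) : Prop :=
  (∀ v, inDeg F v ≤ 1) ∧ UndirAcyclic F

/-- A maximum arborescence forest of `G`: an arborescence forest `F ⊆ G` of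
maximum arc cardinality. -/
def IsMaxArbForest (G F : Finset (V × V)) : Prop :=
  F ⊆ G ∧ IsArbForest F ∧ ∀ F' ⊆ G, IsArbForest F' → F'.card ≤ F.card

/-- Directed reachability in arc set `G`. -/
def Reach (G : Finset (V × V)) (u v : V) : Prop :=
  Relation.ReflTransGen (fun x y => (x, y) ∈ G) u v

/-- Weak reachability: `u` and `v` are in the same weakly connected component. -/
def WReach (F : Finset (V × V)) (u v : V) : Prop :=
  Relation.ReflTransGen (fun x y => (x, y) ∈ F ∨ (y, x) ∈ F) u v

/-- A directed path in `G`, given as its (duplicate-free) list of vertices. -/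
def IsDiPath (G : Finset (V × V)) (p : List V) : Prop :=
  p.Chain' (fun u v => (u, v) ∈ G) ∧ p.Nodup

/-- The arcs of a path given as a vertex list. -/
def pathArcs (p : List V) : Finset (V × V) := (p.zip p.tail).toFinset

/-- `UPDATE(F, P)`: remove the parent arcs (all in-arcs) of every vertex of the
path `p` other than its first vertex, and add the arcs of `p`. -/
def update (F : Finset (V × V)) (p : List V) : Finset (V × V) :=
  (F.filter fun a => a.2 ∉ p.tail) ∪ pathArcs p

/-- A feasible path for `F` from root `r` to root `r'` in `G`: a directed path
`p = p₁ ++ p₂` from `r` to `r'` such that all arcs of `p₁` belong to the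
arborescence (weak component) of `r` in `F` and all vertices of `p₂` belong to
the arborescence of `r'` in `F`. -/
def FeasiblePath (G F : Finset (V × V)) (r r' : V) (p : List V) : Prop :=
  IsDiPath G p ∧ p.head? = some r ∧ p.getLast? = some r' ∧
  ∃ p₁ p₂ : List V, p = p₁ ++ p₂ ∧
    (∀ a ∈ pathArcs p₁, a ∈ F ∧ WReach F r a.1 ∧ WReach F r a.2) ∧
    (∀ v ∈ p₂, WReach F r' v)

set_option linter.unusedSectionVars false

/- ## auxiliary lemmas -/

section Aux

open SimpleGraph

lemma mem_of_getLast?' {l : List V} {a : V} (h : l.getLast? = some a) : a ∈ l := by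
  induction l with
  | nil => simp at h
  | cons x t ih =>
    cases t with
    | nil => simp_all
    | cons y t' =>
      rw [List.getLast?_cons_cons] at h
      exact List.mem_cons_of_mem _ (ih h)

lemma reach_sup_edge {H : SimpleGraph V} {x y a b : V}
    (h : (H ⊔ fromEdgeSet {s(x, y)}).Reachable a b) :
    H.Reachable a b ∨ (H.Reachable a x ∧ H.Reachable y b) ∨
      (H.Reachable a y ∧ H.Reachable x b) := by
  obtain ⟨w⟩ := h
  induction w with
  | nil => exact Or.inl (Reachable.refl _)
  | @cons u c d hadj p ih =>
    rcases (sup_adj _ _ _ _).1 hadj with huc | hE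
    · rcases ih with h1 | ⟨h1, h2⟩ | ⟨h1, h2⟩
      · exact Or.inl (huc.reachable.trans h1)
      · exact Or.inr (Or.inl ⟨huc.reachable.trans h1, h2⟩)
      · exact Or.inr (Or.inr ⟨huc.reachable.trans h1, h2⟩)
    · rw [fromEdgeSet_adj, Set.mem_singleton_iff, Sym2.eq_iff] at hE
      rcases hE.1 with ⟨rfl, rfl⟩ | ⟨rfl, rfl⟩
      · rcases ih with h1 | ⟨h1, h2⟩ | ⟨h1, h2⟩
        · exact Or.inr (Or.inl ⟨Reachable.refl _, h1⟩)
        · exact Or.inr (Or.inr ⟨h1.symm, h1.symm.trans h2⟩)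
        · exact Or.inl h2
      · rcases ih with h1 | ⟨h1, h2⟩ | ⟨h1, h2⟩
        · exact Or.inr (Or.inr ⟨Reachable.refl _, h1⟩)
        · exact Or.inl h2
        · exact Or.inr (Or.inl ⟨h1.symm, h1.symm.trans h2⟩)

lemma acyclic_mono {H K : SimpleGraph V} (h : H ≤ K) (hK : K.IsAcyclic) : H.IsAcyclic := by
  intro v c hc
  exact hK (c.mapLe h) ((Walk.mapLe_isCycle h).2 hc)

lemma acyclic_sup_edge {H : SimpleGraph V} {x y : V} (hH : H.IsAcyclic)
    (hxy : x ≠ y) (hr : ¬ H.Reachable x y) :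
    (H ⊔ fromEdgeSet {s(x, y)}).IsAcyclic := by
  rw [isAcyclic_iff_forall_adj_isBridge]
  intro v w hvw
  rw [isBridge_iff, deleteEdges]
  intro hreach
  rcases (sup_adj _ _ _ _).1 hvw with hvw' | hE
  · have hne : s(v, w) ≠ s(x, y) := by
      intro he
      rcases Sym2.eq_iff.1 he with ⟨rfl, rfl⟩ | ⟨rfl, rfl⟩
      · exact hr hvw'.reachable
      · exact hr hvw'.symm.reachable
    have hgr : (H ⊔ fromEdgeSet {s(x, y)}) \ fromEdgeSet {s(v, w)}
        = (H \ fromEdgeSet {s(v, w)}) ⊔ fromEdgeSet {s(x, y)} := by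
      ext a b
      simp only [sdiff_adj, sup_adj, fromEdgeSet_adj, Set.mem_singleton_iff]
      have : s(a, b) = s(x, y) → ¬ s(a, b) = s(v, w) := by
        intro h1 h2; exact hne (h2.symm.trans h1)
      tauto
    rw [hgr] at hreach
    have hle : H \ fromEdgeSet {s(v, w)} ≤ H := sdiff_le
    have hbr := (isAcyclic_iff_forall_adj_isBridge.1 hH hvw')
    rcases reach_sup_edge hreach with h1 | ⟨h1, h2⟩ | ⟨h1, h2⟩
    · exact hbr h1
    · exact hr (((h1.mono hle).symm.trans hvw'.reachable).trans ((h2.mono hle).symm))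
    · exact hr (((h2.mono hle).trans hvw'.symm.reachable).trans (h1.mono hle))
  · rw [fromEdgeSet_adj, Set.mem_singleton_iff] at hE
    have hle : (H ⊔ fromEdgeSet {s(x, y)}) \ fromEdgeSet {s(v, w)} ≤ H := by
      intro a b hab
      rw [sdiff_adj] at hab
      rcases hab with ⟨h1 | h2, h3⟩
      · exact h1
      · exact absurd (hE.1 ▸ h2) h3
    rcases Sym2.eq_iff.1 hE.1 with ⟨rfl, rfl⟩ | ⟨rfl, rfl⟩
    · exact hr (hreach.mono hle)
    · exact hr ((hreach.mono hle).symm)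

/-- undirected edges of a path, as a set of `Sym2`. -/
def pathEdges (p : List V) : Set (Sym2 V) := {e | ∃ ab ∈ p.zip p.tail, e = s(ab.1, ab.2)}

lemma pathEdges_nil : pathEdges ([] : List V) = ∅ := by
  simp [pathEdges]

lemma pathEdges_single (x : V) : pathEdges [x] = ∅ := by
  simp [pathEdges]

lemma pathEdges_cons (x y : V) (t : List V) :
    pathEdges (x :: y :: t) = {s(x, y)} ∪ pathEdges (y :: t) := by
  ext e
  simp only [pathEdges, List.zip_cons_cons, List.tail_cons, Set.mem_setOf_eq,
    Set.mem_union, Set.mem_singleton_iff, List.mem_cons]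
  constructor
  · rintro ⟨ab, hab | hab, rfl⟩
    · subst hab; exact Or.inl rfl
    · exact Or.inr ⟨ab, hab, rfl⟩
  · rintro (rfl | ⟨ab, hab, rfl⟩)
    · exact ⟨(x, y), Or.inl rfl, rfl⟩
    · exact ⟨ab, Or.inr hab, rfl⟩

lemma mem_pathEdges_iff {p : List V} {a b : V} :
    s(a, b) ∈ pathEdges p ↔ (a, b) ∈ p.zip p.tail ∨ (b, a) ∈ p.zip p.tail := by
  constructor
  · rintro ⟨⟨u, w⟩, hm, he⟩
    rcases Sym2.eq_iff.1 he with ⟨rfl, rfl⟩ | ⟨rfl, rfl⟩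
    · exact Or.inl hm
    · exact Or.inr hm
  · rintro (h | h)
    · exact ⟨(a, b), h, rfl⟩
    · exact ⟨(b, a), h, Sym2.eq_swap⟩

lemma reach_sup_path (H : SimpleGraph V) : ∀ (p : List V) (a b : V),
    (H ⊔ fromEdgeSet (pathEdges p)).Reachable a b →
    H.Reachable a b ∨ ∃ u ∈ p, ∃ w ∈ p, H.Reachable a u ∧ H.Reachable b w := by
  intro p
  induction p with
  | nil =>
    intro a b h
    rw [pathEdges_nil, fromEdgeSet_empty, sup_bot_eq] at h
    exact Or.inl h
  | cons x q ih =>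
    cases q with
    | nil =>
      intro a b h
      rw [pathEdges_single, fromEdgeSet_empty, sup_bot_eq] at h
      exact Or.inl h
    | cons y t =>
      intro a b h
      rw [pathEdges_cons, fromEdgeSet_union,
        sup_comm (fromEdgeSet {s(x, y)}) (fromEdgeSet (pathEdges (y :: t))), ← sup_assoc] at h
      have key : ∀ c v : V, v ∈ x :: y :: t →
          (H ⊔ fromEdgeSet (pathEdges (y :: t))).Reachable c v →
          ∃ w ∈ x :: y :: t, H.Reachable c w := by
        intro c v hv hcv
        rcases ih c v hcv with h1 | ⟨u, hu, w, hw, h1, h2⟩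
        · exact ⟨v, hv, h1⟩
        · exact ⟨u, List.mem_cons_of_mem _ hu, h1⟩
      have hmemx : x ∈ x :: y :: t := List.mem_cons_self
      have hmemy : y ∈ x :: y :: t := List.mem_cons_of_mem _ (List.mem_cons_self)
      rcases reach_sup_edge h with h1 | ⟨h1, h2⟩ | ⟨h1, h2⟩
      · rcases ih a b h1 with h2 | ⟨u, hu, w, hw, h2, h3⟩
        · exact Or.inl h2
        · exact Or.inr ⟨u, List.mem_cons_of_mem _ hu, w, List.mem_cons_of_mem _ hw, h2, h3⟩
      · obtain ⟨u, hu, hau⟩ := key a x hmemx h1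
        obtain ⟨w, hw, hbw⟩ := key b y hmemy h2.symm
        exact Or.inr ⟨u, hu, w, hw, hau, hbw⟩
      · obtain ⟨u, hu, hau⟩ := key a y hmemy h1
        obtain ⟨w, hw, hbw⟩ := key b x hmemx h2.symm
        exact Or.inr ⟨u, hu, w, hw, hau, hbw⟩

lemma path_acyclic (H : SimpleGraph V) : ∀ (p : List V), H.IsAcyclic → p.Nodup →
    (∀ u ∈ p, ∀ w ∈ p, u ≠ w → ¬ H.Reachable u w) →
    (H ⊔ fromEdgeSet (pathEdges p)).IsAcyclic := by
  intro p
  induction p with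
  | nil =>
    intro hH _ _
    rw [pathEdges_nil, fromEdgeSet_empty, sup_bot_eq]
    exact hH
  | cons x q ih =>
    cases q with
    | nil =>
      intro hH _ _
      rw [pathEdges_single, fromEdgeSet_empty, sup_bot_eq]
      exact hH
    | cons y t =>
      intro hH hnd hpair
      rw [pathEdges_cons, fromEdgeSet_union,
        sup_comm (fromEdgeSet {s(x, y)}) (fromEdgeSet (pathEdges (y :: t))), ← sup_assoc]
      have hnd' : (y :: t).Nodup := hnd.of_cons
      have hxny : x ∉ y :: t := (List.nodup_cons.1 hnd).1
      have h1 : (H ⊔ fromEdgeSet (pathEdges (y :: t))).IsAcyclic := by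
        refine ih hH hnd' ?_
        intro u hu w hw huw
        exact hpair u (List.mem_cons_of_mem _ hu) w (List.mem_cons_of_mem _ hw) huw
      refine acyclic_sup_edge h1 ?_ ?_
      · intro he; exact hxny (he ▸ List.mem_cons_self)
      · intro hre
        rcases reach_sup_path H (y :: t) x y hre with h2 | ⟨u, hu, w, hw, h2, h3⟩
        · exact hpair x (List.mem_cons_self) y
            (List.mem_cons_of_mem _ (List.mem_cons_self)) (fun he => hxny (he ▸ List.mem_cons_self)) h2
        · exact hpair x (List.mem_cons_self) u (List.mem_cons_of_mem _ hu)
            (fun he => hxny (he ▸ hu)) h2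

end Aux


section Directed

open SimpleGraph

instance (F : Finset (V × V)) (v : V) : Decidable (IsRoot F v) := by
  unfold IsRoot; infer_instance

lemma not_arc_into_root {F : Finset (V × V)} {r : V} (hr : IsRoot F r) {a : V} :
    (a, r) ∉ F := by
  intro h
  have : ((a, r) : V × V) ∈ F.filter fun x => x.2 = r := Finset.mem_filter.2 ⟨h, rfl⟩
  have := Finset.card_pos.2 ⟨_, this⟩
  rw [IsRoot, inDeg] at hr
  omega

lemma parent_unique {F : Finset (V × V)} (hdeg : ∀ v, inDeg F v ≤ 1) {a b v : V}
    (ha : (a, v) ∈ F) (hb : (b, v) ∈ F) : a = b := by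
  have h := hdeg v
  rw [inDeg, Finset.card_le_one] at h
  have := h (a, v) (Finset.mem_filter.2 ⟨ha, rfl⟩) (b, v) (Finset.mem_filter.2 ⟨hb, rfl⟩)
  exact congrArg Prod.fst this

lemma no_dicycle {F : Finset (V × V)} (hF : UndirAcyclic F) {u v : V}
    (huv : (u, v) ∈ F) : ¬ Reach F v u := by
  intro h
  have hne : u ≠ v := (hF.1 _ huv).1
  have hanti : (v, u) ∉ F := (hF.1 _ huv).2
  -- a refl-trans chain from v to u avoiding the arc (u,v)
  have key : ∀ a, Reach F a u →
      Relation.ReflTransGen (fun x y => (x, y) ∈ F ∧ (x, y) ≠ (u, v)) a u := by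
    intro a ha
    induction ha using Relation.ReflTransGen.head_induction_on with
    | refl => exact Relation.ReflTransGen.refl
    | head hstep _ ih =>
      rename_i a' c _
      by_cases he : (a', c) = (u, v)
      · have : a' = u := congrArg Prod.fst he
        subst this
        exact Relation.ReflTransGen.refl
      · exact Relation.ReflTransGen.head ⟨hstep, he⟩ ih
  have key2 : ∀ a, Relation.ReflTransGen (fun x y => (x, y) ∈ F ∧ (x, y) ≠ (u, v)) a u →
      ((SimpleGraph.fromRel fun a b => (a, b) ∈ F) \
        fromEdgeSet {s(u, v)}).Reachable a u := by
    intro a ha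
    induction ha using Relation.ReflTransGen.head_induction_on with
    | refl => exact Reachable.refl _
    | head hstep _ ih =>
      rename_i a' c _
      refine (Adj.reachable ?_).trans ih
      rw [sdiff_adj, fromRel_adj, fromEdgeSet_adj]
      obtain ⟨hmem, hne'⟩ := hstep
      have hac : a' ≠ c := (hF.1 _ hmem).1
      refine ⟨⟨hac, Or.inl hmem⟩, ?_⟩
      rintro ⟨hs, -⟩
      rw [Set.mem_singleton_iff, Sym2.eq_iff] at hs
      rcases hs with ⟨rfl, rfl⟩ | ⟨rfl, rfl⟩
      · exact hne' rfl
      · exact hanti hmem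
  have hadj : (SimpleGraph.fromRel fun a b => (a, b) ∈ F).Adj u v := by
    rw [fromRel_adj]; exact ⟨hne, Or.inl huv⟩
  exact (isAcyclic_iff_forall_adj_isBridge.1 hF.2 hadj) (key2 v (key v h)).symm

lemma root_reach {F : Finset (V × V)} (hF : IsArbForest F) : ∀ v : V,
    ∃ r, IsRoot F r ∧ Reach F r v := by
  classical
  have H : ∀ (n : ℕ) (v : V), (univ.filter fun x => Reach F x v).card ≤ n →
      ∃ r, IsRoot F r ∧ Reach F r v := by
    intro n
    induction n with
    | zero =>
      intro v hv
      exfalso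
      have : v ∈ univ.filter fun x => Reach F x v :=
        Finset.mem_filter.2 ⟨Finset.mem_univ _, Relation.ReflTransGen.refl⟩
      have := Finset.card_pos.2 ⟨_, this⟩
      omega
    | succ n ih =>
      intro v hv
      by_cases h0 : inDeg F v = 0
      · exact ⟨v, h0, Relation.ReflTransGen.refl⟩
      · have : (F.filter fun a => a.2 = v).Nonempty := by
          rw [← Finset.card_pos]
          rw [inDeg] at h0
          omega
        obtain ⟨a, ha⟩ := this
        rw [Finset.mem_filter] at ha
        have hav : (a.1, v) ∈ F := by
          have : a = (a.1, a.2) := rfl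
          rw [ha.2] at this
          rw [← this]; exact ha.1
        have hle : (univ.filter fun x => Reach F x a.1).card ≤ n := by
          have hsub : (univ.filter fun x => Reach F x a.1) ⊆
              univ.filter fun x => Reach F x v := by
            intro x hx
            rw [Finset.mem_filter] at hx ⊢
            exact ⟨hx.1, hx.2.tail hav⟩
          have hvin : v ∈ univ.filter fun x => Reach F x v :=
            Finset.mem_filter.2 ⟨Finset.mem_univ _, Relation.ReflTransGen.refl⟩
          have hvout : v ∉ univ.filter fun x => Reach F x a.1 := by
            rw [Finset.mem_filter]
            rintro ⟨-, hvr⟩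
            exact no_dicycle hF.2 hav hvr
          have := Finset.card_lt_card (Finset.ssubset_iff_of_subset hsub |>.2 ⟨v, hvin, hvout⟩)
          omega
        obtain ⟨r, hr, hru⟩ := ih a.1 hle
        exact ⟨r, hr, hru.tail hav⟩
  intro v
  exact H _ v le_rfl

lemma root_reach_comp {F : Finset (V × V)} (hF : IsArbForest F) {r v : V} (hr : IsRoot F r)
    (h : WReach F r v) : Reach F r v := by
  induction h with
  | refl => exact Relation.ReflTransGen.refl
  | @tail b c hwr hstep ih =>
    rcases hstep with hf | hb
    · exact ih.tail hf
    · rcases Relation.ReflTransGen.cases_tail ih with heq | ⟨y, hy1, hy2⟩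
      · exfalso; exact not_arc_into_root hr (heq ▸ hb)
      · have : y = c := parent_unique hF.1 hy2 hb
        exact this ▸ hy1

lemma wreach_of_reachable {F : Finset (V × V)} {u v : V}
    (h : (SimpleGraph.fromRel fun a b => (a, b) ∈ F).Reachable u v) : WReach F u v := by
  obtain ⟨w⟩ := h
  induction w with
  | nil => exact Relation.ReflTransGen.refl
  | cons hadj p ih =>
    rw [fromRel_adj] at hadj
    exact Relation.ReflTransGen.head hadj.2 ih

lemma reachable_of_wreach {F : Finset (V × V)} (hL : ∀ a ∈ F, a.1 ≠ a.2) {u v : V}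
    (h : WReach F u v) : (SimpleGraph.fromRel fun a b => (a, b) ∈ F).Reachable u v := by
  induction h with
  | refl => exact SimpleGraph.Reachable.refl _
  | tail hwr hstep ih =>
    refine ih.trans (SimpleGraph.Adj.reachable ?_)
    rw [fromRel_adj]
    rcases hstep with hf | hb
    · exact ⟨hL _ hf, Or.inl hf⟩
    · exact ⟨(hL _ hb).symm, Or.inr hb⟩

lemma card_forest {F : Finset (V × V)} (hdeg : ∀ v, inDeg F v ≤ 1) :
    F.card + (univ.filter fun v => IsRoot F v).card = Fintype.card V := by
  classical
  have h1 : F.card = ∑ v : V, inDeg F v := by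
    rw [Finset.card_eq_sum_card_fiberwise (f := Prod.snd) (t := univ)
      (fun x _ => Finset.mem_univ _)]
    rfl
  have h2 : ∀ v : V, inDeg F v = if IsRoot F v then 0 else 1 := by
    intro v
    by_cases h : IsRoot F v
    · rw [if_pos h]; exact h
    · rw [if_neg h]
      have := hdeg v
      rw [IsRoot] at h
      omega
  have h3 : F.card = (univ.filter fun v => ¬ IsRoot F v).card := by
    rw [h1]
    rw [Finset.sum_congr rfl (fun v _ => h2 v)]
    rw [Finset.sum_ite, Finset.sum_const, Finset.sum_const]
    simp
  have h4 := Finset.card_filter_add_card_filter_not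
    (s := (univ : Finset V)) (fun v => IsRoot F v)
  rw [Finset.card_univ] at h4
  omega

end Directed

lemma card_le_of_no_root_path {G F F' : Finset (V × V)} (hF : IsArbForest F)
    (hFG : F ⊆ G) (hF' : IsArbForest F') (hFG' : F' ⊆ G)
    (hno : ∀ r r' : V, r ≠ r' → IsRoot F r → IsRoot F r' → ¬ Reach G r r') :
    F'.card ≤ F.card := by
  classical
  have mono : ∀ (K : Finset (V × V)), K ⊆ G → ∀ u v : V, Reach K u v → Reach G u v := by
    intro K hK u v h
    exact Relation.ReflTransGen.mono (fun x y hxy => hK hxy) _ _ h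
  -- the root of `F'` weakly above a vertex
  have pick : ∀ r : V, ∃ w, IsRoot F' w ∧ Reach F' w r := root_reach hF'
  choose ψ hψ1 hψ2 using pick
  have hinj : ∀ r ∈ univ.filter fun v => IsRoot F v, ∀ r' ∈ univ.filter fun v => IsRoot F v,
      ψ r = ψ r' → r = r' := by
    intro r hr r' hr' heq
    rw [Finset.mem_filter] at hr hr'
    by_contra hne
    obtain ⟨ρ, hρ, hρw⟩ := root_reach hF (ψ r)
    have h1 : Reach G ρ r := (mono F hFG _ _ hρw).trans (mono F' hFG' _ _ (hψ2 r))
    have h2 : Reach G ρ r' := (mono F hFG _ _ hρw).trans (mono F' hFG' _ _ (heq ▸ hψ2 r'))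
    have e1 : ρ = r := by
      by_contra hne1
      exact hno ρ r hne1 hρ hr.2 h1
    have e2 : ρ = r' := by
      by_contra hne2
      exact hno ρ r' hne2 hρ hr'.2 h2
    exact hne (e1 ▸ e2)
  have hmaps : ∀ r ∈ univ.filter fun v => IsRoot F v,
      ψ r ∈ univ.filter fun v => IsRoot F' v := by
    intro r _
    exact Finset.mem_filter.2 ⟨Finset.mem_univ _, hψ1 r⟩
  have hcard := Finset.card_le_card_of_injOn ψ hmaps hinj
  have c1 := card_forest (F := F) hF.1
  have c2 := card_forest (F := F') hF'.1
  omega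

lemma exists_dipath {G : Finset (V × V)} {a b : V} (h : Reach G a b) :
    ∃ p : List V, p.Chain' (fun u v => (u, v) ∈ G) ∧ p.Nodup ∧
      p.head? = some a ∧ p.getLast? = some b := by
  induction h using Relation.ReflTransGen.head_induction_on with
  | refl => exact ⟨[b], List.isChain_singleton b, by simp, rfl, rfl⟩
  | head hstep _ ih =>
    rename_i a' c _
    obtain ⟨p, hc, hnd, hh, hl⟩ := ih
    by_cases hmem : a' ∈ p
    · obtain ⟨s, t, rfl⟩ := List.append_of_mem hmem
      refine ⟨a' :: t, hc.suffix ⟨s, rfl⟩, hnd.sublist (List.sublist_append_right s _), rfl, ?_⟩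
      rw [← hl, List.getLast?_append_of_ne_nil _ (by simp)]
    · obtain ⟨c', p', rfl⟩ : ∃ c' p', p = c' :: p' := by
        cases p with
        | nil => simp at hh
        | cons c' p' => exact ⟨c', p', rfl⟩
      rw [List.head?_cons, Option.some_inj] at hh
      subst hh
      refine ⟨a' :: c' :: p', List.isChain_cons_cons.2 ⟨hstep, hc⟩,
        List.nodup_cons.2 ⟨hmem, hnd⟩, rfl, ?_⟩
      rw [List.getLast?_cons_cons]
      exact hl

lemma zip_mem_chain' {R : V → V → Prop} : ∀ (p : List V), p.Chain' R →
    ∀ a b : V, (a, b) ∈ p.zip p.tail → R a b := by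
  intro p
  induction p with
  | nil => simp
  | cons x q ih =>
    cases q with
    | nil => simp
    | cons y t =>
      intro hc a b hab
      simp only [List.tail_cons, List.zip_cons_cons, List.mem_cons] at hab
      rcases hab with heq | hmem
      · injection heq with h1 h2
        subst h1; subst h2
        exact (List.isChain_cons_cons.1 hc).1
      · exact ih (List.isChain_cons_cons.1 hc).2 a b hmem

lemma zip_tail_idx : ∀ (p : List V), p.Nodup → ∀ a b : V, (a, b) ∈ p.zip p.tail →
    p.idxOf b = p.idxOf a + 1 := by
  intro p
  induction p with
  | nil => simp
  | cons x q ih =>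
    cases q with
    | nil => simp
    | cons y t =>
      intro hnd a b hab
      simp only [List.tail_cons, List.zip_cons_cons, List.mem_cons] at hab
      have hxq : x ∉ y :: t := (List.nodup_cons.1 hnd).1
      rcases hab with heq | hmem
      · injection heq with h1 h2
        subst h1; subst h2
        have hab' : a ≠ b := fun h => hxq (by rw [h]; exact List.mem_cons_self)
        rw [List.idxOf_cons_self, List.idxOf_cons_ne _ hab', List.idxOf_cons_self]
      · have hmem' := List.of_mem_zip hmem
        have ha : a ∈ y :: t := hmem'.1
        have hb : b ∈ y :: t := List.mem_of_mem_tail hmem'.2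
        have hax : a ≠ x := fun h => hxq (h ▸ ha)
        have hbx : b ≠ x := fun h => hxq (h ▸ hb)
        rw [List.idxOf_cons_ne _ hax.symm, List.idxOf_cons_ne _ hbx.symm]
        have := ih (List.nodup_cons.1 hnd).2 a b hmem
        omega

lemma augment {G F : Finset (V × V)} (hF : IsArbForest F) (hFG : F ⊆ G)
    {r r' : V} (hne : r ≠ r') (hr : IsRoot F r) (hr' : IsRoot F r')
    (hreach : Reach G r r') :
    ∃ F'' : Finset (V × V), F'' ⊆ G ∧ IsArbForest F'' ∧ F.card < F''.card := by
  classical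
  obtain ⟨p, hchain, hnd, hh, hl⟩ := exists_dipath hreach
  obtain ⟨t, rfl⟩ : ∃ t, p = r :: t := by
    cases p with
    | nil => simp at hh
    | cons z t =>
      rw [List.head?_cons, Option.some_inj] at hh
      exact ⟨t, by rw [hh]⟩
  have hr'p : r' ∈ r :: t := mem_of_getLast?' hl
  have hr't : r' ∈ t := by
    rcases List.mem_cons.1 hr'p with h | h
    · exact absurd h.symm hne
    · exact h
  have htnd : t.Nodup := hnd.of_cons
  have hrt : r ∉ t := (List.nodup_cons.1 hnd).1
  set Z : List (V × V) := (r :: t).zip t with hZdef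
  set K : Finset (V × V) := F.filter fun a => a.2 ∉ t with hKdef
  have hKF : K ⊆ F := Finset.filter_subset _ _
  have hZmem : ∀ a b : V, (a, b) ∈ Z → a ∈ r :: t ∧ b ∈ t :=
    fun a b h => ⟨(List.of_mem_zip h).1, (List.of_mem_zip h).2⟩
  have hZG : ∀ a b : V, (a, b) ∈ Z → (a, b) ∈ G :=
    fun a b h => zip_mem_chain' (r :: t) hchain a b h
  have hidx : ∀ a b : V, (a, b) ∈ Z →
      (r :: t).idxOf b = (r :: t).idxOf a + 1 :=
    fun a b h => zip_tail_idx (r :: t) hnd a b h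
  have hKnotp : ∀ a b : V, (a, b) ∈ K → b ∉ r :: t := by
    intro a b hab hbp
    rw [hKdef, Finset.mem_filter] at hab
    rcases List.mem_cons.1 hbp with h | h
    · exact not_arc_into_root hr (h ▸ hab.1)
    · exact hab.2 h
  have hsnd : Z.map Prod.snd = t := by
    rw [hZdef]
    exact List.map_snd_zip (by simp)
  have hZnd : Z.Nodup := by
    have : (Z.map Prod.snd).Nodup := by rw [hsnd]; exact htnd
    exact this.of_map
  have hsndinj : ∀ x ∈ Z, ∀ y ∈ Z, x.2 = y.2 → x = y := by
    apply List.inj_on_of_nodup_map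
    rw [hsnd]; exact htnd
  refine ⟨K ∪ Z.toFinset, ?_, ⟨?_, ?_, ?_⟩, ?_⟩
  · -- subset of G
    intro a ha
    rcases Finset.mem_union.1 ha with h | h
    · exact hFG (hKF h)
    · exact hZG a.1 a.2 (List.mem_toFinset.1 h)
  · -- in-degrees
    intro v
    rw [inDeg, Finset.filter_union]
    refine le_trans (Finset.card_union_le _ _) ?_
    by_cases hv : v ∈ t
    · have h1 : K.filter (fun a => a.2 = v) = ∅ := by
        rw [Finset.filter_eq_empty_iff]
        intro a ha hav
        rw [hKdef, Finset.mem_filter] at ha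
        exact ha.2 (hav ▸ hv)
      have h2 : (Z.toFinset.filter fun a => a.2 = v).card ≤ 1 := by
        rw [Finset.card_le_one]
        intro x hx y hy
        rw [Finset.mem_filter, List.mem_toFinset] at hx hy
        exact hsndinj x hx.1 y hy.1 (hx.2.trans hy.2.symm)
      rw [h1]
      simpa using h2
    · have h2 : Z.toFinset.filter (fun a => a.2 = v) = ∅ := by
        rw [Finset.filter_eq_empty_iff]
        intro a ha hav
        rw [List.mem_toFinset] at ha
        exact hv (hav ▸ (hZmem a.1 a.2 ha).2)
      have h1 : (K.filter fun a => a.2 = v).card ≤ 1 := by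
        refine le_trans (Finset.card_le_card (Finset.filter_subset_filter _ hKF)) (hF.1 v)
      rw [h2]
      simpa using h1
  · -- no loops, no antiparallel arcs
    rintro ⟨a, b⟩ hab
    constructor
    · rcases Finset.mem_union.1 hab with h | h
      · exact (hF.2.1 _ (hKF h)).1
      · intro he
        have he' : a = b := he
        have := hidx a b (List.mem_toFinset.1 h)
        rw [he'] at this
        omega
    · intro hsw
      rcases Finset.mem_union.1 hab with h | h
      · rcases Finset.mem_union.1 hsw with h' | h'
        · exact (hF.2.1 _ (hKF h)).2 (hKF h')
        · exact hKnotp a b h (hZmem b a (List.mem_toFinset.1 h')).1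
      · rcases Finset.mem_union.1 hsw with h' | h'
        · exact hKnotp b a h' (hZmem a b (List.mem_toFinset.1 h)).1
        · have h1 := hidx a b (List.mem_toFinset.1 h)
          have h2 := hidx b a (List.mem_toFinset.1 h')
          omega
  · -- acyclicity of the underlying graph
    have hKdeg : ∀ v, inDeg K v ≤ 1 := by
      intro v
      exact le_trans (Finset.card_le_card (Finset.filter_subset_filter _ hKF)) (hF.1 v)
    have hKund : UndirAcyclic K := by
      refine ⟨fun a ha => ⟨(hF.2.1 a (hKF ha)).1, fun hsw => (hF.2.1 a (hKF ha)).2 (hKF hsw)⟩, ?_⟩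
      refine acyclic_mono ?_ hF.2.2
      intro a b hab
      rw [SimpleGraph.fromRel_adj] at hab ⊢
      exact ⟨hab.1, hab.2.imp (fun h => hKF h) (fun h => hKF h)⟩
    have hKforest : IsArbForest K := ⟨hKdeg, hKund⟩
    have hKroot : ∀ u ∈ r :: t, IsRoot K u := by
      intro u hu
      rcases List.mem_cons.1 hu with h | h
      · subst h
        have h1 : inDeg K u ≤ inDeg F u :=
          Finset.card_le_card (Finset.filter_subset_filter _ hKF)
        have h2 : inDeg F u = 0 := hr
        rw [IsRoot]
        omega
      · rw [IsRoot, inDeg]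
        rw [Finset.card_eq_zero, Finset.filter_eq_empty_iff]
        intro a ha hav
        rw [hKdef, Finset.mem_filter] at ha
        exact ha.2 (hav ▸ h)
    have hpair : ∀ u ∈ r :: t, ∀ w ∈ r :: t, u ≠ w →
        ¬ (SimpleGraph.fromRel fun x y => (x, y) ∈ K).Reachable u w := by
      intro u hu w hw huw hre
      have hW : WReach K u w := wreach_of_reachable hre
      have hRe : Reach K u w := root_reach_comp hKforest (hKroot u hu) hW
      rcases Relation.ReflTransGen.cases_tail hRe with h | ⟨y, _, hy⟩
      · exact huw h.symm
      · exact hKnotp y w hy hw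
    have hgeq : (SimpleGraph.fromRel fun x y => (x, y) ∈ K ∪ Z.toFinset)
        = (SimpleGraph.fromRel fun x y => (x, y) ∈ K) ⊔
          SimpleGraph.fromEdgeSet (pathEdges (r :: t)) := by
      ext a b
      have hPE : s(a, b) ∈ pathEdges (r :: t) ↔ (a, b) ∈ Z ∨ (b, a) ∈ Z :=
        mem_pathEdges_iff
      simp only [SimpleGraph.fromRel_adj, SimpleGraph.sup_adj, SimpleGraph.fromEdgeSet_adj,
        Finset.mem_union, List.mem_toFinset, hPE]
      tauto
    rw [hgeq]
    exact path_acyclic _ (r :: t) hKund.2 hnd hpair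
  · -- cardinality increases
    have hdisj : Disjoint K Z.toFinset := by
      rw [Finset.disjoint_left]
      rintro ⟨a, b⟩ haK haZ
      exact hKnotp a b haK (List.mem_cons_of_mem _ (hZmem a b (List.mem_toFinset.1 haZ)).2)
    have cZ : Z.toFinset.card = t.length := by
      rw [List.toFinset_card_of_nodup hZnd, hZdef, List.length_zip]
      simp
    have hsplit := Finset.card_filter_add_card_filter_not
      (s := F) (fun a : V × V => a.2 ∈ t)
    set R : Finset (V × V) := F.filter fun a => a.2 ∈ t with hRdef
    have hfib : R.card = ∑ v ∈ t.toFinset, (R.filter fun a => a.2 = v).card :=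
      Finset.card_eq_sum_card_fiberwise (fun a ha => by
        exact Finset.mem_coe.2 (List.mem_toFinset.2 (Finset.mem_filter.1 (Finset.mem_coe.1 ha)).2))
    have hsum : ∑ v ∈ t.toFinset, (R.filter fun a => a.2 = v).card
        ≤ ∑ v ∈ t.toFinset, inDeg F v :=
      Finset.sum_le_sum (fun v _ =>
        Finset.card_le_card (Finset.filter_subset_filter _ (Finset.filter_subset _ _)))
    have hsum2 : ∑ v ∈ t.toFinset, inDeg F v = ∑ v ∈ t.toFinset.erase r', inDeg F v := by
      rw [← Finset.sum_erase_add _ _ (List.mem_toFinset.2 hr't)]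
      have h0 : inDeg F r' = 0 := hr'
      omega
    have hsum3 : ∑ v ∈ t.toFinset.erase r', inDeg F v ≤ (t.toFinset.erase r').card := by
      refine le_trans (Finset.sum_le_card_nsmul _ _ 1 (fun v _ => hF.1 v)) ?_
      simp
    have hecard : (t.toFinset.erase r').card = t.length - 1 := by
      rw [Finset.card_erase_of_mem (List.mem_toFinset.2 hr't), List.toFinset_card_of_nodup htnd]
    have htpos : 1 ≤ t.length := List.length_pos_iff.2 (List.ne_nil_of_mem hr't)
    have hunion : (K ∪ Z.toFinset).card = K.card + Z.toFinset.card :=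
      Finset.card_union_of_disjoint hdisj
    have hKR : R.card + K.card = F.card := hsplit
    omega

/-- An arborescence forest `F` of a digraph `G` is maximum iff there are no two
distinct roots `r ≠ r'` of `F` with a directed path from `r` to `r'` in `G`. -/
theorem stmt0 (G F : Finset (V × V)) (hF : IsArbForest F) (hFG : F ⊆ G) :
    IsMaxArbForest G F ↔
      ¬ ∃ r r' : V, r ≠ r' ∧ IsRoot F r ∧ IsRoot F r' ∧ Reach G r r' := by
  constructor
  · rintro hmax ⟨r, r', hne, hr, hr', hre⟩
    obtain ⟨F'', hsub, hforest, hcard⟩ := augment hF hFG hne hr hr' hre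
    have := hmax.2.2 F'' hsub hforest
    omega
  · intro hno
    refine ⟨hFG, hF, fun F' hF'G hF' => ?_⟩
    exact card_le_of_no_root_path hF hFG hF' hF'G
      (fun r r' h1 h2 h3 h4 => hno ⟨r, r', h1, h2, h3, h4⟩)
end

section
/- Let F be an arborescence forest of a digraph G and let P ⊆ G be a directed path between two distinct roots r and r' of F. Then UPDATE(F, P) := (F \ ⋃_{internal vertices v of P and v = r'} parent_F(v)) ∪ P is again an arborescence forest of G, where parent_F(v) denotes the unique in-arc of v in F (if it exists). -/
open Finset

variable {V : Type*} [Fintype V] [DecidableEq V]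

/-! ### Auxiliary lemmas -/

set_option linter.unusedSectionVars false in
private lemma zt_aux : ∀ (p : List V) (a b : V),
    (a, b) ∈ p.zip p.tail ↔ ∃ i, p[i]? = some a ∧ p[i+1]? = some b
  | [], a, b => by simp
  | [x], a, b => by simp
  | x :: y :: l, a, b => by
    have ih := zt_aux (y :: l) a b
    simp only [List.tail_cons] at ih ⊢
    rw [List.zip_cons_cons, List.mem_cons, ih]
    constructor
    · rintro (h | ⟨i, h1, h2⟩)
      · obtain ⟨rfl, rfl⟩ := Prod.mk.injEq .. ▸ h
        exact ⟨0, by simp, by simp⟩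
      · exact ⟨i + 1, by simpa using h1, by simpa using h2⟩
    · rintro ⟨i, h1, h2⟩
      cases i with
      | zero => simp at h1 h2; left; simp [h1, h2]
      | succ j => right; exact ⟨j, by simpa using h1, by simpa using h2⟩

set_option linter.unusedSectionVars false in
private lemma nodup_idx_aux {p : List V} (hp : p.Nodup) {i j : ℕ} {v : V}
    (h1 : p[i]? = some v) (h2 : p[j]? = some v) : i = j := by
  rw [List.getElem?_eq_some_iff] at h1 h2
  obtain ⟨hi, rfl⟩ := h1
  obtain ⟨hj, he⟩ := h2
  exact hp.getElem_inj_iff.mp he.symm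

set_option linter.unusedSectionVars false in
private lemma mem_of_getElem?_aux {p : List V} {i : ℕ} {v : V} (h : p[i]? = some v) : v ∈ p := by
  rw [List.getElem?_eq_some_iff] at h
  obtain ⟨hn, rfl⟩ := h
  exact List.getElem_mem hn

set_option linter.unusedSectionVars false in
private lemma chain'_zip_aux {R : V → V → Prop} :
    ∀ (l : List V), l.Chain' R → ∀ a ∈ l.zip l.tail, R a.1 a.2
  | [], _, a, ha => by simp at ha
  | [x], _, a, ha => by simp at ha
  | x :: y :: l, h, a, ha => by
    replace h := List.isChain_cons_cons.mp h
    simp only [List.tail_cons, List.zip_cons_cons, List.mem_cons] at ha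
    rcases ha with rfl | ha
    · exact h.1
    · exact chain'_zip_aux (y :: l) h.2 a ha

private lemma mem_dropLast_aux {α : Type*} : ∀ (l : List α) (v u : α), v ∈ l →
    l.getLast? = some u → v ≠ u → v ∈ l.dropLast
  | [], v, u, hv, _, _ => by simp at hv
  | [a], v, u, hv, hl, hne => by
    simp only [List.mem_singleton] at hv
    simp only [List.getLast?_singleton, Option.some.injEq] at hl
    exact absurd (hv.trans hl) hne
  | a :: b :: l, v, u, hv, hl, hne => by
    rw [List.getLast?_cons_cons] at hl
    rw [List.dropLast_cons₂]
    rcases List.mem_cons.mp hv with rfl | hv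
    · exact List.mem_cons_self
    · exact List.mem_cons_of_mem _ (mem_dropLast_aux (b :: l) v u hv hl hne)

set_option linter.unusedSectionVars false in
private lemma avoid_aux {F' : Finset (V × V)} {b v : V} :
    ∀ {x : V}, Relation.ReflTransGen (fun x y => (x, y) ∈ F') x b →
      Relation.ReflTransGen (fun x y => (x, y) ∈ F' ∧ (x, y) ≠ (b, v)) x b := by
  intro x h
  induction h using Relation.ReflTransGen.head_induction_on with
  | refl => exact Relation.ReflTransGen.refl
  | head h' _ ih =>
    rename_i a c _
    by_cases hac : (a, c) = (b, v)
    · obtain ⟨rfl, rfl⟩ := Prod.mk.injEq .. ▸ hac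
      exact Relation.ReflTransGen.refl
    · exact Relation.ReflTransGen.head ⟨h', hac⟩ ih

set_option linter.unusedSectionVars false in
/-- An undirected-acyclic arc set (no loops, no antiparallel pairs) has no directed cycles. -/
private lemma noDirCycle_aux {F' : Finset (V × V)}
    (h1 : ∀ a ∈ F', a.1 ≠ a.2 ∧ (a.2, a.1) ∉ F')
    (h2 : (SimpleGraph.fromRel fun u v => (u, v) ∈ F').IsAcyclic) :
    ∀ v, ¬ Relation.TransGen (fun x y => (x, y) ∈ F') v v := by
  intro v hv
  rw [Relation.TransGen.tail'_iff] at hv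
  obtain ⟨b, hvb, hbv⟩ := hv
  have hadj : (SimpleGraph.fromRel fun u v : V => (u, v) ∈ F').Adj b v := by
    rw [SimpleGraph.fromRel_adj]
    exact ⟨(h1 _ hbv).1, Or.inl hbv⟩
  have hreach : ((SimpleGraph.fromRel fun u v : V => (u, v) ∈ F') \
      SimpleGraph.fromEdgeSet {s(b, v)}).Reachable v b := by
    rw [SimpleGraph.reachable_iff_reflTransGen]
    refine Relation.ReflTransGen.mono ?_ _ _ (avoid_aux (v := v) hvb)
    rintro x y ⟨hxy, hne⟩
    rw [SimpleGraph.sdiff_adj]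
    constructor
    · rw [SimpleGraph.fromRel_adj]; exact ⟨(h1 _ hxy).1, Or.inl hxy⟩
    · rw [SimpleGraph.fromEdgeSet_adj]
      rintro ⟨he, -⟩
      simp only [Set.mem_singleton_iff, Sym2.eq, Sym2.rel_iff', Prod.mk.injEq,
        Prod.swap_prod_mk] at he
      rcases he with ⟨rfl, rfl⟩ | ⟨rfl, rfl⟩
      · exact hne rfl
      · exact (h1 _ hxy).2 hbv
  obtain ⟨u, p, hp, -⟩ := SimpleGraph.adj_and_reachable_delete_edges_iff_exists_cycle.mp
    ⟨hadj, hreach.symm⟩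
  exact h2 p hp

/-- Arc sets with no loops/antiparallel pairs, in-degrees at most one and no
directed cycles are undirected-acyclic. -/
private lemma acyclic_of_indeg_aux {F' : Finset (V × V)}
    (h1 : ∀ a ∈ F', a.1 ≠ a.2 ∧ (a.2, a.1) ∉ F')
    (h2 : ∀ v, inDeg F' v ≤ 1)
    (h3 : ∀ v, ¬ Relation.TransGen (fun x y => (x, y) ∈ F') v v) :
    (SimpleGraph.fromRel fun u v => (u, v) ∈ F').IsAcyclic := by
  intro u c hc
  have hlen := hc.three_le_length
  have ht := c.support_eq_cons
  have htlen : c.support.tail.length ≥ 3 := by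
    rw [List.length_tail, c.length_support]; omega
  have htne : c.support.tail ≠ [] := by
    intro h; rw [h] at htlen; simp at htlen
  have hlastsupp : c.support.getLast? = some u := by
    rw [List.getLast?_eq_getLast c.support_ne_nil, c.getLast_support]
  have hlast : c.support.tail.getLast? = some u := by
    obtain ⟨y, t', hyt⟩ := List.exists_cons_of_ne_nil htne
    rw [ht, hyt, List.getLast?_cons_cons] at hlastsupp
    rw [hyt]; exact hlastsupp
  have hedges : c.edges = c.darts.map SimpleGraph.Dart.edge := rfl
  have hout : ∀ v ∈ c.support, ∃ w ∈ c.support, (v, w) ∈ F' := by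
    intro v hv
    have hvtail : v ∈ c.support.tail := by
      rcases List.mem_cons.mp (ht ▸ hv) with rfl | hv'
      · exact List.mem_of_getLast? hlast
      · exact hv'
    have hvdrop : v ∈ c.support.dropLast := by
      by_cases hvu : v = u
      · subst hvu
        obtain ⟨y, t', hyt⟩ := List.exists_cons_of_ne_nil htne
        rw [ht, hyt, List.dropLast_cons₂]
        exact List.mem_cons_self
      · have hvd : v ∈ c.support.tail.dropLast :=
          mem_dropLast_aux _ v u hvtail hlast hvu
        rw [ht]
        obtain ⟨y, t', hyt⟩ := List.exists_cons_of_ne_nil htne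
        rw [hyt, List.dropLast_cons₂]
        rw [hyt] at hvd
        exact List.mem_cons_of_mem _ hvd
    rw [← c.map_snd_darts] at hvtail
    rw [← c.map_fst_darts] at hvdrop
    obtain ⟨d, hd, hdfst⟩ := List.mem_map.mp hvdrop
    obtain ⟨d', hd', hdsnd⟩ := List.mem_map.mp hvtail
    have hdadj := d.adj
    have hd'adj := d'.adj
    rw [hdfst] at hdadj
    rw [hdsnd] at hd'adj
    rw [SimpleGraph.fromRel_adj] at hdadj hd'adj
    rcases hdadj.2 with hout1 | hin1
    · exact ⟨d.toProd.2, c.dart_snd_mem_support_of_mem_darts hd, hout1⟩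
    rcases hd'adj.2 with hin2 | hout2
    swap
    · exact ⟨d'.toProd.1, c.dart_fst_mem_support_of_mem_darts hd', hout2⟩
    have hne : d.toProd.2 ≠ d'.toProd.1 := by
      intro heq
      have hedge : d.edge = d'.edge := by
        have e1 : d.toProd = (v, d'.toProd.1) := Prod.ext hdfst heq
        have e2 : d'.toProd = (d'.toProd.1, v) := Prod.ext rfl hdsnd
        rw [SimpleGraph.Dart.edge, SimpleGraph.Dart.edge, e1, e2, Sym2.eq_swap]
      have hdd : d = d' := by
        have hnodup := hc.edges_nodup
        rw [hedges] at hnodup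
        exact List.inj_on_of_nodup_map hnodup hd hd' hedge
      rw [hdd, hdsnd] at heq
      rw [← heq] at hd'adj
      exact hd'adj.1 rfl
    have hcard : 1 < inDeg F' v := by
      rw [inDeg, Finset.one_lt_card]
      refine ⟨(d.toProd.2, v), ?_, (d'.toProd.1, v), ?_, ?_⟩
      · exact Finset.mem_filter.mpr ⟨hin1, rfl⟩
      · exact Finset.mem_filter.mpr ⟨hin2, rfl⟩
      · simp [Prod.ext_iff, hne]
    exact absurd (h2 v) (by omega)
  haveI : IsTrans V (fun a b => Relation.TransGen (fun x y => (x, y) ∈ F') b a) :=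
    ⟨fun a b cc hab hbc => hbc.trans hab⟩
  haveI : IsIrrefl V (fun a b => Relation.TransGen (fun x y => (x, y) ∈ F') b a) :=
    ⟨fun a h => h3 a h⟩
  have wf := Finite.wellFounded_of_trans_of_irrefl
    (fun a b => Relation.TransGen (fun x y : V => (x, y) ∈ F') b a)
  obtain ⟨m, hm, hmin⟩ := wf.has_min {x | x ∈ c.support} ⟨u, c.start_mem_support⟩
  obtain ⟨w, hw, harc⟩ := hout m hm
  exact hmin w hw (Relation.TransGen.single harc)

/-- `UPDATE(F, P)` along a directed path `P ⊆ G` between two distinct roots of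
an arborescence forest `F` of `G` is again an arborescence forest of `G`. -/
theorem stmt1 (G F : Finset (V × V)) (p : List V) (r r' : V)
    (hF : IsArbForest F) (hFG : F ⊆ G)
    (hp : IsDiPath G p) (hhead : p.head? = some r) (hlast : p.getLast? = some r')
    (hrr : r ≠ r') (hr : IsRoot F r) (hr' : IsRoot F r') :
    IsArbForest (update F p) ∧ update F p ⊆ G := by
  obtain ⟨hchain, hnodup⟩ := hp
  obtain ⟨t, rfl⟩ : ∃ t, p = r :: t := by
    cases p with
    | nil => simp at hhead
    | cons a t =>
      simp only [List.head?_cons, Option.some.injEq] at hhead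
      exact ⟨t, by rw [hhead]⟩
  have hrt : r ∉ t := (List.nodup_cons.mp hnodup).1
  -- membership characterizations
  have memArcs : ∀ a b : V, (a, b) ∈ pathArcs (r :: t) ↔
      ∃ i, (r :: t)[i]? = some a ∧ (r :: t)[i+1]? = some b := by
    intro a b
    rw [pathArcs, List.mem_toFinset, zt_aux]
  have memUpd : ∀ x : V × V, x ∈ update F (r :: t) ↔
      (x ∈ F ∧ x.2 ∉ t) ∨ x ∈ pathArcs (r :: t) := by
    intro x
    rw [update, Finset.mem_union, Finset.mem_filter, List.tail_cons]
  have arcsnd : ∀ a b : V, (a, b) ∈ pathArcs (r :: t) → b ∈ t := by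
    intro a b hab
    rw [pathArcs, List.mem_toFinset] at hab
    have := (List.of_mem_zip hab).2
    rwa [List.tail_cons] at this
  have arcfst : ∀ a b : V, (a, b) ∈ pathArcs (r :: t) → a ∈ r :: t := by
    intro a b hab
    rw [pathArcs, List.mem_toFinset] at hab
    exact (List.of_mem_zip hab).1
  have rootNoIn : ∀ x : V, (x, r) ∉ F := by
    intro x hx
    rw [IsRoot, inDeg, Finset.card_eq_zero] at hr
    have : (x, r) ∈ F.filter fun a => a.2 = r := Finset.mem_filter.mpr ⟨hx, rfl⟩
    rw [hr] at this
    exact absurd this (Finset.notMem_empty _)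
  -- ⊆ G
  have subG : update F (r :: t) ⊆ G := by
    intro x hx
    rcases memUpd x |>.mp hx with ⟨hxF, -⟩ | hxP
    · exact hFG hxF
    · rw [pathArcs, List.mem_toFinset] at hxP
      exact chain'_zip_aux (r :: t) hchain x hxP
  -- in-degree bound
  have indeg : ∀ v, inDeg (update F (r :: t)) v ≤ 1 := by
    intro v
    rw [inDeg, update, Finset.filter_union]
    by_cases hvt : v ∈ t
    · have h0 : ((F.filter fun a => a.2 ∉ (r :: t).tail).filter fun a => a.2 = v) = ∅ := by
        rw [Finset.eq_empty_iff_forall_notMem]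
        intro x hx
        rw [Finset.mem_filter, Finset.mem_filter, List.tail_cons] at hx
        exact hx.1.2 (hx.2 ▸ hvt)
      rw [h0, Finset.empty_union]
      rw [Finset.card_le_one]
      intro x hx y hy
      rw [Finset.mem_filter] at hx hy
      obtain ⟨i, hi1, hi2⟩ := (memArcs x.1 x.2).mp hx.1
      obtain ⟨j, hj1, hj2⟩ := (memArcs y.1 y.2).mp hy.1
      rw [hx.2] at hi2
      rw [hy.2] at hj2
      have hij : i + 1 = j + 1 := nodup_idx_aux hnodup hi2 hj2
      have : i = j := by omega
      subst this
      rw [hi1] at hj1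
      exact Prod.ext (Option.some.injEq .. ▸ hj1) (hx.2.trans hy.2.symm)
    · have h0 : ((pathArcs (r :: t)).filter fun a => a.2 = v) = ∅ := by
        rw [Finset.eq_empty_iff_forall_notMem]
        intro x hx
        rw [Finset.mem_filter] at hx
        exact hvt (hx.2 ▸ arcsnd x.1 x.2 hx.1)
      rw [h0, Finset.union_empty]
      calc ((F.filter fun a => a.2 ∉ (r :: t).tail).filter fun a => a.2 = v).card
          ≤ (F.filter fun a => a.2 = v).card :=
            Finset.card_le_card (Finset.filter_subset_filter _ (Finset.filter_subset _ _))
        _ ≤ 1 := hF.1 v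
  -- no loops / antiparallel pairs
  have hnl : ∀ x ∈ update F (r :: t), x.1 ≠ x.2 ∧ (x.2, x.1) ∉ update F (r :: t) := by
    intro x hx
    constructor
    · rcases (memUpd x).mp hx with ⟨hxF, -⟩ | hxP
      · exact (hF.2.1 x hxF).1
      · obtain ⟨i, hi1, hi2⟩ := (memArcs x.1 x.2).mp hxP
        intro he
        rw [he] at hi1
        have : i = i + 1 := nodup_idx_aux hnodup hi1 hi2
        omega
    · intro hrev
      rcases (memUpd x).mp hx with ⟨hxF, hxt⟩ | hxP <;>
        rcases (memUpd _).mp hrev with ⟨hrF, hrt'⟩ | hrP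
      · exact (hF.2.1 x hxF).2 hrF
      · -- x ∈ F with x.2 ∉ t, reversed arc on path: x.2 is a path fst, so x.2 = r
        have h2p : x.2 ∈ r :: t := arcfst x.2 x.1 hrP
        have h2r : x.2 = r := by
          rcases List.mem_cons.mp h2p with h | h
          · exact h
          · exact absurd h hxt
        have : (x.1, r) ∈ F := by rw [← h2r]; exact hxF
        exact rootNoIn x.1 this
      · -- x on path, reversed arc in F with x.1 ∉ t : x.1 = r
        have h1p : x.1 ∈ r :: t := arcfst x.1 x.2 hxP
        have h1r : x.1 = r := by
          rcases List.mem_cons.mp h1p with h | h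
          · exact h
          · exact absurd h hrt'
        have : (x.2, r) ∈ F := by rw [← h1r]; exact hrF
        exact rootNoIn x.2 this
      · obtain ⟨i, hi1, hi2⟩ := (memArcs x.1 x.2).mp hxP
        obtain ⟨j, hj1, hj2⟩ := (memArcs x.2 x.1).mp hrP
        have e1 : i + 1 = j := nodup_idx_aux hnodup hi2 hj1
        have e2 : j + 1 = i := nodup_idx_aux hnodup hj2 hi1
        omega
  -- no directed cycles in the update
  have noInR : ∀ x, (x, r) ∉ update F (r :: t) := by
    intro x hx
    rcases (memUpd _).mp hx with ⟨hxF, -⟩ | hxP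
    · exact rootNoIn x hxF
    · exact hrt (arcsnd x r hxP)
  have step : ∀ v, Relation.TransGen (fun x y => (x, y) ∈ update F (r :: t)) v v →
      ∃ c, (c, v) ∈ update F (r :: t) ∧
        Relation.TransGen (fun x y => (x, y) ∈ update F (r :: t)) c c := by
    intro v hv
    cases hv with
    | single h => exact ⟨v, h, Relation.TransGen.single h⟩
    | tail hvb hbv => exact ⟨_, hbv, Relation.TransGen.head hbv hvb⟩
  have posNo : ∀ (i : ℕ) (v : V), (r :: t)[i]? = some v →
      ¬ Relation.TransGen (fun x y => (x, y) ∈ update F (r :: t)) v v := by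
    intro i
    induction i with
    | zero =>
      intro v hv htg
      simp only [List.getElem?_cons_zero, Option.some.injEq] at hv
      subst hv
      obtain ⟨c, hc, -⟩ := step _ htg
      exact noInR c hc
    | succ i ih =>
      intro v hv htg
      have hvt : v ∈ t := mem_of_getElem?_aux (List.getElem?_cons_succ ▸ hv)
      obtain ⟨c, hc, htg'⟩ := step _ htg
      have hcP : (c, v) ∈ pathArcs (r :: t) := by
        rcases (memUpd _).mp hc with ⟨-, h⟩ | h
        · exact absurd hvt h
        · exact h
      obtain ⟨j, hj1, hj2⟩ := (memArcs c v).mp hcP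
      have : j + 1 = i + 1 := nodup_idx_aux hnodup hj2 hv
      have : j = i := by omega
      subst this
      exact ih c hj1 htg'
  have dircyc : ∀ v, ¬ Relation.TransGen (fun x y => (x, y) ∈ update F (r :: t)) v v := by
    intro v hv
    by_cases hvp : v ∈ r :: t
    · obtain ⟨i, hilt, hie⟩ := List.mem_iff_getElem.mp hvp
      exact posNo i v (List.getElem?_eq_some_iff.mpr ⟨hilt, hie⟩) hv
    · rw [Relation.TransGen.tail'_iff] at hv
      obtain ⟨b, hvb, hbv⟩ := hv
      have claim : ∀ x, Relation.ReflTransGen (fun x y => (x, y) ∈ update F (r :: t)) x b →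
          Relation.ReflTransGen (fun a b' => (a, b') ∈ F ∧ b' ∉ t) x b ∨
          ∃ u ∈ t, Relation.ReflTransGen (fun x y => (x, y) ∈ update F (r :: t)) x u ∧
            Relation.ReflTransGen (fun x y => (x, y) ∈ update F (r :: t)) u b := by
        intro x hx
        induction hx using Relation.ReflTransGen.head_induction_on with
        | refl => exact Or.inl Relation.ReflTransGen.refl
        | head h' hrest ih =>
          rename_i a cc
          rcases (memUpd _).mp h' with ⟨haF, hat⟩ | hP
          · rcases ih with h | ⟨w, hw, h1, h2⟩
            · exact Or.inl (Relation.ReflTransGen.head ⟨haF, hat⟩ h)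
            · exact Or.inr ⟨w, hw, Relation.ReflTransGen.head h' h1, h2⟩
          · exact Or.inr ⟨cc, arcsnd a cc hP, Relation.ReflTransGen.single h', hrest⟩
      rcases claim v hvb with hFchain | ⟨w, hw, h1, h2⟩
      · have hbvF : (b, v) ∈ F ∧ v ∉ t := by
          rcases (memUpd _).mp hbv with h | h
          · exact h
          · exact absurd (List.mem_cons_of_mem _ (arcsnd b v h)) hvp
        have : Relation.TransGen (fun x y => (x, y) ∈ F) v v :=
          Relation.TransGen.tail'
            (Relation.ReflTransGen.mono (fun x y h => h.1) _ _ hFchain) hbvF.1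
        exact noDirCycle_aux hF.2.1 hF.2.2 v this
      · have htg : Relation.TransGen (fun x y => (x, y) ∈ update F (r :: t)) w w :=
          Relation.TransGen.trans_left (Relation.TransGen.tail' h2 hbv) h1
        obtain ⟨i, hilt, hie⟩ := List.mem_iff_getElem.mp hw
        have : (r :: t)[i+1]? = some w := by
          rw [List.getElem?_cons_succ]
          exact List.getElem?_eq_some_iff.mpr ⟨hilt, hie⟩
        exact posNo (i + 1) w this htg
  exact ⟨⟨indeg, hnl, acyclic_of_indeg_aux hnl indeg dircyc⟩, subG⟩
end

section
/- If F is a maximum arborescence forest of digraph G with root r, and vertex v has a directed path to r in G, then v belongs to the arborescence (weakly connected component) of r in F. -/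
open Finset

variable {V : Type*} [Fintype V] [DecidableEq V]

namespace ArbHelpers

lemma wreach_symm {F : Finset (V × V)} {u v : V} (h : WReach F u v) : WReach F v u :=
  by
    unfold WReach at h ⊢
    induction h with
    | refl => exact Relation.ReflTransGen.refl
    | tail _ hs ih => exact Relation.ReflTransGen.head hs.symm ih

lemma wreach_trans {F : Finset (V × V)} {u v z : V} (h1 : WReach F u v) (h2 : WReach F v z) :
    WReach F u z :=
  Relation.ReflTransGen.trans h1 h2

lemma wreach_tail {F : Finset (V × V)} {u b c : V} (h : WReach F u b)
    (hs : (b, c) ∈ F ∨ (c, b) ∈ F) : WReach F u c :=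
  Relation.ReflTransGen.tail h hs

lemma wreach_mono {F F' : Finset (V × V)} (h : F ⊆ F') {u v : V} (hw : WReach F u v) :
    WReach F' u v :=
  Relation.ReflTransGen.mono (r := fun x y => (x, y) ∈ F ∨ (y, x) ∈ F)
    (p := fun x y => (x, y) ∈ F' ∨ (y, x) ∈ F')
    (fun _ _ hxy => hxy.imp (fun hh => h hh) (fun hh => h hh)) _ _ hw

lemma reach_wreach {F : Finset (V × V)} {u v : V} (h : Reach F u v) : WReach F u v :=
  Relation.ReflTransGen.mono (r := fun x y => (x, y) ∈ F)
    (p := fun x y => (x, y) ∈ F ∨ (y, x) ∈ F) (fun _ _ => Or.inl) _ _ h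

/-- Splitting a weak walk in `insert (e1, e2) S` according to whether it uses the new arc. -/
lemma wreach_insert_split {S : Finset (V × V)} {e1 e2 : V} {p q : V}
    (h : WReach (insert (e1, e2) S) p q) :
    WReach S p q ∨ (WReach S p e1 ∧ WReach S e2 q) ∨ (WReach S p e2 ∧ WReach S e1 q) := by
  unfold WReach at h
  induction h with
  | refl => exact Or.inl Relation.ReflTransGen.refl
  | @tail b c hpb hstep ih =>
    have hcase : ((b, c) ∈ S ∨ (c, b) ∈ S) ∨ ((b, c) = (e1, e2) ∨ (c, b) = (e1, e2)) := by
      rcases hstep with h1 | h1 <;> rcases Finset.mem_insert.mp h1 with h2 | h2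
      · exact Or.inr (Or.inl h2)
      · exact Or.inl (Or.inl h2)
      · exact Or.inr (Or.inr h2)
      · exact Or.inl (Or.inr h2)
    rcases hcase with hS | hE
    · rcases ih with h | ⟨h1, h2⟩ | ⟨h1, h2⟩
      · exact Or.inl (wreach_tail h hS)
      · exact Or.inr (Or.inl ⟨h1, wreach_tail h2 hS⟩)
      · exact Or.inr (Or.inr ⟨h1, wreach_tail h2 hS⟩)
    · rcases hE with h2 | h2
      · injection h2 with hb hc
        subst hb
        subst hc
        rcases ih with h | ⟨h1, _⟩ | ⟨h1, _⟩
        · exact Or.inr (Or.inl ⟨h, Relation.ReflTransGen.refl⟩)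
        · exact Or.inr (Or.inl ⟨h1, Relation.ReflTransGen.refl⟩)
        · exact Or.inl h1
      · injection h2 with hb hc
        subst hb
        subst hc
        rcases ih with h | ⟨h1, _⟩ | ⟨h1, _⟩
        · exact Or.inr (Or.inr ⟨h, Relation.ReflTransGen.refl⟩)
        · exact Or.inl h1
        · exact Or.inr (Or.inr ⟨h1, Relation.ReflTransGen.refl⟩)

/-- Splitting a directed walk according to whether it uses the arc `a`. -/
lemma reach_erase_split {F : Finset (V × V)} (a : V × V) {r z : V} (h : Reach F r z) :
    Reach (F.erase a) r z ∨ Reach (F.erase a) a.2 z := by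
  unfold Reach at h
  induction h with
  | refl => exact Or.inl Relation.ReflTransGen.refl
  | @tail b c hrb hstep ih =>
    by_cases hba : (b, c) = a
    · right
      have : a.2 = c := by rw [← hba]
      rw [this]
      exact Relation.ReflTransGen.refl
    · have hmem : (b, c) ∈ F.erase a := Finset.mem_erase.mpr ⟨hba, hstep⟩
      rcases ih with h | h
      · exact Or.inl (h.tail hmem)
      · exact Or.inr (h.tail hmem)

/-- In a forest where every in-degree is at most one, weak reachability from a
root coincides with directed reachability. -/
lemma wreach_root_reach {F : Finset (V × V)} {r z : V}
    (hdeg : ∀ x, inDeg F x ≤ 1) (hr : IsRoot F r) (h : WReach F r z) : Reach F r z := by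
  unfold WReach at h
  induction h with
  | refl => exact Relation.ReflTransGen.refl
  | @tail b c hrb hstep ih =>
    rcases hstep with h1 | h1
    · exact ih.tail h1
    · rcases Relation.ReflTransGen.cases_tail ih with hb | ⟨d, hrd, hdb⟩
      · exfalso
        have hmem : (c, b) ∈ F.filter (fun a => a.2 = r) := Finset.mem_filter.mpr ⟨h1, hb⟩
        have h0 : (F.filter fun a => a.2 = r).card = 0 := hr
        rw [Finset.card_eq_zero] at h0
        rw [h0] at hmem
        exact absurd hmem (Finset.notMem_empty _)
      · have hd1 : (F.filter fun a => a.2 = b).card ≤ 1 := hdeg b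
        have h2 : (d, b) ∈ F.filter (fun a => a.2 = b) := Finset.mem_filter.mpr ⟨hdb, rfl⟩
        have h3 : (c, b) ∈ F.filter (fun a => a.2 = b) := Finset.mem_filter.mpr ⟨h1, rfl⟩
        have hdc : (d, b) = (c, b) := Finset.card_le_one.mp hd1 _ h2 _ h3
        have : d = c := (Prod.mk.injEq .. ▸ hdc : d = c ∧ b = b).1
        exact this ▸ hrd

/-- In an acyclic forest, removing an arc disconnects its endpoints
(every edge of a forest is a bridge). -/
lemma not_wreach_erase {F : Finset (V × V)} (hA : UndirAcyclic F) {a : V × V} (ha : a ∈ F) :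
    ¬ WReach (F.erase a) a.1 a.2 := by
  intro h
  have hne := (hA.1 a ha).1
  have hrev := (hA.1 a ha).2
  have hadj : (SimpleGraph.fromRel fun u v => (u, v) ∈ F).Adj a.1 a.2 :=
    (SimpleGraph.fromRel_adj _ _ _).mpr ⟨hne, Or.inl ha⟩
  have hbridge := (SimpleGraph.isAcyclic_iff_forall_adj_isBridge.mp hA.2) hadj
  have hnr := SimpleGraph.isBridge_iff.mp hbridge
  apply hnr
  rw [SimpleGraph.reachable_iff_reflTransGen]
  refine Relation.ReflTransGen.mono ?_ _ _ h
  intro x y hxy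
  have hxyF : (x, y) ∈ F ∨ (y, x) ∈ F :=
    hxy.imp Finset.mem_of_mem_erase Finset.mem_of_mem_erase
  have hxyne : x ≠ y := by
    rcases hxyF with h1 | h1
    · exact (hA.1 _ h1).1
    · exact fun hh => (hA.1 _ h1).1 hh.symm
  rw [SimpleGraph.deleteEdges_adj]
  refine ⟨(SimpleGraph.fromRel_adj _ _ _).mpr ⟨hxyne, hxyF⟩, ?_⟩
  intro hs
  rw [Set.mem_singleton_iff, Sym2.eq_iff] at hs
  rcases hs with ⟨rfl, rfl⟩ | ⟨rfl, rfl⟩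
  · rcases hxy with h1 | h1
    · exact (Finset.mem_erase.mp h1).1 rfl
    · exact hrev (Finset.mem_of_mem_erase h1)
  · rcases hxy with h1 | h1
    · exact hrev (Finset.mem_of_mem_erase h1)
    · exact (Finset.mem_erase.mp h1).1 rfl

lemma undirAcyclic_mono {S T : Finset (V × V)} (hsub : S ⊆ T) (hT : UndirAcyclic T) :
    UndirAcyclic S := by
  constructor
  · intro a haS
    exact ⟨(hT.1 a (hsub haS)).1, fun hc => (hT.1 a (hsub haS)).2 (hsub hc)⟩
  · have hle : (SimpleGraph.fromRel fun u v => (u, v) ∈ S) ≤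
        SimpleGraph.fromRel fun u v => (u, v) ∈ T := by
      intro x y hxy
      rw [SimpleGraph.fromRel_adj] at hxy ⊢
      exact ⟨hxy.1, hxy.2.imp (fun h => hsub h) (fun h => hsub h)⟩
    intro u c hc
    exact hT.2 (c.mapLe hle) (SimpleGraph.Walk.IsCycle.mapLe hle hc)

/-- Adding an arc between two weakly disconnected vertices keeps the graph
undirectedly acyclic. -/
lemma undirAcyclic_insert {F : Finset (V × V)} {e1 e2 : V} (hA : UndirAcyclic F)
    (hne : e1 ≠ e2) (hnw : ¬ WReach F e1 e2) : UndirAcyclic (insert (e1, e2) F) := by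
  have heF : (e1, e2) ∉ F := fun h => hnw (Relation.ReflTransGen.single (Or.inl h))
  have heF' : (e2, e1) ∉ F := fun h => hnw (Relation.ReflTransGen.single (Or.inr h))
  constructor
  · intro a haI
    rcases Finset.mem_insert.mp haI with rfl | haF
    · refine ⟨hne, ?_⟩
      intro hc
      rcases Finset.mem_insert.mp hc with h1 | h1
      · exact hne (congrArg Prod.snd h1)
      · exact heF' h1
    · refine ⟨(hA.1 a haF).1, ?_⟩
      intro hc
      rcases Finset.mem_insert.mp hc with h1 | h1
      · apply heF'
        have : a = (e2, e1) := by
          have h2 : a.2 = e1 := (Prod.mk.injEq .. ▸ h1 : a.2 = e1 ∧ a.1 = e2).1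
          have h3 : a.1 = e2 := (Prod.mk.injEq .. ▸ h1 : a.2 = e1 ∧ a.1 = e2).2
          rw [← h2, ← h3]
        exact this ▸ haF
      · exact (hA.1 a haF).2 h1
  · rw [SimpleGraph.isAcyclic_iff_forall_adj_isBridge]
    intro p q hadj
    rw [SimpleGraph.isBridge_iff]
    intro hreach
    rw [SimpleGraph.reachable_iff_reflTransGen] at hreach
    obtain ⟨hpq_ne, hpq_arc⟩ := (SimpleGraph.fromRel_adj _ _ _).mp hadj
    have hw2 : WReach ((insert (e1, e2) F).filter fun b => ¬ s(b.1, b.2) = s(p, q)) p q := by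
      refine Relation.ReflTransGen.mono ?_ _ _ hreach
      intro x y hxy
      rw [SimpleGraph.deleteEdges_adj, SimpleGraph.fromRel_adj] at hxy
      obtain ⟨⟨hxyne, harc⟩, hnotdel⟩ := hxy
      have hedge : ¬ s(x, y) = s(p, q) := by
        intro hs
        exact hnotdel (by rw [hs]; exact Set.mem_singleton _)
      rcases harc with h1 | h1
      · exact Or.inl (Finset.mem_filter.mpr ⟨h1, hedge⟩)
      · exact Or.inr (Finset.mem_filter.mpr ⟨h1, fun hs => hedge (Sym2.eq_swap.trans hs)⟩)
    by_cases hcase : s(p, q) = s(e1, e2)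
    · have hsub : ((insert (e1, e2) F).filter fun b => ¬ s(b.1, b.2) = s(p, q)) ⊆ F := by
        intro b hb
        obtain ⟨hbI, hbe⟩ := Finset.mem_filter.mp hb
        rcases Finset.mem_insert.mp hbI with rfl | h
        · exact absurd hcase.symm hbe
        · exact h
      have hpqF : WReach F p q := wreach_mono hsub hw2
      rw [Sym2.eq_iff] at hcase
      rcases hcase with ⟨rfl, rfl⟩ | ⟨rfl, rfl⟩
      · exact hnw hpqF
      · exact hnw (wreach_symm hpqF)
    · have harcF : (p, q) ∈ F ∨ (q, p) ∈ F := by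
        rcases hpq_arc with h1 | h1
        · rcases Finset.mem_insert.mp h1 with h2 | h2
          · exact absurd (by obtain ⟨rfl, rfl⟩ := Prod.mk.inj h2; rfl) hcase
          · exact Or.inl h2
        · rcases Finset.mem_insert.mp h1 with h2 | h2
          · exact absurd (by obtain ⟨rfl, rfl⟩ := Prod.mk.inj h2; exact Sym2.eq_swap) hcase
          · exact Or.inr h2
      have hsub23 : ((insert (e1, e2) F).filter fun b => ¬ s(b.1, b.2) = s(p, q)) ⊆
          insert (e1, e2) (F.filter fun b => ¬ s(b.1, b.2) = s(p, q)) := by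
        intro b hb
        obtain ⟨hbI, hbe⟩ := Finset.mem_filter.mp hb
        rcases Finset.mem_insert.mp hbI with rfl | h
        · exact Finset.mem_insert_self _ _
        · exact Finset.mem_insert_of_mem (Finset.mem_filter.mpr ⟨h, hbe⟩)
      have hF3F : (F.filter fun b => ¬ s(b.1, b.2) = s(p, q)) ⊆ F := Finset.filter_subset _ _
      have hstep : WReach F p q := Relation.ReflTransGen.single harcF
      rcases wreach_insert_split (wreach_mono hsub23 hw2) with h | ⟨h1, h2⟩ | ⟨h1, h2⟩
      · rcases harcF with ha1 | ha1
        · refine not_wreach_erase hA ha1 ?_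
          refine wreach_mono ?_ h
          intro b hb
          obtain ⟨hbF, hbe⟩ := Finset.mem_filter.mp hb
          exact Finset.mem_erase.mpr ⟨fun hc => hbe (by rw [hc]), hbF⟩
        · refine not_wreach_erase hA ha1 ?_
          refine wreach_mono ?_ (wreach_symm h)
          intro b hb
          obtain ⟨hbF, hbe⟩ := Finset.mem_filter.mp hb
          refine Finset.mem_erase.mpr ⟨fun hc => hbe ?_, hbF⟩
          rw [hc]
          exact Sym2.eq_swap
      · exact hnw (wreach_trans (wreach_trans (wreach_symm (wreach_mono hF3F h1)) hstep)
          (wreach_symm (wreach_mono hF3F h2)))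
      · exact hnw (wreach_trans (wreach_trans (wreach_mono hF3F h2) (wreach_symm hstep))
          (wreach_mono hF3F h1))

lemma inDeg_insert_of_ne {F : Finset (V × V)} {e : V × V} {z : V} (h : ¬ e.2 = z) :
    inDeg (insert e F) z = inDeg F z := by
  unfold inDeg
  rw [Finset.filter_insert, if_neg h]

lemma inDeg_insert_self {F : Finset (V × V)} {e : V × V} (h : e ∉ F) :
    inDeg (insert e F) e.2 = inDeg F e.2 + 1 := by
  unfold inDeg
  rw [Finset.filter_insert, if_pos rfl,
    Finset.card_insert_of_notMem (fun hc => h (Finset.mem_filter.mp hc).1)]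

lemma inDeg_erase_le {F : Finset (V × V)} {a : V × V} {z : V} :
    inDeg (F.erase a) z ≤ inDeg F z :=
  Finset.card_le_card (Finset.filter_subset_filter _ (Finset.erase_subset _ _))

lemma inDeg_erase_self {F : Finset (V × V)} {a : V × V} (ha : a ∈ F) :
    inDeg (F.erase a) a.2 = inDeg F a.2 - 1 := by
  unfold inDeg
  have hmem : a ∈ F.filter (fun b => b.2 = a.2) := Finset.mem_filter.mpr ⟨ha, rfl⟩
  rw [Finset.filter_erase, Finset.card_erase_of_mem hmem]

/-- If `v` reaches `r` in `G` but is not weakly connected to `r` in `F`, there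
is a crossing arc of `G` entering the weak component of `r`. -/
lemma exists_cross {G F : Finset (V × V)} {r v : V} (hv : Reach G v r)
    (hnv : ¬ WReach F r v) :
    ∃ x w, ¬ WReach F r x ∧ WReach F r w ∧ (x, w) ∈ G := by
  unfold Reach at hv
  revert hnv
  induction hv using Relation.ReflTransGen.head_induction_on with
  | refl => exact fun h => absurd Relation.ReflTransGen.refl h
  | @head b c h1 h2 ih =>
    intro hnb
    by_cases hc : WReach F r c
    · exact ⟨b, c, hnb, hc, h1⟩
    · exact ih hc

open scoped Classical in
lemma stmt2_aux (G : Finset (V × V)) (r v : V) (hv : Reach G v r) :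
    ∀ (n : ℕ) (F : Finset (V × V)), IsMaxArbForest G F → IsRoot F r →
      (Finset.univ.filter fun z => WReach F r z).card ≤ n → WReach F r v := by
  intro n
  induction n with
  | zero =>
    intro F _ _ hcard
    exfalso
    have hrS : r ∈ Finset.univ.filter fun z => WReach F r z :=
      Finset.mem_filter.mpr ⟨Finset.mem_univ r, Relation.ReflTransGen.refl⟩
    have := Finset.card_pos.mpr ⟨r, hrS⟩
    omega
  | succ n ih =>
    intro F hF hr hcard
    by_cases hvin : WReach F r v
    · exact hvin
    obtain ⟨x, w, hx, hw, hxwG⟩ := exists_cross hv hvin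
    obtain ⟨hFG, ⟨hdeg, hacy⟩, hmax⟩ := hF
    have heF : (x, w) ∉ F := fun h => hx (wreach_tail hw (Or.inr h))
    have hnxw : ¬ WReach F x w := fun h => hx (wreach_trans hw (wreach_symm h))
    have hne_xw : x ≠ w := fun h => hx (h ▸ hw)
    rcases Nat.le_one_iff_eq_zero_or_eq_one.mp (hdeg w) with h0 | h1
    · -- `w` has in-degree 0: adding the arc `(x, w)` contradicts maximality.
      exfalso
      have hforest : IsArbForest (insert (x, w) F) := by
        constructor
        · intro z
          by_cases hz : z = w
          · have h1' : inDeg (insert (x, w) F) w = inDeg F w + 1 := inDeg_insert_self heF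
            rw [hz]
            omega
          · have h1' : inDeg (insert (x, w) F) z = inDeg F z :=
              inDeg_insert_of_ne (fun hc => hz hc.symm)
            rw [h1']
            exact hdeg z
        · exact undirAcyclic_insert hacy hne_xw hnxw
      have hsub : insert (x, w) F ⊆ G := Finset.insert_subset hxwG hFG
      have hle := hmax _ hsub hforest
      rw [Finset.card_insert_of_notMem heF] at hle
      omega
    · -- `w` has a parent arc `a`; swap it for `(x, w)` and recurse.
      obtain ⟨a, hafilter⟩ := Finset.card_eq_one.mp (h1 : (F.filter fun b => b.2 = w).card = 1)
      have hamem : a ∈ F.filter fun b => b.2 = w := hafilter ▸ Finset.mem_singleton_self a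
      obtain ⟨haF, ha2⟩ := Finset.mem_filter.mp hamem
      have hau : WReach F r a.1 := wreach_tail hw (Or.inr (by rw [← ha2]; exact haF))
      have hrw : r ≠ w := by
        intro hc
        have h0' : inDeg F r = 0 := hr
        rw [hc] at h0'
        omega
      have hesub : F.erase a ⊆ F := Finset.erase_subset _ _
      have heF2 : (x, w) ∉ F.erase a := fun h => heF (hesub h)
      have hforest : IsArbForest (insert (x, w) (F.erase a)) := by
        constructor
        · intro z
          by_cases hz : z = w
          · have h1' : inDeg (insert (x, w) (F.erase a)) w = inDeg (F.erase a) w + 1 :=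
              inDeg_insert_self heF2
            have h2' : inDeg (F.erase a) a.2 = inDeg F a.2 - 1 := inDeg_erase_self haF
            rw [ha2] at h2'
            rw [hz]
            omega
          · have h1' : inDeg (insert (x, w) (F.erase a)) z = inDeg (F.erase a) z :=
              inDeg_insert_of_ne (fun hc => hz hc.symm)
            rw [h1']
            exact le_trans inDeg_erase_le (hdeg z)
        · exact undirAcyclic_insert (undirAcyclic_mono hesub hacy) hne_xw
            (fun h => hnxw (wreach_mono hesub h))
      have hsubG : insert (x, w) (F.erase a) ⊆ G :=
        Finset.insert_subset hxwG (fun b hb => hFG (hesub hb))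
      have hcard' : (insert (x, w) (F.erase a)).card = F.card := by
        rw [Finset.card_insert_of_notMem heF2, Finset.card_erase_of_mem haF]
        have : 0 < F.card := Finset.card_pos.mpr ⟨a, haF⟩
        omega
      have hmax' : IsMaxArbForest G (insert (x, w) (F.erase a)) :=
        ⟨hsubG, hforest, fun F'' h1'' h2'' => hcard' ▸ hmax F'' h1'' h2''⟩
      have hr' : IsRoot (insert (x, w) (F.erase a)) r := by
        have e1 : inDeg (insert (x, w) (F.erase a)) r = inDeg (F.erase a) r :=
          inDeg_insert_of_ne (fun hc => hrw hc.symm)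
        have e2 : inDeg (F.erase a) r ≤ inDeg F r := inDeg_erase_le
        have h0' : inDeg F r = 0 := hr
        unfold IsRoot
        omega
      have hDa : ¬ WReach (F.erase a) a.1 a.2 := not_wreach_erase hacy haF
      have hDu : WReach (F.erase a) r a.1 := by
        have hru : Reach F r a.1 := wreach_root_reach hdeg hr hau
        rcases reach_erase_split a hru with h | h
        · exact reach_wreach h
        · exact absurd (wreach_symm (reach_wreach h)) hDa
      have hnotw : ¬ WReach (F.erase a) r w := by
        intro h
        apply hDa
        refine wreach_trans (wreach_symm hDu) ?_
        rw [ha2]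
        exact h
      have hnotx : ¬ WReach (F.erase a) r x := fun h => hx (wreach_mono hesub h)
      have key_split : ∀ z, WReach (insert (x, w) (F.erase a)) r z → WReach (F.erase a) r z := by
        intro z hz
        rcases wreach_insert_split hz with h | ⟨h1', _⟩ | ⟨h1', _⟩
        · exact h
        · exact absurd h1' hnotx
        · exact absurd h1' hnotw
      have hwin : w ∈ Finset.univ.filter fun z => WReach F r z :=
        Finset.mem_filter.mpr ⟨Finset.mem_univ _, hw⟩
      have hsubS : (Finset.univ.filter fun z => WReach (insert (x, w) (F.erase a)) r z) ⊆
          (Finset.univ.filter fun z => WReach F r z).erase w := by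
        intro z hz
        obtain ⟨-, hz⟩ := Finset.mem_filter.mp hz
        refine Finset.mem_erase.mpr ⟨?_, Finset.mem_filter.mpr
          ⟨Finset.mem_univ _, wreach_mono hesub (key_split z hz)⟩⟩
        intro hc
        exact hnotw (hc ▸ key_split z hz)
      have hcardS : (Finset.univ.filter fun z =>
          WReach (insert (x, w) (F.erase a)) r z).card ≤ n := by
        have h1c := Finset.card_le_card hsubS
        have h2c := Finset.card_erase_of_mem hwin
        have h3c := Finset.card_pos.mpr ⟨w, hwin⟩
        omega
      have hvF' := ih (insert (x, w) (F.erase a)) hmax' hr' hcardS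
      exact wreach_mono hesub (key_split v hvF')

end ArbHelpers

/-- If `F` is a maximum arborescence forest of `G` with root `r` and `v` has a
directed path to `r` in `G`, then `v` lies in the arborescence (weakly
connected component) of `r` in `F`. -/
theorem stmt2 (G F : Finset (V × V)) (hF : IsMaxArbForest G F)
    (r v : V) (hr : IsRoot F r) (hv : Reach G v r) :
    WReach F r v := by
  classical
  exact ArbHelpers.stmt2_aux G r v hv
    (Finset.univ.filter fun z => WReach F r z).card F hF hr le_rfl
end

section
/- Let F be a maximum arborescence forest of digraph G = (V, A), and let a ∉ A be an arc. If G + a contains a directed path between two distinct roots of F, then G + a contains a feasible path for F: a directed path from some root r to some other root r' of the form P_A ⊕ P_V where all arcs of P_A lie in the arborescence of r in F and all vertices of P_V lie in the arborescence of r' in F. -/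
open Finset

variable {V : Type*} [Fintype V] [DecidableEq V]

section Helpers

variable {α : Type*}

/-- In a `Chain'` list, every consecutive pair satisfies the relation. -/
lemma chain'_pair {R : α → α → Prop} :
    ∀ {l : List α}, l.Chain' R → ∀ pr ∈ l.zip l.tail, R pr.1 pr.2
  | [], _, pr, h => by simp at h
  | [x], _, pr, h => by simp at h
  | x :: y :: t, hc, pr, h => by
    rw [List.Chain', List.isChain_cons_cons] at hc
    rcases List.mem_cons.1 h with rfl | h
    · exact hc.1
    · exact chain'_pair hc.2 pr h

/-- Converse: if every consecutive pair satisfies `R`, the list is a chain. -/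
lemma chain'_of_pair {R : α → α → Prop} :
    ∀ {l : List α}, (∀ pr ∈ l.zip l.tail, R pr.1 pr.2) → l.Chain' R
  | [], _ => by simp [List.Chain']
  | [x], _ => by simp [List.Chain']
  | x :: y :: t, h => by
    rw [List.Chain', List.isChain_cons_cons]
    refine ⟨h (x, y) (by simp), chain'_of_pair fun pr hpr => h pr ?_⟩
    simp only [List.tail_cons] at hpr ⊢
    rw [List.zip_cons_cons]
    exact List.mem_cons.2 (Or.inr hpr)

/-- The head of a chain reaches every member. -/
lemma chain'_head_reach {R : α → α → Prop} :
    ∀ {l : List α}, l.Chain' R → ∀ {x : α}, l.head? = some x →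
      ∀ {y : α}, y ∈ l → Relation.ReflTransGen R x y
  | [], _, x, hx, y, hy => by simp at hy
  | a :: t, hc, x, hx, y, hy => by
    simp only [List.head?_cons, Option.some.injEq] at hx
    subst hx
    rcases List.mem_cons.1 hy with rfl | hy
    · exact Relation.ReflTransGen.refl
    · match t, hy with
      | b :: t', hy =>
        rw [List.Chain', List.isChain_cons_cons] at hc
        exact Relation.ReflTransGen.head hc.1 (chain'_head_reach hc.2 rfl hy)

/-- Every member of a chain reaches the last element. -/
lemma chain'_reach_last {R : α → α → Prop} :
    ∀ {l : List α}, l.Chain' R → ∀ {x : α}, l.getLast? = some x →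
      ∀ {y : α}, y ∈ l → Relation.ReflTransGen R y x
  | [], _, x, hx, y, hy => by simp at hy
  | [a], _, x, hx, y, hy => by
    simp only [List.getLast?_singleton, Option.some.injEq] at hx
    simp only [List.mem_singleton] at hy
    subst hx; subst hy
    exact Relation.ReflTransGen.refl
  | a :: b :: t, hc, x, hx, y, hy => by
    rw [List.getLast?_cons_cons] at hx
    rw [List.Chain', List.isChain_cons_cons] at hc
    rcases List.mem_cons.1 hy with rfl | hy
    · exact Relation.ReflTransGen.head hc.1
        (chain'_reach_last hc.2 hx (List.mem_cons_self))
    · exact chain'_reach_last hc.2 hx hy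

/-- From reflexive-transitive reachability, extract a duplicate-free chain. -/
lemma exists_nodup_chain {R : α → α → Prop} {u v : α} (h : Relation.ReflTransGen R u v) :
    ∃ p : List α, p.Chain' R ∧ p.Nodup ∧ p.head? = some u ∧ p.getLast? = some v := by
  induction h using Relation.ReflTransGen.head_induction_on with
  | refl => exact ⟨[v], by simp [List.Chain'], by simp, rfl, by simp⟩
  | @head a c h' _ ih =>
    obtain ⟨p, hc, hn, hh, hl⟩ := ih
    have hpne : p ≠ [] := by intro hx; rw [hx] at hh; simp at hh
    by_cases hmem : a ∈ p
    · obtain ⟨s, t, rfl⟩ := List.append_of_mem hmem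
      refine ⟨a :: t, hc.suffix (List.suffix_append s (a :: t)), ?_, rfl, ?_⟩
      · exact ((List.suffix_append s (a :: t)).sublist).nodup hn
      · rw [← hl, List.getLast?_append_cons]
    · refine ⟨a :: p, ?_, List.nodup_cons.2 ⟨hmem, hn⟩, rfl, ?_⟩
      · rw [List.Chain', List.isChain_cons]
        refine ⟨?_, hc⟩
        intro y hy
        rw [hh] at hy
        simp only [Option.mem_def, Option.some.injEq] at hy
        subst hy
        exact h'
      · rw [show a :: p = [a] ++ p from rfl, List.getLast?_append_of_ne_nil [a] hpne, hl]

/-- Split a list whose last element satisfies `D` into a prefix whose last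
element (if any) fails `D` and a nonempty suffix all of whose elements satisfy
`D`. -/
lemma split_suffix (D : α → Prop) :
    ∀ (l : List α), l ≠ [] → (∀ x ∈ l.getLast?, D x) →
      ∃ q s : List α, l = q ++ s ∧ s ≠ [] ∧ (∀ x ∈ s, D x) ∧ ∀ x ∈ q.getLast?, ¬ D x
  | [], h, _ => absurd rfl h
  | [x], _, hD => ⟨[], [x], by simp, by simp,
      by simpa using hD x (by simp), by simp⟩
  | x :: y :: t, _, hD => by
    obtain ⟨q', s', heq, hs'ne, hsD, hqD⟩ :=
      split_suffix D (y :: t) (by simp) (by rw [← List.getLast?_cons_cons (a := x)]; exact hD)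
    rcases eq_or_ne q' [] with rfl | hq'ne
    · simp only [List.nil_append] at heq
      by_cases hx : D x
      · refine ⟨[], x :: y :: t, by simp, by simp, ?_, by simp⟩
        intro z hz
        rcases List.mem_cons.1 hz with rfl | hz
        · exact hx
        · exact hsD z (heq ▸ hz)
      · exact ⟨[x], y :: t, by simp, by simp, fun z hz => hsD z (heq ▸ hz),
          by simpa using hx⟩
    · refine ⟨x :: q', s', by rw [List.cons_append, ← heq], hs'ne, hsD, ?_⟩
      rw [show x :: q' = [x] ++ q' from rfl, List.getLast?_append_of_ne_nil [x] hq'ne]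
      exact hqD

end Helpers

/-- An arborescence forest has no directed cycles. -/
lemma no_dicycle_s3 {F : Finset (V × V)} (hF : IsArbForest F) (v : V) :
    ¬ Relation.TransGen (fun x y : V => (x, y) ∈ F) v v := by
  intro h
  rw [Relation.TransGen.head'_iff] at h
  obtain ⟨w, hvw, hwv⟩ := h
  have hne : v ≠ w := (hF.2.1 _ hvw).1
  have hnwv : (w, v) ∉ F := (hF.2.1 _ hvw).2
  obtain ⟨p, hc, hn, hh, hl⟩ := exists_nodup_chain hwv
  set G' := SimpleGraph.fromRel (fun u v : V => (u, v) ∈ F) with hG'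
  have hadj : G'.Adj v w := by
    rw [hG', SimpleGraph.fromRel_adj]
    exact ⟨hne, Or.inl hvw⟩
  have hbridge := SimpleGraph.isAcyclic_iff_forall_edge_isBridge.mp hF.2.2
    (e := s(v, w)) (by rwa [SimpleGraph.mem_edgeSet])
  rw [SimpleGraph.isBridge_iff] at hbridge
  apply hbridge
  obtain ⟨t, rfl⟩ : ∃ t, p = w :: t := by
    cases p with
    | nil => simp at hh
    | cons a t =>
      simp only [List.head?_cons, Option.some.injEq] at hh
      exact ⟨t, by rw [hh]⟩
  have hwt : w ∉ t := (List.nodup_cons.1 hn).1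
  have hchain : (w :: t).Chain' (G' \ SimpleGraph.fromEdgeSet {s(v, w)}).Adj := by
    apply chain'_of_pair
    intro pr hpr
    have hprF : (pr.1, pr.2) ∈ F := chain'_pair hc pr hpr
    have hpr2 : pr.2 ∈ t := by
      have := (List.of_mem_zip hpr).2
      simpa using this
    have hprne : pr.1 ≠ pr.2 := (hF.2.1 _ hprF).1
    rw [SimpleGraph.sdiff_adj]
    constructor
    · rw [hG', SimpleGraph.fromRel_adj]
      exact ⟨hprne, Or.inl hprF⟩
    · rw [SimpleGraph.fromEdgeSet_adj]
      rintro ⟨hmem, -⟩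
      simp only [Set.mem_singleton_iff, Sym2.eq, Sym2.rel_iff', Prod.mk.injEq,
        Prod.swap_prod_mk] at hmem
      rcases hmem with ⟨rfl, rfl⟩ | ⟨rfl, rfl⟩
      · exact hwt hpr2
      · exact hnwv hprF
  have hreach : Relation.ReflTransGen (G' \ SimpleGraph.fromEdgeSet {s(v, w)}).Adj w v :=
    chain'_reach_last hchain hl (List.mem_cons_self)
  exact ((SimpleGraph.reachable_iff_reflTransGen _ _).2 hreach).symm

/-- Every vertex of an arborescence forest is reached by a directed `F`-path
from a root. -/
lemma exists_root_path {F : Finset (V × V)} (hF : IsArbForest F) (v : V) :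
    ∃ (ρ : V) (p : List V), IsRoot F ρ ∧ p.Chain' (fun x y => (x, y) ∈ F) ∧ p.Nodup ∧
      p.head? = some ρ ∧ p.getLast? = some v := by
  have hwf : WellFounded (fun x y : V => (x, y) ∈ F) := by
    have hirr : IsIrrefl V (Relation.TransGen fun x y : V => (x, y) ∈ F) :=
      ⟨fun a => no_dicycle_s3 hF a⟩
    have htr : IsTrans V (Relation.TransGen fun x y : V => (x, y) ∈ F) :=
      ⟨fun _ _ _ h₁ h₂ => h₁.trans h₂⟩
    exact Subrelation.wf (fun h => Relation.TransGen.single h)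
      (Finite.wellFounded_of_trans_of_irrefl
        (Relation.TransGen fun x y : V => (x, y) ∈ F))
  refine hwf.induction
    (C := fun w => ∃ (ρ : V) (p : List V), IsRoot F ρ ∧
      p.Chain' (fun x y => (x, y) ∈ F) ∧ p.Nodup ∧
      p.head? = some ρ ∧ p.getLast? = some w) v ?_
  intro v ih
  by_cases hroot : IsRoot F v
  · exact ⟨v, [v], hroot, by simp [List.Chain'], by simp, rfl, by simp⟩
  · have hpos : (F.filter fun a => a.2 = v).Nonempty := by
      rw [← Finset.card_pos]
      exact Nat.pos_of_ne_zero hroot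
    obtain ⟨uv, hm⟩ := hpos
    rw [Finset.mem_filter] at hm
    have hmF : (uv.1, v) ∈ F := by
      rw [← hm.2, Prod.mk.eta]
      exact hm.1
    obtain ⟨ρ, p, hρ, hc, hn, hh, hl⟩ := ih uv.1 hmF
    have hpne : p ≠ [] := by intro hx; rw [hx] at hh; simp at hh
    refine ⟨ρ, p ++ [v], hρ, ?_, ?_, ?_, ?_⟩
    · rw [List.Chain', List.isChain_append]
      refine ⟨hc, by simp, ?_⟩
      intro x hx y hy
      rw [hl] at hx
      simp only [Option.mem_def, Option.some.injEq, List.head?_cons] at hx hy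
      subst hx; subst hy
      exact hmF
    · rw [List.nodup_append]
      refine ⟨hn, by simp, ?_⟩
      intro z hz y hz' hzy
      simp only [List.mem_singleton] at hz'
      subst hz'
      subst hzy
      have hzu : Relation.ReflTransGen (fun x y : V => (x, y) ∈ F) z uv.1 :=
        chain'_reach_last hc hl hz
      exact no_dicycle_s3 hF z (Relation.TransGen.tail' hzu hmF)
    · rw [List.head?_append_of_ne_nil p hpne, hh]
    · rw [List.getLast?_append_of_ne_nil p (by simp)]; simp

lemma wreach_of_freach {F : Finset (V × V)} {x y : V}
    (h : Relation.ReflTransGen (fun u v : V => (u, v) ∈ F) x y) : WReach F x y :=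
  Relation.ReflTransGen.mono (p := fun u v : V => (u, v) ∈ F ∨ (v, u) ∈ F)
    (fun _ _ hr => Or.inl hr) x y h

lemma wreach_trans {F : Finset (V × V)} {x y z : V} (h₁ : WReach F x y) (h₂ : WReach F y z) :
    WReach F x z := Relation.ReflTransGen.trans h₁ h₂

/-- If adding an arc `a ∉ G` to `G` creates a directed path between two
distinct roots of a maximum arborescence forest `F` of `G`, then `G + a`
contains a feasible path for `F` between two distinct roots. -/
theorem stmt3 (G F : Finset (V × V)) (a : V × V)
    (hF : IsMaxArbForest G F) (ha : a ∉ G)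
    (h : ∃ r r' : V, r ≠ r' ∧ IsRoot F r ∧ IsRoot F r' ∧ Reach (insert a G) r r') :
    ∃ (r r' : V) (p : List V), r ≠ r' ∧ IsRoot F r ∧ IsRoot F r' ∧
      FeasiblePath (insert a G) F r r' p := by
  obtain ⟨r, r', hne, hr, hr', hreach⟩ := h
  have hforest : IsArbForest F := hF.2.1
  obtain ⟨p0, hc0, hn0, hh0, hl0⟩ := exists_nodup_chain hreach
  have hp0ne : p0 ≠ [] := by intro hx; rw [hx] at hh0; simp at hh0
  have hDlast : ∀ x ∈ p0.getLast?, WReach F r' x := by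
    rw [hl0]
    intro x hx
    simp only [Option.mem_def, Option.some.injEq] at hx
    subst hx
    exact Relation.ReflTransGen.refl
  obtain ⟨q, s, heq, hsne, hsD, hqD⟩ := split_suffix (WReach F r') p0 hp0ne hDlast
  rcases eq_or_ne q [] with rfl | hqne
  · -- the whole path lies in the component of r'
    simp only [List.nil_append] at heq
    subst heq
    refine ⟨r, r', p0, hne, hr, hr', ⟨hc0, hn0⟩, hh0, hl0, [], p0, by simp, ?_, hsD⟩
    intro b hb
    simp [pathArcs] at hb
  · -- `x`, the last vertex of `q`, is outside the component of `r'`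
    have hx' := List.getLast?_eq_getLast hqne
    set x := q.getLast hqne with hxdef
    have hxD : ¬ WReach F r' x := hqD x hx'
    -- the junction arc
    rw [heq] at hc0 hn0
    rw [List.Chain', List.isChain_append] at hc0
    obtain ⟨hcq, hcs, hjun⟩ := hc0
    -- the F-path from a root to x
    obtain ⟨ρ, p1, hρroot, hc1, hn1, hh1, hl1⟩ := exists_root_path hforest x
    have hp1ne : p1 ≠ [] := by intro hz; rw [hz] at hh1; simp at hh1
    have hW1 : ∀ z ∈ p1, WReach F ρ z := fun z hz =>
      wreach_of_freach (chain'_head_reach hc1 hh1 hz)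
    have hnD1 : ∀ z ∈ p1, ¬ WReach F r' z := by
      intro z hz hzD
      exact hxD (wreach_trans hzD (wreach_of_freach (chain'_reach_last hc1 hl1 hz)))
    have hρne : ρ ≠ r' := by
      rintro rfl
      have hρmem : ρ ∈ p1 := by
        cases p1 with
        | nil => simp at hh1
        | cons b t1 =>
          simp only [List.head?_cons, Option.some.injEq] at hh1
          subst hh1
          exact List.mem_cons_self
      exact hnD1 ρ hρmem Relation.ReflTransGen.refl
    refine ⟨ρ, r', p1 ++ s, hρne, hρroot, hr', ⟨?_, ?_⟩, ?_, ?_, p1, s, rfl, ?_, hsD⟩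
    · -- chain in insert a G
      rw [List.Chain', List.isChain_append]
      refine ⟨hc1.imp fun u v huv => Finset.mem_insert_of_mem (hF.1 huv), hcs, ?_⟩
      intro z hz y hy
      rw [hl1] at hz
      simp only [Option.mem_def, Option.some.injEq] at hz
      subst hz
      exact hjun x hx' y hy
    · -- nodup
      rw [List.nodup_append]
      exact ⟨hn1, (List.nodup_append.1 hn0).2.1, fun z hz y hy hzy => hnD1 z hz (hzy ▸ hsD y hy)⟩
    · rw [List.head?_append_of_ne_nil p1 hp1ne, hh1]
    · rw [List.getLast?_append_of_ne_nil p1 hsne, ← List.getLast?_append_of_ne_nil q hsne,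
        ← heq, hl0]
    · -- arcs of p1
      intro b hb
      rw [pathArcs, List.mem_toFinset] at hb
      refine ⟨?_, ?_, ?_⟩
      · have := chain'_pair hc1 b hb
        exact this
      · exact hW1 b.1 (List.of_mem_zip hb).1
      · exact hW1 b.2 (List.mem_of_mem_tail (List.of_mem_zip hb).2)
end

section
/- Let F be a maximum arborescence forest of digraph G, and suppose adding a single arc a to G creates a feasible path P from root r to root r' of F. Then the in-component of r (the set of vertices having a directed path to r) is the same in G and in G + a. -/
open Finset

variable {V : Type*} [Fintype V] [DecidableEq V]

set_option linter.unusedSectionVars false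

section Compat

set_option linter.deprecated false

variable {α : Type*}

@[simp] theorem List.chain'_nil {R : α → α → Prop} : List.Chain' R [] := List.IsChain.nil

@[simp] theorem List.chain'_singleton {R : α → α → Prop} (a : α) : List.Chain' R [a] :=
  List.IsChain.singleton a

theorem List.chain'_cons {R : α → α → Prop} {x y : α} {l : List α} :
    List.Chain' R (x :: y :: l) ↔ R x y ∧ List.Chain' R (y :: l) := List.isChain_cons_cons

theorem List.chain_cons_compat {R : α → α → Prop} {a b : α} {l : List α} :
    List.Chain R a (b :: l) ↔ R a b ∧ List.Chain R b l := List.isChain_cons_cons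

theorem List.chain'_append {R : α → α → Prop} {l₁ l₂ : List α} :
    List.Chain' R (l₁ ++ l₂) ↔ List.Chain' R l₁ ∧ List.Chain' R l₂ ∧
      ∀ x ∈ l₁.getLast?, ∀ y ∈ l₂.head?, R x y := List.isChain_append

theorem List.Chain'.prefix {R : α → α → Prop} {l l₁ : List α} (h : List.Chain' R l)
    (h' : l₁ <+: l) : List.Chain' R l₁ := List.IsChain.prefix h h'

theorem List.exists_chain_of_relationReflTransGen {r : α → α → Prop} {a b : α}
    (h : Relation.ReflTransGen r a b) :
    ∃ l, List.Chain r a l ∧ List.getLast (a :: l) (List.cons_ne_nil _ _) = b :=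
  List.exists_isChain_cons_of_relationReflTransGen h

theorem List.relationReflTransGen_of_exists_chain {r : α → α → Prop} {a b : α} (l : List α)
    (hl₁ : List.Chain r a l) (hl₂ : List.getLast (a :: l) (List.cons_ne_nil _ _) = b) :
    Relation.ReflTransGen r a b :=
  List.relationReflTransGen_of_exists_isChain_cons l hl₁ hl₂

end Compat

section ListLemmas

variable {α : Type*} [DecidableEq α]

lemma mem_zipTail {p : List α} {c : α × α} (h : c ∈ p.zip p.tail) :
    c.1 ∈ p ∧ c.2 ∈ p.tail := by
  induction p with
  | nil => simp at h
  | cons x xs ih =>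
    cases xs with
    | nil => simp at h
    | cons y ys =>
      simp only [List.tail_cons, List.zip_cons_cons, List.mem_cons] at h ⊢
      rcases h with h | h
      · subst h; simp
      · have := ih (by simpa using h)
        simp only [List.mem_cons] at this
        exact ⟨Or.inr this.1, Or.inr (by simpa using this.2)⟩

lemma chain'_iff_zipTail {R : α → α → Prop} {p : List α} :
    p.Chain' R ↔ ∀ c ∈ p.zip p.tail, R c.1 c.2 := by
  induction p with
  | nil => simp
  | cons x xs ih =>
    cases xs with
    | nil => simp
    | cons y ys =>
      simp only [List.chain'_cons, List.tail_cons, List.zip_cons_cons, List.mem_cons] at *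
      constructor
      · rintro ⟨h1, h2⟩ c hc
        rcases hc with rfl | hc
        · exact h1
        · exact (ih.1 h2) c (by simpa using hc)
      · intro h
        refine ⟨h _ (Or.inl rfl), ih.2 fun c hc => h c (Or.inr (by simpa using hc))⟩

lemma zipTail_unique_pred {p : List α} (hp : p.Nodup) {u w v : α}
    (h1 : (u, v) ∈ p.zip p.tail) (h2 : (w, v) ∈ p.zip p.tail) : u = w := by
  induction p with
  | nil => simp at h1
  | cons x xs ih =>
    cases xs with
    | nil => simp at h1
    | cons y ys =>
      simp only [List.tail_cons, List.zip_cons_cons, List.mem_cons] at h1 h2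
      have hy : y ∉ ys := by simp [List.nodup_cons] at hp; tauto
      rcases h1 with h1 | h1 <;> rcases h2 with h2 | h2
      · rw [Prod.mk.injEq] at h1 h2; rw [h1.1, h2.1]
      · exfalso
        have hv : v = y := (Prod.mk.injEq ..).mp h1 |>.2
        have := (mem_zipTail h2).2
        simp [hv] at this
        exact hy this
      · exfalso
        have hv : v = y := (Prod.mk.injEq ..).mp h2 |>.2
        have := (mem_zipTail h1).2
        simp [hv] at this
        exact hy this
      · exact ih (hp.of_cons) (by simpa using h1) (by simpa using h2)

lemma zipTail_nodup {p : List α} (hp : p.Nodup) : (p.zip p.tail).Nodup := by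
  have h : (p.zip p.tail).map Prod.snd = p.tail :=
    List.map_snd_zip (by cases p <;> simp)
  have h2 := hp.tail
  rw [← h] at h2
  exact List.Nodup.of_map _ h2

lemma zipTail_length {p : List α} : (p.zip p.tail).length = p.length - 1 := by
  rw [List.length_zip]; cases p <;> simp

lemma zipTail_append {p₁ p₂ : List α} {u w : α}
    (h : (u, w) ∈ (p₁ ++ p₂).zip (p₁ ++ p₂).tail) :
    (u, w) ∈ p₁.zip p₁.tail ∨ w ∈ p₂ := by
  induction p₁ with
  | nil =>
    right
    simpa using List.mem_of_mem_tail (mem_zipTail h).2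
  | cons x xs ih =>
    cases xs with
    | nil =>
      cases p₂ with
      | nil => simp at h
      | cons y ys =>
        simp only [List.cons_append, List.nil_append, List.tail_cons,
          List.zip_cons_cons, List.mem_cons] at h
        rcases h with h | h
        · right; rw [(Prod.mk.injEq ..).mp h |>.2]; simp
        · right
          have := (mem_zipTail h).2
          exact List.mem_of_mem_tail this
    | cons y ys =>
      simp only [List.cons_append, List.tail_cons, List.zip_cons_cons, List.mem_cons] at h ⊢
      rcases h with h | h
      · left; left; exact h
      · rcases ih (by simpa using h) with h' | h'
        · left; right; simpa using h'
        · right; exact h'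

/-- every element of the tail of a chain has a predecessor in the list -/
lemma chain_mem_pred {R : α → α → Prop} {v : α} {m : List α} (h : List.Chain R v m)
    {x : α} (hx : x ∈ m) : ∃ w ∈ v :: m, R w x := by
  induction m generalizing v with
  | nil => simp at hx
  | cons b bs ih =>
    rw [List.chain_cons_compat] at h
    rcases List.mem_cons.mp hx with rfl | hx
    · exact ⟨v, by simp, h.1⟩
    · obtain ⟨w, hw, hR⟩ := ih h.2 hx
      exact ⟨w, by simp [List.mem_cons] at hw ⊢; tauto, hR⟩

/-- forward induction along a chain -/
lemma chain'_forward_induction {R : α → α → Prop} {P : α → Prop} {l : List α}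
    (hl : l.Chain' R) (h0 : ∀ x ∈ l.head?, P x)
    (hstep : ∀ u v, (u, v) ∈ l.zip l.tail → P u → P v) : ∀ x ∈ l, P x := by
  induction l with
  | nil => simp
  | cons x xs ih =>
    have hPx : P x := h0 x rfl
    intro z hz
    rcases List.mem_cons.mp hz with rfl | hz
    · exact hPx
    cases xs with
    | nil => simp at hz
    | cons y ys =>
      have hPy : P y := hstep x y (by simp) hPx
      refine ih (List.chain'_cons.mp hl).2 (fun t ht => ?_) (fun u v huv hu => ?_) z hz
      · simp at ht; rwa [← ht]
      · exact hstep u v (by simp only [List.tail_cons, List.zip_cons_cons]; apply List.mem_cons_of_mem; simpa using huv) hu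

lemma not_nodup_split {l : List α} (h : ¬ l.Nodup) :
    ∃ l₁ x l₂, l = l₁ ++ x :: l₂ ∧ x ∈ l₂ := by
  induction l with
  | nil => simp at h
  | cons a t ih =>
    by_cases ha : a ∈ t
    · exact ⟨[], a, t, rfl, ha⟩
    · have ht : ¬ t.Nodup := by simp [List.nodup_cons] at h; tauto
      obtain ⟨l₁, x, l₂, rfl, hx⟩ := ih ht
      exact ⟨a :: l₁, x, l₂, rfl, hx⟩

/-- dedup a chain keeping endpoints -/
lemma exists_nodup_chain' {R : α → α → Prop} (l : List α) (hc : l.Chain' R) (hne : l ≠ []) :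
    ∃ m : List α, m.Chain' R ∧ m.Nodup ∧ m ≠ [] ∧ m.head? = l.head? ∧ m.getLast? = l.getLast? := by
  suffices h : ∀ n (l : List α), l.length ≤ n → l.Chain' R → l ≠ [] →
      ∃ m : List α, m.Chain' R ∧ m.Nodup ∧ m ≠ [] ∧ m.head? = l.head? ∧
        m.getLast? = l.getLast? from h l.length l le_rfl hc hne
  intro n
  induction n with
  | zero => intro l hl _ hne; cases l <;> simp_all
  | succ n ih =>
    intro l hl hc hne
    by_cases hd : l.Nodup
    · exact ⟨l, hc, hd, hne, rfl, rfl⟩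
    · obtain ⟨l₁, x, l₂, rfl, hx⟩ := not_nodup_split hd
      obtain ⟨l₃, l₄, rfl⟩ := List.append_of_mem hx
      have hsplit : l₁ ++ x :: (l₃ ++ x :: l₄) = (l₁ ++ x :: l₃) ++ (x :: l₄) := by simp
      rw [hsplit] at hc
      rw [List.chain'_append] at hc
      obtain ⟨hc1, hc2, hlink⟩ := hc
      have hc1' : (l₁ ++ [x]).Chain' R := hc1.prefix ⟨l₃, by simp⟩
      rw [List.chain'_append] at hc1'
      have hcnew : (l₁ ++ x :: l₄).Chain' R := by
        rw [List.chain'_append]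
        refine ⟨hc1'.1, hc2, ?_⟩
        intro a ha b hb
        exact hc1'.2.2 a ha b (by simpa using hb)
      have hlen : (l₁ ++ x :: l₄).length ≤ n := by
        simp at hl ⊢; omega
      obtain ⟨m, hm1, hm2, hm3, hm4, hm5⟩ := ih _ hlen hcnew (by simp)
      refine ⟨m, hm1, hm2, hm3, ?_, ?_⟩
      · rw [hm4]; cases l₁ <;> simp
      · rw [hm5]
        rw [List.getLast?_append_of_ne_nil l₁ (l₂ := x :: l₄) (by simp),
            hsplit, List.getLast?_append_of_ne_nil _ (l₂ := x :: l₄) (by simp)]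

end ListLemmas

section Digraph

lemma Reach.mono {G G' : Finset (V × V)} (h : G ⊆ G') {u v : V} (hr : Reach G u v) :
    Reach G' u v := Relation.ReflTransGen.mono (fun x y hxy => h hxy) _ _ hr

lemma reach_trans {G : Finset (V × V)} {u v w : V} (h1 : Reach G u v) (h2 : Reach G v w) :
    Reach G u w := Relation.ReflTransGen.trans h1 h2

lemma root_no_in {F : Finset (V × V)} {r : V} (hr : IsRoot F r) {u : V} : (u, r) ∉ F := by
  intro h
  have : (u, r) ∈ F.filter (fun a => a.2 = r) := by simp [h]
  have := Finset.card_pos.mpr ⟨_, this⟩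
  rw [IsRoot, inDeg] at hr
  omega

lemma head_unique {F : Finset (V × V)} (hdeg : ∀ v, inDeg F v ≤ 1) {u w v : V}
    (h1 : (u, v) ∈ F) (h2 : (w, v) ∈ F) : u = w := by
  by_contra hne
  have : 1 < (F.filter (fun a => a.2 = v)).card :=
    Finset.one_lt_card.mpr ⟨(u, v), by simp [h1], (w, v), by simp [h2], by simp [hne]⟩
  have := hdeg v
  rw [inDeg] at this
  omega

/-- a directed walk can be replaced by a directed path -/
lemma exists_dipath_s4 {G : Finset (V × V)} {u v : V} (h : Reach G u v) :
    ∃ l : List V, IsDiPath G l ∧ l.head? = some u ∧ l.getLast? = some v := by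
  obtain ⟨l, hl, hlast⟩ := List.exists_chain_of_relationReflTransGen h
  obtain ⟨m, hm1, hm2, hm3, hm4, hm5⟩ :=
    exists_nodup_chain' (u :: l) hl (by simp)
  refine ⟨m, ⟨hm1, hm2⟩, by simpa using hm4, ?_⟩
  rw [hm5, List.getLast?_eq_getLast (List.cons_ne_nil _ _), hlast]

/-- splitting reachability in `insert a G` -/
lemma reach_insert_elim {G : Finset (V × V)} {a : V × V} {x r : V}
    (h : Reach (insert a G) x r) : Reach G x r ∨ Reach G a.2 r := by
  induction h using Relation.ReflTransGen.head_induction_on with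
  | refl => exact Or.inl Relation.ReflTransGen.refl
  | head h' _ ih =>
    rcases ih with ih | ih
    · rcases Finset.mem_insert.mp h' with h' | h'
      · right
        rwa [show a.2 = _ from congrArg Prod.snd h'.symm]
      · exact Or.inl (Relation.ReflTransGen.head h' ih)
    · exact Or.inr ih

/-- a root reaches every vertex weakly connected to it -/
lemma reach_of_wreach {F : Finset (V × V)} (hdeg : ∀ v, inDeg F v ≤ 1) {ρ v : V}
    (hρ : IsRoot F ρ) (h : WReach F ρ v) : Reach F ρ v := by
  induction h with
  | refl => exact Relation.ReflTransGen.refl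
  | tail hbc hlast ih =>
    rcases hlast with hbc' | hbc'
    · exact Relation.ReflTransGen.tail ih hbc'
    · -- arc from c into b; the walk ρ → b must end with this arc
      rcases Relation.ReflTransGen.cases_tail ih with heq | ⟨mid, hmid, harc⟩
      · exact absurd (heq ▸ hbc') (root_no_in hρ)
      · rwa [head_unique hdeg harc hbc'] at hmid

end Digraph


section Cycles

/-- build a `SimpleGraph` walk along a chain of adjacencies -/
lemma exists_walk_of_chain (G' : SimpleGraph V) :
    ∀ (l : List V) (a b : V), l.Chain' G'.Adj → l.head? = some a → l.getLast? = some b →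
    ∃ w : G'.Walk a b, w.support = l ∧
      w.edges = (l.zip l.tail).map (fun q => s(q.1, q.2)) := by
  intro l
  induction l with
  | nil => intro a b _ h; simp at h
  | cons x xs ih =>
    intro a b hc hh hl
    have hax : a = x := by simpa using hh.symm
    subst hax
    cases xs with
    | nil =>
      have hab : a = b := by simpa using hl
      subst hab
      exact ⟨SimpleGraph.Walk.nil, by simp, by simp⟩
    | cons y ys =>
      rw [List.chain'_cons] at hc
      obtain ⟨w', hw1, hw2⟩ := ih y b hc.2 rfl (by simpa using hl)
      exact ⟨SimpleGraph.Walk.cons hc.1 w', by simp [hw1], by simp [hw2]⟩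

/-- an arborescence forest has no directed cycles -/
lemma noCyc_of_forest {F : Finset (V × V)} (hF : IsArbForest F) :
    ∀ u v : V, (u, v) ∈ F → ¬ Reach F v u := by
  intro u v huv hr
  have hne := (hF.2.1 _ huv).1
  have hanti := (hF.2.1 _ huv).2
  obtain ⟨l, ⟨hcl, hnd⟩, hh, hl⟩ := exists_dipath_s4 hr
  set G' := SimpleGraph.fromRel (fun x y => (x, y) ∈ F) with hG'
  have hadj : l.Chain' G'.Adj := by
    rw [chain'_iff_zipTail] at hcl ⊢
    intro c hc
    exact (SimpleGraph.fromRel_adj ..).mpr ⟨(hF.2.1 _ (hcl c hc)).1, Or.inl (hcl c hc)⟩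
  obtain ⟨w, hws, hwe⟩ := exists_walk_of_chain G' l v u hadj hh hl
  have hpath : w.IsPath := (SimpleGraph.Walk.isPath_def w).mpr (hws ▸ hnd)
  have hadot : G'.Adj u v := (SimpleGraph.fromRel_adj ..).mpr ⟨hne, Or.inl huv⟩
  have hedge : s(u, v) ∉ w.edges := by
    rw [hwe]
    intro hmem
    simp only [List.mem_map] at hmem
    obtain ⟨⟨x, y⟩, hxy, hs⟩ := hmem
    rw [Sym2.eq_iff] at hs
    rcases hs with ⟨hx, hy⟩ | ⟨hx, hy⟩
    · -- (x, y) = (u, v): v occurs in tail, but v is the nodup head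
      have hv2 := (mem_zipTail hxy).2
      rw [hy] at hv2
      cases l with
      | nil => simp at hh
      | cons z zs =>
        have hzv : z = v := by simpa using hh
        simp only [List.tail_cons] at hv2
        exact (List.nodup_cons.mp hnd).1 (hzv ▸ hv2)
    · -- (x, y) = (v, u): antiparallel arc
      rw [chain'_iff_zipTail] at hcl
      have := hcl _ hxy
      rw [hx, hy] at this
      exact hanti this
  exact hF.2.2 _ (SimpleGraph.Path.cons_isCycle ⟨w, hpath⟩ hadot hedge)

lemma exists_last_edge {G' : SimpleGraph V} {x y : V} (w : G'.Walk x y) :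
    x ≠ y → ∃ z ∈ w.support, G'.Adj z y ∧ s(z, y) ∈ w.edges := by
  induction w with
  | nil => intro h; exact absurd rfl h
  | @cons x b y h w' ih =>
    intro _
    by_cases hby : b = y
    · subst hby
      exact ⟨x, by simp, h, by simp⟩
    · obtain ⟨z, hz, hadj, hedge⟩ := ih hby
      exact ⟨z, by simp [hz], hadj, by simp [hedge]⟩

lemma cycle_two_in {G' : SimpleGraph V} {m : V} (c : G'.Walk m m) (hc : c.IsCycle) :
    ∃ b z, b ∈ c.support ∧ z ∈ c.support ∧ b ≠ z ∧ G'.Adj m b ∧ G'.Adj z m := by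
  cases c with
  | nil => exact absurd rfl hc.ne_nil
  | @cons _ b _ h q =>
    rw [SimpleGraph.Walk.cons_isCycle_iff] at hc
    obtain ⟨z, hz, hadj, hedge⟩ := exists_last_edge q h.ne'
    refine ⟨b, z, by simp, by simp [hz], ?_, h, hadj⟩
    rintro rfl
    exact hc.2 (by rwa [Sym2.eq_swap] at hedge)

/-- branching with no directed cycle is an arborescence forest -/
lemma forest_of_noCyc {H : Finset (V × V)} (hdeg : ∀ v, inDeg H v ≤ 1)
    (hnc : ∀ u v : V, (u, v) ∈ H → ¬ Reach H v u) : IsArbForest H := by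
  refine ⟨hdeg, fun a ha => ⟨?_, ?_⟩, ?_⟩
  · rintro heq
    exact hnc a.1 a.2 (by simpa using ha) (heq ▸ Relation.ReflTransGen.refl)
  · intro hrev
    exact hnc a.1 a.2 (by simpa using ha) (Relation.ReflTransGen.single hrev)
  · intro x c hc
    classical
    set f : V → ℕ := fun v => (Finset.univ.filter (fun y => Reach H v y)).card with hf
    have hmono : ∀ m y, (m, y) ∈ H → f y < f m := by
      intro m y hmy
      apply Finset.card_lt_card
      rw [Finset.ssubset_iff_of_subset]
      · exact ⟨m, by simp; exact Relation.ReflTransGen.refl, by simp; exact hnc m y hmy⟩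
      · intro t ht
        simp only [Finset.mem_filter, Finset.mem_univ, true_and] at ht ⊢
        exact Relation.ReflTransGen.head hmy ht
    obtain ⟨m, hm, hmin⟩ := Finset.exists_min_image c.support.toFinset f
      ⟨x, by simp [c.start_mem_support]⟩
    have hm' : m ∈ c.support := by simpa using hm
    have hnoout : ∀ y ∈ c.support, (m, y) ∉ H := by
      intro y hy hmy
      have := hmin y (by simpa using hy)
      have := hmono m y hmy
      omega
    have hsupp : ∀ z, z ∈ (c.rotate m hm').support → z ∈ c.support := by
      intro z hz
      have hperm := SimpleGraph.Walk.support_rotate c m hm'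
      rw [SimpleGraph.Walk.support_eq_cons] at hz
      rcases List.mem_cons.mp hz with rfl | hz'
      · exact hm'
      · exact List.mem_of_mem_tail (hperm.perm.mem_iff.mp hz')
    obtain ⟨b, z, hb, hz, hbz, hadj1, hadj2⟩ := cycle_two_in (c.rotate m hm') (hc.rotate hm')
    have hb' := hsupp b hb
    have hz' := hsupp z hz
    have harc1 : (b, m) ∈ H := by
      rcases (SimpleGraph.fromRel_adj ..).mp hadj1 with ⟨-, h | h⟩
      · exact absurd h (hnoout b hb')
      · exact h
    have harc2 : (z, m) ∈ H := by
      rcases (SimpleGraph.fromRel_adj ..).mp hadj2 with ⟨-, h | h⟩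
      · exact h
      · exact absurd h (hnoout z hz')
    have : 1 < (H.filter (fun a => a.2 = m)).card :=
      Finset.one_lt_card.mpr ⟨(b, m), by simp [harc1], (z, m), by simp [harc2], by simp [hbz]⟩
    have := hdeg m
    rw [inDeg] at this
    omega

end Cycles


section Aug

lemma mem_pathArcs {p : List V} {c : V × V} : c ∈ pathArcs p ↔ c ∈ p.zip p.tail := by
  simp [pathArcs]

/-- the augmentation lemma: a directed path between two distinct roots lets us
enlarge the forest -/
lemma aug {G F : Finset (V × V)} {ρ ρ' : V} {l : List V}
    (hFG : F ⊆ G) (hF : IsArbForest F) (hl : IsDiPath G l)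
    (hh : l.head? = some ρ) (hlast : l.getLast? = some ρ')
    (hne : ρ ≠ ρ') (hρ : IsRoot F ρ) (hρ' : IsRoot F ρ') :
    ∃ F' ⊆ G, IsArbForest F' ∧ F.card < F'.card := by
  classical
  obtain ⟨hcl, hnd⟩ := hl
  obtain ⟨t, rfl⟩ : ∃ t, l = ρ :: t := by
    cases l with
    | nil => simp at hh
    | cons z zs =>
      have : z = ρ := by simpa using hh
      exact ⟨zs, by rw [this]⟩
  have htne : t ≠ [] := by
    rintro rfl
    exact hne (by simpa using hlast)
  have hρt : ρ ∉ t := (List.nodup_cons.mp hnd).1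
  have hρ't : ρ' ∈ t := by
    obtain ⟨hne', h2⟩ := List.mem_getLast?_eq_getLast hlast
    have := h2 ▸ List.getLast_mem hne'
    rcases List.mem_cons.mp this with h | h
    · exact absurd h.symm hne
    · exact h
  have hzips : ∀ c ∈ (ρ :: t).zip t, (c.1, c.2) ∈ G := by
    have := chain'_iff_zipTail.mp hcl
    simpa using this
  -- the two parts of the updated forest
  set A := F.filter (fun a => a.2 ∉ (ρ :: t).tail) with hA
  have hFdef : update F (ρ :: t) = A ∪ pathArcs (ρ :: t) := rfl
  -- membership facts
  have hmemA : ∀ c, c ∈ A ↔ c ∈ F ∧ c.2 ∉ t := by intro c; rw [hA, Finset.mem_filter]; simp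
  have hmemP : ∀ c : V × V, c ∈ pathArcs (ρ :: t) → c.2 ∈ t := by
    intro c hc
    simpa using (mem_zipTail (mem_pathArcs.mp hc)).2
  have hmemF' : ∀ c : V × V, c ∈ update F (ρ :: t) ↔ c ∈ A ∨ c ∈ pathArcs (ρ :: t) := by
    intro c; rw [hFdef]; simp
  -- F' ⊆ G
  have hsub : update F (ρ :: t) ⊆ G := by
    intro c hc
    rcases (hmemF' c).mp hc with hc | hc
    · exact hFG ((hmemA c).mp hc).1
    · have := hzips c (mem_pathArcs.mp hc)
      simpa using this
  -- in-degrees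
  have hdeg' : ∀ v, inDeg (update F (ρ :: t)) v ≤ 1 := by
    intro v
    rw [inDeg, hFdef, Finset.filter_union]
    by_cases hv : v ∈ t
    · have he : A.filter (fun a => a.2 = v) = ∅ := by
        rw [Finset.eq_empty_iff_forall_notMem]
        intro c hc
        simp only [Finset.mem_filter] at hc
        exact ((hmemA c).mp hc.1).2 (hc.2 ▸ hv)
      rw [he, Finset.empty_union, Finset.card_le_one]
      intro c1 h1 c2 h2
      simp only [Finset.mem_filter, mem_pathArcs] at h1 h2
      have := zipTail_unique_pred hnd (u := c1.1) (w := c2.1) (v := v)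
        (by rw [← h1.2]; exact h1.1) (by rw [← h2.2]; exact h2.1)
      exact Prod.ext this (h1.2.trans h2.2.symm)
    · have he : (pathArcs (ρ :: t)).filter (fun a => a.2 = v) = ∅ := by
        rw [Finset.eq_empty_iff_forall_notMem]
        intro c hc
        simp only [Finset.mem_filter] at hc
        exact hv (hc.2 ▸ hmemP c hc.1)
      rw [he, Finset.union_empty]
      calc (A.filter (fun a => a.2 = v)).card
          ≤ (F.filter (fun a => a.2 = v)).card := by
            apply Finset.card_le_card
            intro c hc
            simp only [Finset.mem_filter] at hc ⊢
            exact ⟨((hmemA c).mp hc.1).1, hc.2⟩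
        _ ≤ 1 := hF.1 v
  -- no directed cycle in F'
  have hnc' : ∀ u v : V, (u, v) ∈ update F (ρ :: t) → ¬ Reach (update F (ρ :: t)) v u := by
    intro u v huv hreach
    obtain ⟨ml, hchain, hlastm⟩ := List.exists_chain_of_relationReflTransGen hreach
    set S := v :: ml with hS
    have huS : u ∈ S := hlastm ▸ List.getLast_mem (by simp [hS])
    have hin : ∀ x ∈ S, ∃ w ∈ S, (w, x) ∈ update F (ρ :: t) := by
      intro x hx
      rcases List.mem_cons.mp hx with rfl | hx
      · exact ⟨u, huS, huv⟩
      · obtain ⟨w, hw, hwx⟩ := chain_mem_pred hchain hx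
        exact ⟨w, hw, hwx⟩
    -- no vertex of the path lies on the cycle
    have hnotS : ∀ x ∈ (ρ :: t), x ∉ S := by
      refine chain'_forward_induction hcl ?_ ?_
      · intro x hx
        have hxρ : x = ρ := by have := hx; simp at this; exact this.symm
        subst hxρ
        intro hxS
        obtain ⟨w, _, hwx⟩ := hin x hxS
        rcases (hmemF' _).mp hwx with hc | hc
        · exact root_no_in hρ ((hmemA _).mp hc).1
        · exact hρt (hmemP _ hc)
      · intro x y hxy hxS hyS
        obtain ⟨w, hwS, hwy⟩ := hin y hyS
        have hyt : y ∈ t := by simpa using (mem_zipTail hxy).2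
        have hwy' : (w, y) ∈ pathArcs (ρ :: t) := by
          rcases (hmemF' _).mp hwy with hc | hc
          · exact absurd hyt ((hmemA _).mp hc).2
          · exact hc
        have := zipTail_unique_pred hnd (mem_pathArcs.mp hwy') (by simpa using hxy)
        exact hxS (this ▸ hwS)
    -- hence all cycle arcs are F-arcs
    have harcF : ∀ c : V × V, c ∈ update F (ρ :: t) → c.2 ∈ S → c ∈ F := by
      intro c hc hc2
      rcases (hmemF' _).mp hc with hc' | hc'
      · exact ((hmemA _).mp hc').1
      · exfalso
        have := hmemP _ hc'
        exact hnotS c.2 (List.mem_cons_of_mem _ this) hc2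
    have hchainF : List.Chain (fun x y => (x, y) ∈ F) v ml := by
      have hzS : ∀ c ∈ S.zip S.tail, (c.1, c.2) ∈ update F (ρ :: t) := by
        have : List.Chain' (fun x y => (x, y) ∈ update F (ρ :: t)) S := hchain
        simpa using chain'_iff_zipTail.mp this
      have : List.Chain' (fun x y => (x, y) ∈ F) S := by
        rw [chain'_iff_zipTail]
        intro c hc
        refine harcF _ (hzS c hc) ?_
        exact List.mem_cons_of_mem _ (by simpa [hS] using (mem_zipTail hc).2)
      exact this
    have hreachF : Reach F v u := List.relationReflTransGen_of_exists_chain ml hchainF hlastm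
    have huvF : (u, v) ∈ F := harcF (u, v) huv (by simp [hS])
    exact noCyc_of_forest hF u v huvF hreachF
  -- cardinality
  have hdisj : Disjoint A (pathArcs (ρ :: t)) := by
    rw [Finset.disjoint_left]
    intro c hc hc'
    exact ((hmemA c).mp hc).2 (hmemP c hc')
  have hcardP : (pathArcs (ρ :: t)).card = t.length := by
    rw [pathArcs, List.toFinset_card_of_nodup (zipTail_nodup hnd)]
    simpa using zipTail_length (p := ρ :: t)
  have hcardF' : (update F (ρ :: t)).card = A.card + t.length := by
    rw [hFdef, Finset.card_union_of_disjoint hdisj, hcardP]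
  have hsplit : (F.filter (fun a => a.2 ∈ (ρ :: t).tail)).card + A.card = F.card := by
    rw [hA]
    exact Finset.card_filter_add_card_filter_not _
  have hX : (F.filter (fun a => a.2 ∈ (ρ :: t).tail)).card ≤ t.length - 1 := by
    have : (F.filter (fun a => a.2 ∈ (ρ :: t).tail)).card ≤ (t.toFinset.erase ρ').card := by
      apply Finset.card_le_card_of_injOn Prod.snd
      · intro c hc
        replace hc : c ∈ F ∧ c.2 ∈ t := Finset.mem_filter.mp hc
        rw [Finset.mem_coe, Finset.mem_erase]
        refine ⟨?_, List.mem_toFinset.mpr hc.2⟩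
        rintro rfl
        exact root_no_in hρ' (show (c.1, c.2) ∈ F by simpa using hc.1)
      · intro c1 h1 c2 h2 hsnd
        simp only [Finset.coe_filter, Set.mem_setOf_eq] at h1 h2
        have : c1.1 = c2.1 := head_unique hF.1
          (show (c1.1, c1.2) ∈ F by simpa using h1.1)
          (show (c2.1, c1.2) ∈ F by rw [hsnd]; simpa using h2.1)
        exact Prod.ext this hsnd
    have hρ'f : ρ' ∈ t.toFinset := List.mem_toFinset.mpr hρ't
    rw [Finset.card_erase_of_mem hρ'f,
      List.toFinset_card_of_nodup (List.nodup_cons.mp hnd).2] at this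
    exact this
  have htlen : 1 ≤ t.length := by cases t <;> simp_all
  exact ⟨update F (ρ :: t), hsub, forest_of_noCyc hdeg' hnc', by omega⟩

end Aug

/-- If adding a single arc `a` to `G` creates a feasible path from root `r` to
root `r'` of a maximum arborescence forest `F` of `G`, then the in-component of
`r` is the same in `G` and in `G + a`. -/
theorem stmt4 (G F : Finset (V × V)) (a : V × V) (r r' : V) (p : List V)
    (hF : IsMaxArbForest G F) (ha : a ∉ G) (hrr : r ≠ r')
    (hr : IsRoot F r) (hr' : IsRoot F r')
    (hp : FeasiblePath (insert a G) F r r' p) :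
    ∀ v : V, Reach G v r ↔ Reach (insert a G) v r := by
  classical
  obtain ⟨⟨hpc, hpnd⟩, hph, hpl, p₁, p₂, hpsplit, hp₁, hp₂⟩ := hp
  have hFsub := hF.1
  have hmax := hF.2.2
  have hkey : ¬ Reach G a.2 r := by
    intro hreach
    have haP : (a.1, a.2) ∈ p.zip p.tail := by
      by_contra haP
      have hpG : p.Chain' (fun u v => (u, v) ∈ G) := by
        rw [chain'_iff_zipTail] at hpc ⊢
        intro c hc
        rcases Finset.mem_insert.mp (hpc c hc) with h | h
        · exact absurd (show (a.1, a.2) ∈ p.zip p.tail from (h : c = a) ▸ hc) haP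
        · exact h
      obtain ⟨F', hF'G, hF'forest, hlt⟩ := aug hFsub hF.2.1 ⟨hpG, hpnd⟩ hph hpl hrr hr hr'
      exact absurd (hmax F' hF'G hF'forest) (by omega)
    have ha2 : a.2 ∈ p₂ := by
      rcases zipTail_append (p₁ := p₁) (p₂ := p₂) (by rw [← hpsplit]; exact haP) with h | h
      · exact absurd (hFsub (hp₁ a (mem_pathArcs.mpr h)).1) ha
      · exact h
    have hra2 : Reach F r' a.2 := reach_of_wreach hF.2.1.1 hr' (hp₂ _ ha2)
    have hrr' : Reach G r' r := reach_trans (hra2.mono hFsub) hreach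
    obtain ⟨l, hl, hlh, hll⟩ := exists_dipath_s4 hrr'
    obtain ⟨F', hF'G, hF'forest, hlt⟩ := aug hFsub hF.2.1 hl hlh hll (Ne.symm hrr) hr' hr
    exact absurd (hmax F' hF'G hF'forest) (by omega)
  intro v
  constructor
  · exact fun h => h.mono (Finset.subset_insert a G)
  · intro h
    rcases reach_insert_elim h with h | h
    · exact h
    · exact absurd h hkey
end

section
/- Let F be a maximum arborescence forest of digraph G, let a = (u,v) be a new arc, and suppose G + a contains a feasible path P from root r to root r' of F. Then performing the update F' = UPDATE(F, P) yields a maximum arborescence forest of G + a, whose root set equals the root set of F minus r'. -/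
open Finset

variable {V : Type*} [Fintype V] [DecidableEq V]

section AuxLemmas
set_option linter.unusedSectionVars false

lemma inDeg_unique {F : Finset (V × V)} {u v z : V} (hdeg : ∀ w, inDeg F w ≤ 1)
    (h1 : (u, v) ∈ F) (h2 : (z, v) ∈ F) : u = z := by
  by_contra hne
  have hsub : ({(u,v), (z,v)} : Finset (V × V)) ⊆ F.filter (fun a => a.2 = v) := by
    intro x hx
    simp only [Finset.mem_insert, Finset.mem_singleton] at hx
    rcases hx with rfl | rfl <;> simp [h1, h2]
  have h2' := Finset.card_le_card hsub
  rw [Finset.card_insert_of_notMem (by simp [hne]), Finset.card_singleton] at h2'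
  have := hdeg v
  rw [inDeg] at this
  omega

lemma not_mem_of_isRoot {F : Finset (V × V)} {u v : V} (hr : IsRoot F v) (h : (u, v) ∈ F) :
    False := by
  have h1 : (u,v) ∈ F.filter (fun a => a.2 = v) := by simp [h]
  have h2 := Finset.card_pos.mpr ⟨_, h1⟩
  rw [IsRoot, inDeg] at hr
  omega

lemma wreach_root {F : Finset (V × V)} {u v : V} (hdeg : ∀ w, inDeg F w ≤ 1)
    (hr : IsRoot F u) (h : WReach F u v) : Reach F u v := by
  induction h with
  | refl => exact .refl
  | @tail b c hb hbc ih =>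
    rcases hbc with h1 | h1
    · exact ih.tail h1
    · rcases Relation.ReflTransGen.cases_tail ih with heq | ⟨d, hd1, hd2⟩
      · exact absurd h1 (fun h1 => not_mem_of_isRoot (heq ▸ hr) h1)
      · rwa [inDeg_unique hdeg hd2 h1] at hd1

lemma root_unique {F : Finset (V × V)} {u v : V} (hdeg : ∀ w, inDeg F w ≤ 1)
    (hu : IsRoot F u) (hv : IsRoot F v) (h : WReach F u v) : u = v := by
  rcases Relation.ReflTransGen.cases_tail (wreach_root hdeg hu h) with h1 | ⟨c, _, hc⟩
  · exact h1.symm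
  · exact absurd hc (fun hc => not_mem_of_isRoot hv hc)

lemma forest_no_dicycle {F : Finset (V × V)} (hF : IsArbForest F) :
    ∀ u v, (u,v) ∈ F → ¬ Reach F v u := by
  obtain ⟨hdeg, hne, hac⟩ := hF
  intro u v huv hr
  set H := SimpleGraph.fromRel (fun x y : V => (x,y) ∈ F) with hH
  have hadj : H.Adj u v := by
    rw [hH, SimpleGraph.fromRel_adj]
    exact ⟨(hne _ huv).1, Or.inl huv⟩
  have hbridge := (SimpleGraph.isAcyclic_iff_forall_adj_isBridge.mp hac) hadj
  rw [SimpleGraph.isBridge_iff] at hbridge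
  apply hbridge
  obtain ⟨l, hl, hlast⟩ := List.exists_isChain_cons_of_relationReflTransGen hr
  clear hr
  have key : ∀ (l : List V) (w : V), List.Chain (fun x y => (x,y) ∈ F) w l →
      (w :: l).getLast (List.cons_ne_nil _ _) = u →
      (H \ SimpleGraph.fromEdgeSet {s(u,v)}).Reachable w u := by
    intro l
    induction l with
    | nil =>
      intro w _ hlast
      simp only [List.getLast_singleton] at hlast
      exact hlast ▸ SimpleGraph.Reachable.refl _
    | cons b t ih =>
      intro w hch hlast
      rw [List.Chain, List.chain_cons] at hch
      rw [List.getLast_cons_cons] at hlast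
      by_cases hwu : w = u
      · exact hwu ▸ SimpleGraph.Reachable.refl _
      · have hstep : (H \ SimpleGraph.fromEdgeSet {s(u,v)}).Adj w b := by
          rw [SimpleGraph.sdiff_adj, SimpleGraph.fromEdgeSet_adj]
          refine ⟨?_, ?_⟩
          · rw [hH, SimpleGraph.fromRel_adj]
            exact ⟨(hne _ hch.1).1, Or.inl hch.1⟩
          · rintro ⟨hmem, -⟩
            rw [Set.mem_singleton_iff, Sym2.eq_iff] at hmem
            rcases hmem with ⟨rfl, rfl⟩ | ⟨rfl, rfl⟩
            · exact hwu rfl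
            · exact (hne _ huv).2 hch.1
        exact hstep.reachable.trans (ih b hch.2 hlast)
  exact ((key l v hl hlast).symm)

set_option linter.unusedSectionVars false

lemma path_reach {U : Finset (V × V)} (hdeg : ∀ w, inDeg U w ≤ 1) :
    ∀ {x y : V} (q : (SimpleGraph.fromRel (fun s t : V => (s,t) ∈ U)).Walk x y), q.IsPath →
    ∀ z, (z, x) ∈ U → (z ∉ q.support ∨ (z = y ∧ 2 ≤ q.length)) → Reach U x y := by
  intro x y q
  induction q with
  | nil => intros; exact .refl
  | @cons a b c h q ih =>
    intro hp z hz hcond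
    rw [SimpleGraph.Walk.cons_isPath_iff] at hp
    have hadj := (SimpleGraph.fromRel_adj _ _ _).mp h
    rcases hadj.2 with hxv | hvx
    · exact Relation.ReflTransGen.head hxv (ih hp.1 a hxv (Or.inl hp.2))
    · have hzv : z ≠ b := by
        rcases hcond with hns | ⟨rfl, hlen⟩
        · intro hc
          apply hns
          rw [hc, SimpleGraph.Walk.support_cons]
          exact List.mem_cons_of_mem _ (SimpleGraph.Walk.start_mem_support q)
        · intro hc
          subst hc
          rw [SimpleGraph.Walk.isPath_iff_eq_nil] at hp
          rw [hp.1] at hlen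
          simp at hlen
      exact absurd (inDeg_unique hdeg hz hvx) hzv

lemma undirAcyclic_of_noDicycle {U : Finset (V × V)} (hdeg : ∀ w, inDeg U w ≤ 1)
    (hnd : ∀ u v, (u,v) ∈ U → ¬ Reach U v u) : UndirAcyclic U := by
  constructor
  · intro a haU
    refine ⟨?_, ?_⟩
    · intro hc
      exact hnd a.1 a.2 haU (hc ▸ Relation.ReflTransGen.refl)
    · intro hc
      exact hnd a.1 a.2 haU (Relation.ReflTransGen.single hc)
  · intro w c hc
    cases c with
    | nil => exact hc.ne_nil rfl
    | @cons _ b _ h q =>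
      have h3 := hc.three_le_length
      have hq := ((SimpleGraph.Walk.cons_isCycle_iff q h).mp hc).1
      have hlen : 2 ≤ q.length := by
        rw [SimpleGraph.Walk.length_cons] at h3; omega
      have hadj := (SimpleGraph.fromRel_adj _ _ _).mp h
      rcases hadj.2 with hwb | hbw
      · exact hnd _ _ hwb (path_reach hdeg q hq w hwb (Or.inr ⟨rfl, hlen⟩))
      · exact hnd _ _ hbw (path_reach hdeg q.reverse hq.reverse b hbw
          (Or.inr ⟨rfl, by simpa using hlen⟩))

lemma isArbForest_subset {F' F : Finset (V × V)} (hsub : F' ⊆ F) (hF : IsArbForest F) :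
    IsArbForest F' := by
  refine ⟨fun v => le_trans (Finset.card_le_card (Finset.filter_subset_filter _ hsub)) (hF.1 v),
    ?_, ?_⟩
  · intro a haF'
    exact ⟨(hF.2.1 a (hsub haF')).1, fun hc => (hF.2.1 a (hsub haF')).2 (hsub hc)⟩
  · have hle : (SimpleGraph.fromRel (fun s t : V => (s,t) ∈ F')) ≤
        (SimpleGraph.fromRel (fun s t : V => (s,t) ∈ F)) := by
      intro x y hadj
      rw [SimpleGraph.fromRel_adj] at hadj ⊢
      exact ⟨hadj.1, hadj.2.imp (hsub ·) (hsub ·)⟩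
    intro v c hcyc
    exact hF.2.2 (c.mapLe hle) (hcyc.mapLe hle)

lemma mem_zip_tail {p : List V} {x y : V} :
    (x, y) ∈ p.zip p.tail ↔ ∃ i : ℕ, ∃ h : i + 1 < p.length, p[i] = x ∧ p[i+1] = y := by
  rw [List.mem_iff_getElem]
  constructor
  · rintro ⟨i, hi, hget⟩
    have hi2 := hi
    rw [List.length_zip, List.length_tail] at hi2
    have hi' : i + 1 < p.length := by omega
    have h1 : (p.zip p.tail)[i] = (p[i], p.tail[i]'(by rw [List.length_tail]; omega)) :=
      List.getElem_zip
    rw [hget] at h1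
    have h2 : p.tail[i]'(by rw [List.length_tail]; omega) = p[i+1] := List.getElem_tail _
    exact ⟨i, hi', (congrArg Prod.fst h1).symm, by rw [← h2]; exact (congrArg Prod.snd h1).symm⟩
  · rintro ⟨i, hi, hx, hy⟩
    have hil : i < (p.zip p.tail).length := by
      rw [List.length_zip, List.length_tail]; omega
    refine ⟨i, hil, ?_⟩
    rw [List.getElem_zip]
    ext
    · simpa using hx
    · simpa [List.getElem_tail] using hy

lemma getElem_append_left' {α : Type*} {l l₁ l₂ : List α} (h : l = l₁ ++ l₂) {j : ℕ}
    (hj : j < l₁.length) (hj' : j < l.length) : l[j]'hj' = l₁[j]'hj := by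
  subst h; exact List.getElem_append_left hj

lemma getElem_append_right' {α : Type*} {l l₁ l₂ : List α} (h : l = l₁ ++ l₂) {j : ℕ}
    (hj1 : l₁.length ≤ j) (hj' : j < l.length) :
    l[j]'hj' = l₂[j - l₁.length]'(by subst h; rw [List.length_append] at hj'; omega) := by
  subst h; exact List.getElem_append_right hj1

end AuxLemmas

set_option maxHeartbeats 1000000 in
/-- If adding arc `a` to `G` creates a feasible path `p` from root `r` to root
`r'` of a maximum arborescence forest `F` of `G`, then `UPDATE(F, p)` is a
maximum arborescence forest of `G + a` whose root set is that of `F` minus `r'`. -/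
theorem stmt5 (G F : Finset (V × V)) (a : V × V) (r r' : V) (p : List V)
    (hF : IsMaxArbForest G F) (ha : a ∉ G) (hrr : r ≠ r')
    (hr : IsRoot F r) (hr' : IsRoot F r')
    (hp : FeasiblePath (insert a G) F r r' p) :
    IsMaxArbForest (insert a G) (update F p) ∧
    ∀ v : V, IsRoot (update F p) v ↔ IsRoot F v ∧ v ≠ r' := by
  obtain ⟨hFsub, hFforest, hFmax⟩ := hF
  obtain ⟨hFdeg, hFund⟩ := hFforest
  obtain ⟨⟨hchain, hnodup⟩, hhead, hlast, p₁, p₂, hsplit, hp₁, hp₂⟩ := hp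
  set U := update F p with hUdef
  clear_value U
  have hpne : p ≠ [] := by rintro rfl; simp at hhead
  have hlen1 : 0 < p.length := List.length_pos_iff.mpr hpne
  have hr0 : ∀ (h : 0 < p.length), p[0]'h = r := by
    intro h
    have h1 := List.head?_eq_head hpne
    rw [hhead] at h1
    rw [← List.head_eq_getElem hpne]
    exact (Option.some.inj h1).symm
  have hr'last : ∀ (h : p.length - 1 < p.length), p[p.length - 1]'h = r' := by
    intro h
    have h1 := List.getLast?_eq_getLast hpne
    rw [hlast] at h1
    rw [← List.getLast_eq_getElem hpne]
    exact (Option.some.inj h1.symm)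
  have hlen2 : 2 ≤ p.length := by
    by_contra hc
    have h1 : p.length = 1 := by omega
    apply hrr
    rw [← hr0 hlen1, ← hr'last (by omega)]
    congr 1
    omega
  have hUmem : ∀ {x y : V}, (x,y) ∈ U ↔ ((x,y) ∈ F ∧ y ∉ p.tail) ∨ (x,y) ∈ p.zip p.tail := by
    intro x y
    rw [hUdef, update, Finset.mem_union, Finset.mem_filter, pathArcs, List.mem_toFinset]
  have htail_iff : ∀ {y : V}, y ∈ p.tail ↔ ∃ i : ℕ, ∃ h : i + 1 < p.length, p[i+1]'h = y := by
    intro y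
    rw [List.mem_iff_getElem]
    constructor
    · rintro ⟨i, hi, hy⟩
      have hi' : i + 1 < p.length := by
        rw [List.length_tail] at hi; omega
      exact ⟨i, hi', by rw [← List.getElem_tail (l := p) (i := i) hi]; exact hy⟩
    · rintro ⟨i, hi, hy⟩
      have hi' : i < p.tail.length := by rw [List.length_tail]; omega
      exact ⟨i, hi', by rw [List.getElem_tail (l := p) (i := i) hi']; exact hy⟩
  have hzip_mem_tail : ∀ {x y : V}, (x,y) ∈ p.zip p.tail → y ∈ p.tail := by
    intro x y hz
    obtain ⟨i, hi, -, hy⟩ := mem_zip_tail.mp hz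
    exact htail_iff.mpr ⟨i, hi, hy⟩
  have harc_mem : ∀ (i : ℕ) (h : i + 1 < p.length),
      (p[i]'(by omega), p[i+1]'h) ∈ p.zip p.tail := by
    intro i h
    exact mem_zip_tail.mpr ⟨i, h, rfl, rfl⟩
  have hU_nontail : ∀ {x y : V}, y ∉ p.tail → ((x,y) ∈ U ↔ (x,y) ∈ F) := by
    intro x y hy
    rw [hUmem]
    constructor
    · rintro (⟨h1, -⟩ | h1)
      · exact h1
      · exact absurd (hzip_mem_tail h1) hy
    · intro h1
      exact Or.inl ⟨h1, hy⟩
  have hUdeg : ∀ w, inDeg U w ≤ 1 := by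
    intro w
    rw [inDeg]
    apply Finset.card_le_one.mpr
    rintro ⟨x, y⟩ hx ⟨x', y'⟩ hy
    rw [Finset.mem_filter] at hx hy
    obtain ⟨hx1, hx2⟩ := hx
    obtain ⟨hy1, hy2⟩ := hy
    replace hx2 : y = w := hx2
    replace hy2 : y' = w := hy2
    have hyy : y = y' := hx2.trans hy2.symm
    subst hyy
    by_cases hw2 : y ∈ p.tail
    · have h1 : (x, y) ∈ p.zip p.tail := by
        rcases hUmem.mp hx1 with ⟨-, hns⟩ | h1
        · exact absurd hw2 hns
        · exact h1
      have h2 : (x', y) ∈ p.zip p.tail := by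
        rcases hUmem.mp hy1 with ⟨-, hns⟩ | h2
        · exact absurd hw2 hns
        · exact h2
      obtain ⟨i, hi, hxi, hyi⟩ := mem_zip_tail.mp h1
      obtain ⟨j, hj, hxj, hyj⟩ := mem_zip_tail.mp h2
      have hij : i + 1 = j + 1 := by
        apply (List.Nodup.getElem_inj_iff hnodup).mp
        rw [hyi, hyj]
      have hij' : i = j := by omega
      subst hij'
      rw [← hxi, ← hxj]
    · have h1 := (hU_nontail hw2).mp hx1
      have h2 := (hU_nontail hw2).mp hy1
      rw [inDeg_unique hFdeg h1 h2]
  have hnoCIn : ∀ (i : ℕ) (hi : i < p.length),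
      ¬ ∃ x, (x, p[i]'hi) ∈ U ∧ Reach U (p[i]'hi) x := by
    intro i
    induction i with
    | zero =>
      rintro h0 ⟨x, hx, -⟩
      rcases hUmem.mp hx with ⟨hxF, -⟩ | hzip
      · exact not_mem_of_isRoot hr (hr0 h0 ▸ hxF)
      · obtain ⟨j, hj, -, hyj⟩ := mem_zip_tail.mp hzip
        have : j + 1 = 0 := by
          apply (List.Nodup.getElem_inj_iff hnodup).mp
          rw [hyj]
        omega
    | succ i ih =>
      rintro hi ⟨x, hx, hrx⟩
      have hi' : i < p.length := by omega
      have htl : p[i+1]'hi ∈ p.tail := htail_iff.mpr ⟨i, hi, rfl⟩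
      have hxz : (x, p[i+1]'hi) ∈ p.zip p.tail := by
        rcases hUmem.mp hx with ⟨-, hns⟩ | hz
        · exact absurd htl hns
        · exact hz
      have hx_eq : x = p[i]'hi' := by
        obtain ⟨j, hj, hxj, hyj⟩ := mem_zip_tail.mp hxz
        have hji : j + 1 = i + 1 := by
          apply (List.Nodup.getElem_inj_iff hnodup).mp
          rw [hyj]
        have : j = i := by omega
        subst this
        exact hxj.symm
      subst hx_eq
      rcases Relation.ReflTransGen.cases_tail hrx with heq | ⟨c, hc1, hc2⟩
      · have : i = i + 1 := (List.Nodup.getElem_inj_iff hnodup).mp heq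
        omega
      · exact ih hi' ⟨c, hc2,
          Relation.ReflTransGen.head (hUmem.mpr (Or.inr (harc_mem i hi))) hc1⟩
  have hCIn : ∀ w, w ∈ p → ∀ x, (x, w) ∈ U → Reach U w x → False := by
    intro w hwp x h1 h2
    obtain ⟨i, hi, rfl⟩ := List.mem_iff_getElem.mp hwp
    exact hnoCIn i hi ⟨x, h1, h2⟩
  have hsplitreach : ∀ {v u : V}, Reach U v u →
      Reach F v u ∨ ∃ w, w ∈ p ∧ Reach U v w ∧ Reach U w u := by
    intro v u h
    induction h with
    | refl => exact Or.inl Relation.ReflTransGen.refl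
    | @tail b c hb hbc ih =>
      by_cases hcp : c ∈ p
      · exact Or.inr ⟨c, hcp, Relation.ReflTransGen.tail hb hbc, Relation.ReflTransGen.refl⟩
      · by_cases hbp : b ∈ p
        · exact Or.inr ⟨b, hbp, hb, Relation.ReflTransGen.single hbc⟩
        · have hbcF : (b, c) ∈ F := by
            rcases hUmem.mp hbc with ⟨hf, -⟩ | hz
            · exact hf
            · exact absurd (List.mem_of_mem_tail (hzip_mem_tail hz)) hcp
          rcases ih with hf | ⟨w, hwp, h1, h2⟩
          · exact Or.inl (Relation.ReflTransGen.tail hf hbcF)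
          · exact Or.inr ⟨w, hwp, h1, Relation.ReflTransGen.tail h2 hbc⟩
  have hUnd : ∀ u v, (u,v) ∈ U → ¬ Reach U v u := by
    intro u v huv hvu
    by_cases hvp : v ∈ p
    · exact hCIn v hvp u huv hvu
    · by_cases hup : u ∈ p
      · rcases Relation.ReflTransGen.cases_tail hvu with heq | ⟨c, hc1, hc2⟩
        · exact hvp (heq ▸ hup)
        · exact hCIn u hup c hc2 (Relation.ReflTransGen.head huv hc1)
      · have huvF : (u,v) ∈ F := by
          rcases hUmem.mp huv with ⟨hf, -⟩ | hz
          · exact hf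
          · exact absurd (List.mem_of_mem_tail (hzip_mem_tail hz)) hvp
        rcases hsplitreach hvu with hf | ⟨w, hwp, h1, h2⟩
        · exact forest_no_dicycle ⟨hFdeg, hFund⟩ u v huvF hf
        · rcases Relation.ReflTransGen.cases_tail h1 with heq | ⟨c, hc1, hc2⟩
          · exact hvp (heq ▸ hwp)
          · exact hCIn w hwp c hc2
              (Relation.ReflTransGen.trans (Relation.ReflTransGen.tail h2 huv) hc1)
  have hUforest : IsArbForest U := ⟨hUdeg, undirAcyclic_of_noDicycle hUdeg hUnd⟩
  have hUsub : U ⊆ insert a G := by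
    rintro ⟨x, y⟩ hb
    rcases hUmem.mp hb with ⟨h1, -⟩ | h1
    · exact Finset.mem_insert_of_mem (hFsub h1)
    · obtain ⟨j, hj, hxj, hyj⟩ := mem_zip_tail.mp h1
      have hch := List.isChain_iff_getElem.mp hchain j (by omega)
      rw [← hxj, ← hyj]
      exact hch
  have hr'tail : r' ∈ p.tail := by
    refine htail_iff.mpr ⟨p.length - 2, by omega, ?_⟩
    have he : p.length - 2 + 1 = p.length - 1 := by omega
    simp only [he]
    exact hr'last (by omega)
  have hzipnd : (p.zip p.tail).Nodup := by
    apply List.Nodup.of_map Prod.snd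
    rw [List.map_snd_zip (by rw [List.length_tail]; omega)]
    exact hnodup.tail
  have hziplen : (p.zip p.tail).length = p.tail.length := by
    rw [List.length_zip]
    exact min_eq_right (by rw [List.length_tail]; omega)
  have hpacard : (pathArcs p).card = p.tail.length := by
    rw [pathArcs, List.toFinset_card_of_nodup hzipnd, hziplen]
  have hdisj : Disjoint (F.filter fun b => b.2 ∉ p.tail) (pathArcs p) := by
    rw [Finset.disjoint_left]
    rintro ⟨x, y⟩ h1 h2
    rw [Finset.mem_filter] at h1
    rw [pathArcs, List.mem_toFinset] at h2
    exact h1.2 (hzip_mem_tail h2)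
  have hUcard : U.card = (F.filter fun b => b.2 ∉ p.tail).card + p.tail.length := by
    rw [hUdef, update, Finset.card_union_of_disjoint hdisj, hpacard]
  have hremove : (F.filter fun b => b.2 ∈ p.tail).card + 1 ≤ p.tail.length := by
    have hmapsto : ∀ b ∈ F.filter (fun b => b.2 ∈ p.tail), b.2 ∈ p.tail.toFinset.erase r' := by
      rintro ⟨x, y⟩ hb
      rw [Finset.mem_filter] at hb
      simp only at hb
      refine Finset.mem_erase.mpr ⟨?_, List.mem_toFinset.mpr hb.2⟩
      rintro rfl
      exact not_mem_of_isRoot hr' hb.1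
    have hinj : Set.InjOn (fun b : V × V => b.2) (F.filter (fun b => b.2 ∈ p.tail)) := by
      rintro ⟨x, y⟩ hxy ⟨x', y'⟩ hxy' h
      simp only at h
      subst h
      rw [Finset.mem_coe, Finset.mem_filter] at hxy hxy'
      rw [inDeg_unique hFdeg hxy.1 hxy'.1]
    have hcard := Finset.card_le_card_of_injOn _ hmapsto hinj
    have h1 : (p.tail.toFinset.erase r').card = p.tail.toFinset.card - 1 :=
      Finset.card_erase_of_mem (List.mem_toFinset.mpr hr'tail)
    rw [List.toFinset_card_of_nodup hnodup.tail] at h1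
    have hpos : 0 < p.tail.length := List.length_pos_iff.mpr (List.ne_nil_of_mem hr'tail)
    omega
  have hUge : F.card + 1 ≤ U.card := by
    have hsum := Finset.card_filter_add_card_filter_not
      (s := F) (p := fun b : V × V => b.2 ∈ p.tail)
    omega
  have hmax : ∀ F' ⊆ insert a G, IsArbForest F' → F'.card ≤ U.card := by
    intro F' hsub' hforest'
    have h1 : F'.erase a ⊆ G := by
      intro b hb
      rcases Finset.mem_insert.mp (hsub' (Finset.erase_subset _ _ hb)) with h | h
      · exact absurd h (Finset.ne_of_mem_erase hb)
      · exact h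
    have h2 := hFmax _ h1 (isArbForest_subset (Finset.erase_subset _ _) hforest')
    have h3 : F'.card ≤ (F'.erase a).card + 1 := by
      have h4 := Finset.card_insert_le a (F'.erase a)
      have h5 : F' ⊆ insert a (F'.erase a) :=
        Finset.subset_insert_iff.mpr (Finset.Subset.refl _)
      have h6 := Finset.card_le_card h5
      omega
    omega
  refine ⟨⟨hUsub, hUforest, hmax⟩, ?_⟩
  intro v
  constructor
  · intro hv
    have hvt : v ∉ p.tail := by
      intro hvt
      obtain ⟨i, hi, hiv⟩ := htail_iff.mp hvt
      exact not_mem_of_isRoot hv (hUmem.mpr (Or.inr (hiv ▸ harc_mem i hi)))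
    refine ⟨?_, fun hvr' => hvt (hvr' ▸ hr'tail)⟩
    rw [IsRoot, inDeg, Finset.card_eq_zero, Finset.filter_eq_empty_iff]
    rintro ⟨x, y⟩ hb hby
    simp only at hby
    subst hby
    exact not_mem_of_isRoot hv ((hU_nontail hvt).mpr hb)
  · rintro ⟨hvF, hvr'⟩
    have hvt : v ∉ p.tail := by
      intro hvt
      obtain ⟨j, hj, hjv⟩ := htail_iff.mp hvt
      have hjlen : j + 1 < p₁.length + p₂.length := by
        rw [hsplit, List.length_append] at hj; exact hj
      by_cases hcase : j + 1 < p₁.length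
      · have hz1 : (p₁[j]'(by omega), p₁[j+1]'hcase) ∈ p₁.zip p₁.tail :=
          mem_zip_tail.mpr ⟨j, hcase, rfl, rfl⟩
        have hF1 := (hp₁ _ (List.mem_toFinset.mpr hz1)).1
        have he : p[j+1]'hj = p₁[j+1]'hcase := getElem_append_left' hsplit hcase hj
        rw [← he, hjv] at hF1
        exact not_mem_of_isRoot hvF hF1
      · have hvp₂ : v ∈ p₂ := by
          have hj1 : p₁.length ≤ j + 1 := by omega
          rw [← hjv, getElem_append_right' hsplit hj1 hj]
          exact List.getElem_mem _
        exact hvr' (root_unique hFdeg hr' hvF (hp₂ v hvp₂)).symm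
    rw [IsRoot, inDeg, Finset.card_eq_zero, Finset.filter_eq_empty_iff]
    rintro ⟨x, y⟩ hb hby
    simp only at hby
    subst hby
    exact not_mem_of_isRoot hvF ((hU_nontail hvt).mp hb)
end

section
/- For every even integer n ≥ 4 there is a fixed sequence of O(n) arc insertions on an n-vertex digraph (the bidirected path construction) such that every sequence of maximum arborescence forests F^(1), ..., F^(m) maintained after each insertion has total recourse Σ_i |F^(i) \ F^(i+1)| = Ω(n^2). -/
open Finset

variable {V : Type*} [Fintype V] [DecidableEq V]

namespace Stmt7Aux

/-- Parity of the number of crossing darts of a walk. -/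
lemma cross_parity {V : Type*} {G : SimpleGraph V} (S : V → Bool) :
    ∀ {u v : V} (p : G.Walk u v),
      (p.darts.filter fun d => S d.fst != S d.snd).length % 2
        = if S u = S v then 0 else 1 := by
  intro u v p
  induction p with
  | nil => simp
  | @cons u w v h q ih =>
    rw [SimpleGraph.Walk.darts_cons, List.filter_cons]
    by_cases h1 : S u = S w
    · have hb : (S u != S w) = false := by simp [h1]
      rw [hb]
      simp only [Bool.false_eq_true, if_false]
      rw [ih, h1]
    · have hb : (S u != S w) = true := by simp [bne_iff_ne, h1]
      rw [hb]
      simp only [if_true]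
      rw [List.length_cons]
      have hne : S u = S v ↔ ¬ (S w = S v) := by
        cases hSu : S u <;> cases hSw : S w <;> cases hSv : S v <;> simp_all
      have ih' := ih
      by_cases h2 : S w = S v
      · rw [if_pos h2] at ih'
        rw [if_neg (by rw [hne]; exact fun hh => hh h2)]
        omega
      · rw [if_neg h2] at ih'
        rw [if_pos (hne.mpr h2)]
        omega

/-- A graph on `Fin n` graded by `val` (all edges between consecutive levels)
is acyclic. -/
lemma gradedAcyclic {n : ℕ} {G : SimpleGraph (Fin n)}
    (hg : ∀ u v : Fin n, G.Adj u v → (u.val + 1 = v.val ∨ v.val + 1 = u.val)) :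
    G.IsAcyclic := by
  intro v c hc
  have h3 := hc.three_le_length
  have hdne : c.darts ≠ [] := by
    intro h
    have := c.length_darts
    rw [h] at this
    simp at this
    omega
  obtain ⟨d, hd⟩ := List.exists_mem_of_ne_nil _ hdne
  obtain ⟨j, hj⟩ : ∃ j, (d.fst.val = j ∧ d.snd.val = j+1) ∨
      (d.fst.val = j+1 ∧ d.snd.val = j) := by
    rcases hg _ _ d.adj with h | h
    · exact ⟨d.fst.val, Or.inl ⟨rfl, h.symm⟩⟩
    · exact ⟨d.snd.val, Or.inr ⟨h.symm, rfl⟩⟩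
  set S : Fin n → Bool := fun x => decide (x.val ≤ j) with hS
  have heq : ∀ x y : Fin n, x.val = y.val → x = y := fun x y h => Fin.ext h
  have hcross : ∀ d' : G.Dart, (S d'.fst != S d'.snd) = true →
      d'.edge = d.edge := by
    intro d' hx
    have h1 := hg _ _ d'.adj
    have hx' : ¬ (d'.fst.val ≤ j ↔ d'.snd.val ≤ j) := by
      simp only [hS, bne_iff_ne, ne_eq, decide_eq_decide] at hx
      exact hx
    have h5 : (d'.fst.val = j ∧ d'.snd.val = j+1) ∨
        (d'.fst.val = j+1 ∧ d'.snd.val = j) := by omega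
    have key : (d'.fst = d.fst ∧ d'.snd = d.snd) ∨
               (d'.fst = d.snd ∧ d'.snd = d.fst) := by
      rcases h5 with ⟨ha, hb⟩ | ⟨ha, hb⟩ <;> rcases hj with ⟨hc1, hc2⟩ | ⟨hc1, hc2⟩
      · exact Or.inl ⟨heq _ _ (by omega), heq _ _ (by omega)⟩
      · exact Or.inr ⟨heq _ _ (by omega), heq _ _ (by omega)⟩
      · exact Or.inr ⟨heq _ _ (by omega), heq _ _ (by omega)⟩
      · exact Or.inl ⟨heq _ _ (by omega), heq _ _ (by omega)⟩
    rw [SimpleGraph.Dart.edge, SimpleGraph.Dart.edge]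
    rcases key with ⟨h1', h2'⟩ | ⟨h1', h2'⟩
    · rw [Prod.ext_iff.mpr ⟨h1', h2'⟩]
    · have : d'.toProd = (d.toProd.2, d.toProd.1) := Prod.ext_iff.mpr ⟨h1', h2'⟩
      rw [this]
      exact Sym2.eq_swap
  set F := c.darts.filter (fun d' => S d'.fst != S d'.snd) with hF
  have hpar := cross_parity S c
  rw [if_pos rfl] at hpar
  have hdF : d ∈ F := by
    rw [hF, List.mem_filter]
    refine ⟨hd, ?_⟩
    simp only [hS, bne_iff_ne, ne_eq, decide_eq_decide]
    omega
  have hnodup : (c.darts.map SimpleGraph.Dart.edge).Nodup := by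
    rw [← SimpleGraph.Walk.edges]
    exact hc.isTrail.edges_nodup
  have hsub : (F.map SimpleGraph.Dart.edge).Nodup :=
    (List.Sublist.map _ List.filter_sublist).nodup hnodup
  have hlen : F.length ≤ 1 := by
    rcases hFcases : F with _ | ⟨a, _ | ⟨b, t⟩⟩
    · simp
    · simp
    · exfalso
      have ha : a ∈ F := by rw [hFcases]; simp
      have hb : b ∈ F := by rw [hFcases]; simp
      rw [hF] at ha hb
      have ha' := hcross a (List.mem_filter.mp ha).2
      have hb' := hcross b (List.mem_filter.mp hb).2
      rw [hFcases] at hsub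
      simp only [List.map_cons, List.nodup_cons, List.mem_cons, List.mem_map] at hsub
      exact hsub.1 (Or.inl (ha'.trans hb'.symm))
  have hge : 1 ≤ F.length := List.length_pos_iff.mpr (List.ne_nil_of_mem hdF)
  have hpar' : F.length % 2 = 0 := hpar
  have h0 : F.length = 0 := by omega
  rw [List.length_eq_zero_iff] at h0
  rw [h0] at hdF
  exact absurd hdF (by simp)

def ev (n : ℕ) [NeZero n] (j : ℕ) : Fin n :=
  ⟨j % n, Nat.mod_lt _ (Nat.pos_of_ne_zero (NeZero.ne n))⟩

lemma ev_val {n : ℕ} [NeZero n] {j : ℕ} (h : j < n) : (ev n j).val = j :=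
  Nat.mod_eq_of_lt h

lemma pair_eq_iff {n : ℕ} [NeZero n] (p : Fin n × Fin n) {x y : ℕ} (hx : x < n) (hy : y < n) :
    p = (ev n x, ev n y) ↔ (p.1.val = x ∧ p.2.val = y) := by
  rw [Prod.ext_iff, Fin.ext_iff, Fin.ext_iff, ev_val hx, ev_val hy]

/-- The bidirected path on positions `[l, r]`. -/
def Gb (n l r : ℕ) : Finset (Fin n × Fin n) :=
  univ.filter fun p => (p.1.val + 1 = p.2.val ∨ p.2.val + 1 = p.1.val) ∧
    l ≤ p.1.val ∧ l ≤ p.2.val ∧ p.1.val ≤ r ∧ p.2.val ≤ r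

/-- Bidirected path minus the rightward arc at the right end. -/
def Glft (n l r : ℕ) [NeZero n] : Finset (Fin n × Fin n) :=
  (Gb n l r).erase (ev n (r-1), ev n r)

/-- Bidirected path minus the leftward arc at the left end. -/
def Grgt (n l r : ℕ) [NeZero n] : Finset (Fin n × Fin n) :=
  (Gb n l r).erase (ev n (l+1), ev n l)

/-- The all-leftward forest on `[l, r]`. -/
def FL (n l r : ℕ) : Finset (Fin n × Fin n) :=
  univ.filter fun p => p.2.val + 1 = p.1.val ∧ l ≤ p.2.val ∧ p.1.val ≤ r

/-- The all-rightward forest on `[l, r]`. -/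
def FR (n l r : ℕ) : Finset (Fin n × Fin n) :=
  univ.filter fun p => p.1.val + 1 = p.2.val ∧ l ≤ p.1.val ∧ p.2.val ≤ r

lemma mem_Gb {n l r : ℕ} (p : Fin n × Fin n) :
    p ∈ Gb n l r ↔ (p.1.val + 1 = p.2.val ∨ p.2.val + 1 = p.1.val) ∧
      l ≤ p.1.val ∧ l ≤ p.2.val ∧ p.1.val ≤ r ∧ p.2.val ≤ r := by
  simp [Gb]

lemma mem_Glft {n l r : ℕ} [NeZero n] (hlr : l < r) (hr : r < n) (p : Fin n × Fin n) :
    p ∈ Glft n l r ↔ ¬(p.1.val = r - 1 ∧ p.2.val = r) ∧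
      ((p.1.val + 1 = p.2.val ∨ p.2.val + 1 = p.1.val) ∧
      l ≤ p.1.val ∧ l ≤ p.2.val ∧ p.1.val ≤ r ∧ p.2.val ≤ r) := by
  rw [Glft, mem_erase, mem_Gb, Ne, pair_eq_iff p (by omega) hr]

lemma mem_Grgt {n l r : ℕ} [NeZero n] (hlr : l < r) (hr : r < n) (p : Fin n × Fin n) :
    p ∈ Grgt n l r ↔ ¬(p.1.val = l + 1 ∧ p.2.val = l) ∧
      ((p.1.val + 1 = p.2.val ∨ p.2.val + 1 = p.1.val) ∧
      l ≤ p.1.val ∧ l ≤ p.2.val ∧ p.1.val ≤ r ∧ p.2.val ≤ r) := by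
  rw [Grgt, mem_erase, mem_Gb, Ne, pair_eq_iff p (by omega) (by omega)]

lemma mem_FL {n l r : ℕ} (p : Fin n × Fin n) :
    p ∈ FL n l r ↔ p.2.val + 1 = p.1.val ∧ l ≤ p.2.val ∧ p.1.val ≤ r := by
  simp [FL]

lemma mem_FR {n l r : ℕ} (p : Fin n × Fin n) :
    p ∈ FR n l r ↔ p.1.val + 1 = p.2.val ∧ l ≤ p.1.val ∧ p.2.val ≤ r := by
  simp [FR]

lemma card_FL {n l r : ℕ} [NeZero n] (hr : r < n) : (FL n l r).card = r - l := by
  rw [← Nat.card_Ico l r]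
  apply Finset.card_nbij' (fun p => p.2.val) (fun j => (ev n (j+1), ev n j))
  · intro p hp
    rw [Finset.mem_coe, mem_FL] at hp
    have := p.1.isLt
    rw [Finset.mem_coe, mem_Ico]
    beta_reduce
    omega
  · intro j hj
    rw [Finset.mem_coe, mem_Ico] at hj
    rw [Finset.mem_coe, mem_FL, ev_val (by omega), ev_val (by omega)]
    omega
  · intro p hp
    rw [Finset.mem_coe, mem_FL] at hp
    beta_reduce
    exact ((pair_eq_iff p (by omega) (by omega)).mpr ⟨by omega, rfl⟩).symm
  · intro j hj
    rw [Finset.mem_coe, mem_Ico] at hj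
    exact ev_val (by omega)

lemma card_FR {n l r : ℕ} [NeZero n] (hr : r < n) : (FR n l r).card = r - l := by
  rw [← Nat.card_Ico l r]
  apply Finset.card_nbij' (fun p => p.1.val) (fun j => (ev n j, ev n (j+1)))
  · intro p hp
    rw [Finset.mem_coe, mem_FR] at hp
    have := p.2.isLt
    rw [Finset.mem_coe, mem_Ico]
    beta_reduce
    omega
  · intro j hj
    rw [Finset.mem_coe, mem_Ico] at hj
    rw [Finset.mem_coe, mem_FR, ev_val (by omega), ev_val (by omega)]
    omega
  · intro p hp
    rw [Finset.mem_coe, mem_FR] at hp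
    beta_reduce
    exact ((pair_eq_iff p (by omega) (by omega)).mpr ⟨rfl, by omega⟩).symm
  · intro j hj
    rw [Finset.mem_coe, mem_Ico] at hj
    exact ev_val (by omega)

lemma FL_isArbForest {n l r : ℕ} : IsArbForest (FL n l r) := by
  refine ⟨?_, ?_, ?_⟩
  · intro v
    rw [inDeg, Finset.card_le_one]
    intro a ha b hb
    rw [mem_filter, mem_FL] at ha hb
    have h2 : a.2 = b.2 := ha.2.trans hb.2.symm
    have h2v : a.2.val = b.2.val := congrArg Fin.val h2
    have h1 : a.1 = b.1 := Fin.ext (by have := ha.1.1; have := hb.1.1; omega)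
    exact Prod.ext_iff.mpr ⟨h1, h2⟩
  · intro a ha
    rw [mem_FL] at ha
    constructor
    · intro h
      have : a.1.val = a.2.val := congrArg Fin.val h
      omega
    · intro h
      rw [mem_FL] at h
      simp only at h
      omega
  · apply gradedAcyclic
    intro u v huv
    rw [SimpleGraph.fromRel_adj] at huv
    rcases huv.2 with h | h <;> rw [mem_FL] at h <;> simp only at h <;> omega


lemma FR_isArbForest {n l r : ℕ} : IsArbForest (FR n l r) := by
  refine ⟨?_, ?_, ?_⟩
  · intro v
    rw [inDeg, Finset.card_le_one]
    intro a ha b hb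
    rw [mem_filter, mem_FR] at ha hb
    have h2 : a.2 = b.2 := ha.2.trans hb.2.symm
    have h2v : a.2.val = b.2.val := congrArg Fin.val h2
    have h1 : a.1 = b.1 := Fin.ext (by have := ha.1.1; have := hb.1.1; omega)
    exact Prod.ext_iff.mpr ⟨h1, h2⟩
  · intro a ha
    rw [mem_FR] at ha
    constructor
    · intro h
      have : a.1.val = a.2.val := congrArg Fin.val h
      omega
    · intro h
      rw [mem_FR] at h
      simp only at h
      omega
  · apply gradedAcyclic
    intro u v huv
    rw [SimpleGraph.fromRel_adj] at huv
    rcases huv.2 with h | h <;> rw [mem_FR] at h <;> simp only at h <;> omega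

lemma card_le_of_sub_Gb {n l r : ℕ} (F : Finset (Fin n × Fin n))
    (hsub : ∀ p ∈ F, p ∈ Gb n l r) (hanti : ∀ p ∈ F, (p.2, p.1) ∉ F) :
    F.card ≤ r - l := by
  rw [← Nat.card_Ico l r]
  apply Finset.card_le_card_of_injOn (fun p => min p.1.val p.2.val)
  · intro p hp
    have h := (mem_Gb p).mp (hsub p hp)
    rw [Finset.mem_coe, mem_Ico]
    beta_reduce
    omega
  · intro p hp q hq hpq
    simp only [Finset.mem_coe] at hp hq
    have h1 := (mem_Gb p).mp (hsub p hp)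
    have h2 := (mem_Gb q).mp (hsub q hq)
    simp only at hpq
    by_cases hd : p.1.val = q.1.val
    · have e1 : p.1 = q.1 := Fin.ext hd
      have e2 : p.2 = q.2 := Fin.ext (by omega)
      exact Prod.ext_iff.mpr ⟨e1, e2⟩
    · exfalso
      have e1 : q.1 = p.2 := Fin.ext (by omega)
      have e2 : q.2 = p.1 := Fin.ext (by omega)
      have : q = (p.2, p.1) := Prod.ext_iff.mpr ⟨e1, e2⟩
      rw [this] at hq
      exact hanti p hp hq

/-- If a forest inside the bidirected path has full cardinality then every
edge is present in exactly one orientation. -/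
lemma full_orientation {n l r : ℕ} [NeZero n] (hr : r < n)
    (F : Finset (Fin n × Fin n))
    (hsub : ∀ p ∈ F, p ∈ Gb n l r) (hanti : ∀ p ∈ F, (p.2, p.1) ∉ F)
    (hcard : F.card = r - l) :
    ∀ j, l ≤ j → j < r → (ev n (j+1), ev n j) ∈ F ∨ (ev n j, ev n (j+1)) ∈ F := by
  intro j hjl hjr
  have hmaps : ∀ p ∈ F, (fun p : Fin n × Fin n => min p.1.val p.2.val) p ∈ Ico l r := by
    intro p hp
    have h := (mem_Gb p).mp (hsub p hp)
    show min p.1.val p.2.val ∈ Ico l r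
    rw [mem_Ico]
    omega
  have hinj : Set.InjOn (fun p : Fin n × Fin n => min p.1.val p.2.val) F := by
    intro p hp q hq hpq
    simp only [Finset.mem_coe] at hp hq
    have h1 := (mem_Gb p).mp (hsub p hp)
    have h2 := (mem_Gb q).mp (hsub q hq)
    have hpq' : min p.1.val p.2.val = min q.1.val q.2.val := hpq
    by_cases hd : p.1.val = q.1.val
    · exact Prod.ext_iff.mpr ⟨Fin.ext hd, Fin.ext (by omega)⟩
    · exfalso
      have e1 : q.1 = p.2 := Fin.ext (by omega)
      have e2 : q.2 = p.1 := Fin.ext (by omega)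
      have : q = (p.2, p.1) := Prod.ext_iff.mpr ⟨e1, e2⟩
      rw [this] at hq
      exact hanti p hp hq
  have himg : F.image (fun p : Fin n × Fin n => min p.1.val p.2.val) = Ico l r := by
    apply Finset.eq_of_subset_of_card_le
    · intro x hx
      rw [Finset.mem_image] at hx
      obtain ⟨p, hp, rfl⟩ := hx
      exact hmaps p hp
    · rw [Finset.card_image_of_injOn hinj, hcard, Nat.card_Ico]
  have hj : j ∈ F.image (fun p : Fin n × Fin n => min p.1.val p.2.val) := by
    rw [himg, mem_Ico]; exact ⟨hjl, hjr⟩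
  rw [Finset.mem_image] at hj
  obtain ⟨p, hp, hpj⟩ := hj
  have h := (mem_Gb p).mp (hsub p hp)
  have hpj' : min p.1.val p.2.val = j := hpj
  by_cases hd : p.1.val = j
  · right
    have : p = (ev n j, ev n (j+1)) :=
      (pair_eq_iff p (by omega) (by omega)).mpr ⟨hd, by omega⟩
    rwa [← this]
  · left
    have : p = (ev n (j+1), ev n j) :=
      (pair_eq_iff p (by omega) (by omega)).mpr ⟨by omega, by omega⟩
    rwa [← this]

lemma indeg_clash {n : ℕ} {F : Finset (Fin n × Fin n)} (hdeg : ∀ v, inDeg F v ≤ 1)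
    {p q : Fin n × Fin n} (hp : p ∈ F) (hq : q ∈ F) (h2 : p.2 = q.2) (h1 : p.1 ≠ q.1) :
    False := by
  have := hdeg p.2
  rw [inDeg, Finset.card_le_one] at this
  have hp' : p ∈ F.filter (fun a => a.2 = p.2) := by rw [mem_filter]; exact ⟨hp, rfl⟩
  have hq' : q ∈ F.filter (fun a => a.2 = p.2) := by rw [mem_filter]; exact ⟨hq, h2.symm⟩
  exact h1 (congrArg Prod.fst (this p hp' q hq'))

/-- Uniqueness of the maximum arborescence forest in `Glft`. -/
lemma maxforest_Glft {n l r : ℕ} [NeZero n] (hlr : l < r) (hr : r < n)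
    (F : Finset (Fin n × Fin n)) (hF : IsMaxArbForest (Glft n l r) F) : F = FL n l r := by
  obtain ⟨hsub, ⟨hdeg, hua⟩, hmax⟩ := hF
  have hGsub : ∀ p ∈ F, p ∈ Gb n l r := fun p hp => Finset.erase_subset _ _ (hsub hp)
  have hanti : ∀ p ∈ F, (p.2, p.1) ∉ F := fun p hp => (hua.1 p hp).2
  have hFLsub : FL n l r ⊆ Glft n l r := by
    intro p hp
    rw [mem_FL] at hp
    rw [mem_Glft hlr hr]
    have := p.2.isLt
    omega
  have hcard_ge : r - l ≤ F.card := by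
    have := hmax (FL n l r) hFLsub FL_isArbForest
    rwa [card_FL hr] at this
  have hcard : F.card = r - l :=
    le_antisymm (card_le_of_sub_Gb F hGsub hanti) hcard_ge
  have horient := full_orientation hr F hGsub hanti hcard
  have hforced : ∀ d j, l ≤ j → j < r → r - 1 - j = d → (ev n (j+1), ev n j) ∈ F := by
    intro d
    induction d with
    | zero =>
      intro j hjl hjr hj
      rcases horient j hjl hjr with h | h
      · exact h
      · exfalso
        have hmem := hsub h
        rw [mem_Glft hlr hr] at hmem
        rw [ev_val (by omega), ev_val (by omega)] at hmem
        omega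
    | succ d ih =>
      intro j hjl hjr hj
      have ha1 : l ≤ j + 1 := by omega
      have ha2 : j + 1 < r := by omega
      have ha3 : r - 1 - (j + 1) = d := by omega
      have hup : (ev n (j+1+1), ev n (j+1)) ∈ F := ih (j+1) ha1 ha2 ha3
      rcases horient j hjl hjr with h | h
      · exact h
      · exfalso
        apply indeg_clash hdeg h hup rfl
        intro hcon
        have hv := congrArg Fin.val hcon
        rw [ev_val (show j < n by omega), ev_val (show j+1+1 < n by omega)] at hv
        omega
  have hFLF : FL n l r ⊆ F := by
    intro p hp
    rw [mem_FL] at hp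
    have hp2 : p = (ev n (p.2.val + 1), ev n p.2.val) :=
      (pair_eq_iff p (by omega) (by omega)).mpr ⟨by omega, rfl⟩
    rw [hp2]
    exact hforced (r - 1 - p.2.val) p.2.val (by omega) (by omega) (by omega)
  exact ((Finset.eq_of_subset_of_card_le hFLF (by rw [hcard, card_FL hr])).symm)

/-- Uniqueness of the maximum arborescence forest in `Grgt`. -/
lemma maxforest_Grgt {n l r : ℕ} [NeZero n] (hlr : l < r) (hr : r < n)
    (F : Finset (Fin n × Fin n)) (hF : IsMaxArbForest (Grgt n l r) F) : F = FR n l r := by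
  obtain ⟨hsub, ⟨hdeg, hua⟩, hmax⟩ := hF
  have hGsub : ∀ p ∈ F, p ∈ Gb n l r := fun p hp => Finset.erase_subset _ _ (hsub hp)
  have hanti : ∀ p ∈ F, (p.2, p.1) ∉ F := fun p hp => (hua.1 p hp).2
  have hFRsub : FR n l r ⊆ Grgt n l r := by
    intro p hp
    rw [mem_FR] at hp
    rw [mem_Grgt hlr hr]
    have := p.1.isLt
    omega
  have hcard_ge : r - l ≤ F.card := by
    have := hmax (FR n l r) hFRsub FR_isArbForest
    rwa [card_FR hr] at this
  have hcard : F.card = r - l :=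
    le_antisymm (card_le_of_sub_Gb F hGsub hanti) hcard_ge
  have horient := full_orientation hr F hGsub hanti hcard
  have hforced : ∀ d j, l ≤ j → j < r → j - l = d → (ev n j, ev n (j+1)) ∈ F := by
    intro d
    induction d with
    | zero =>
      intro j hjl hjr hj
      rcases horient j hjl hjr with h | h
      · exfalso
        have hmem := hsub h
        rw [mem_Grgt hlr hr] at hmem
        rw [ev_val (by omega), ev_val (by omega)] at hmem
        omega
      · exact h
    | succ d ih =>
      intro j hjl hjr hj
      have hprev : (ev n (j-1), ev n (j-1+1)) ∈ F :=
        ih (j-1) (by omega) (by omega) (by omega)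
      have hprev' : (ev n (j-1), ev n j) ∈ F := by
        rw [show j - 1 + 1 = j by omega] at hprev
        exact hprev
      rcases horient j hjl hjr with h | h
      · exfalso
        apply indeg_clash hdeg h hprev' rfl
        intro hcon
        have hv := congrArg Fin.val hcon
        rw [ev_val (show j+1 < n by omega), ev_val (show j-1 < n by omega)] at hv
        omega
      · exact h
  have hFRF : FR n l r ⊆ F := by
    intro p hp
    rw [mem_FR] at hp
    have hp2 : p = (ev n p.1.val, ev n (p.1.val + 1)) :=
      (pair_eq_iff p (by omega) (by omega)).mpr ⟨rfl, by omega⟩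
    rw [hp2]
    exact hforced (p.1.val - l) p.1.val (by omega) (by omega) (by omega)
  exact ((Finset.eq_of_subset_of_card_le hFRF (by rw [hcard, card_FR hr])).symm)


/-- Left end of the path after step `t`. -/
def Lp (n t : ℕ) : ℕ := n/2 - 1 - (t+1)/2
/-- Right end of the path after step `t`. -/
def Rp (n t : ℕ) : ℕ := n/2 + t/2

/-- The adversarial arc sequence. -/
def aseq (n : ℕ) [NeZero n] : ℕ → Fin n × Fin n := fun i =>
  if i ≤ 1 then (ev n (n/2), ev n (n/2 - 1))
  else if i % 2 = 0 then
    (if (i/2) % 2 = 1 then (ev n (Rp n (i/2) - 1), ev n (Rp n (i/2)))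
     else (ev n (Lp n (i/2) + 1), ev n (Lp n (i/2))))
  else
    (if (i/2) % 2 = 1 then (ev n (Lp n (i/2)), ev n (Lp n (i/2) + 1))
     else (ev n (Rp n (i/2)), ev n (Rp n (i/2) - 1)))

/-- The digraph after step `t`. -/
def Gstep (n t : ℕ) [NeZero n] : Finset (Fin n × Fin n) :=
  if t % 2 = 0 then Glft n (Lp n t) (Rp n t) else Grgt n (Lp n t) (Rp n t)

/-- The unique maximum arborescence forest after step `t`. -/
def Fstep (n t : ℕ) : Finset (Fin n × Fin n) :=
  if t % 2 = 0 then FL n (Lp n t) (Rp n t) else FR n (Lp n t) (Rp n t)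

lemma aseq_at_even {n : ℕ} [NeZero n] (t : ℕ) :
    aseq n (2*t+2) =
      if (t+1) % 2 = 1 then (ev n (Rp n (t+1) - 1), ev n (Rp n (t+1)))
      else (ev n (Lp n (t+1) + 1), ev n (Lp n (t+1))) := by
  simp only [aseq]
  rw [if_neg (by omega), if_pos (by omega), show (2*t+2)/2 = t+1 by omega]

lemma aseq_at_odd {n : ℕ} [NeZero n] (t : ℕ) :
    aseq n (2*t+3) =
      if (t+1) % 2 = 1 then (ev n (Lp n (t+1)), ev n (Lp n (t+1) + 1))
      else (ev n (Rp n (t+1)), ev n (Rp n (t+1) - 1)) := by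
  simp only [aseq]
  rw [if_neg (by omega), if_neg (by omega), show (2*t+3)/2 = t+1 by omega]

set_option maxHeartbeats 2000000 in
lemma image_aseq {n : ℕ} [NeZero n] (hn4 : 4 ≤ n) (hn2 : n % 2 = 0) :
    ∀ t, t ≤ n - 2 → (Icc 1 (2*t+1)).image (aseq n) = Gstep n t := by
  intro t
  induction t with
  | zero =>
    intro _
    have h1 : (2*0+1) = 1 := rfl
    rw [h1, Finset.Icc_self, Finset.image_singleton]
    have ha : aseq n 1 = (ev n (n/2), ev n (n/2 - 1)) := by
      simp only [aseq]
      rw [if_pos le_rfl]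
    rw [ha, Gstep, if_pos (by omega)]
    have hL : Lp n 0 = n/2 - 1 - 1/2 := rfl
    have hR : Rp n 0 = n/2 + 0/2 := rfl
    ext p
    rw [Finset.mem_singleton,
      mem_Glft (show Lp n 0 < Rp n 0 by omega) (show Rp n 0 < n by omega) p,
      pair_eq_iff p (show n/2 < n by omega) (show n/2 - 1 < n by omega)]
    omega
  | succ t ih =>
    intro ht
    have hIcc : Icc 1 (2*(t+1)+1) = insert (2*t+3) (insert (2*t+2) (Icc 1 (2*t+1))) := by
      ext i
      simp only [mem_Icc, mem_insert]
      omega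
    rw [hIcc, Finset.image_insert, Finset.image_insert, ih (by omega)]
    rw [aseq_at_odd t, aseq_at_even t]
    have hLt : Lp n t = n/2 - 1 - (t+1)/2 := rfl
    have hRt : Rp n t = n/2 + t/2 := rfl
    have hLt1 : Lp n (t+1) = n/2 - 1 - (t+1+1)/2 := rfl
    have hRt1 : Rp n (t+1) = n/2 + (t+1)/2 := rfl
    by_cases hp : t % 2 = 0
    · rw [if_pos (by omega), if_pos (by omega)]
      rw [Gstep, if_pos hp, Gstep, if_neg (by omega)]
      ext p
      simp only [Finset.mem_insert]
      rw [mem_Glft (show Lp n t < Rp n t by omega) (show Rp n t < n by omega) p,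
        mem_Grgt (show Lp n (t+1) < Rp n (t+1) by omega) (show Rp n (t+1) < n by omega) p,
        pair_eq_iff p (show Lp n (t+1) < n by omega) (show Lp n (t+1) + 1 < n by omega),
        pair_eq_iff p (show Rp n (t+1) - 1 < n by omega) (show Rp n (t+1) < n by omega)]
      omega
    · rw [if_neg (by omega), if_neg (by omega)]
      rw [Gstep, if_neg hp, Gstep, if_pos (by omega)]
      ext p
      simp only [Finset.mem_insert]
      rw [mem_Grgt (show Lp n t < Rp n t by omega) (show Rp n t < n by omega) p,
        mem_Glft (show Lp n (t+1) < Rp n (t+1) by omega) (show Rp n (t+1) < n by omega) p,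
        pair_eq_iff p (show Rp n (t+1) < n by omega) (show Rp n (t+1) - 1 < n by omega),
        pair_eq_iff p (show Lp n (t+1) + 1 < n by omega) (show Lp n (t+1) < n by omega)]
      omega


lemma Fstep_card {n t : ℕ} [NeZero n] (hn4 : 4 ≤ n) (hn2 : n % 2 = 0) (ht : t ≤ n - 2) :
    (Fstep n t).card = t + 1 := by
  have hLt : Lp n t = n/2 - 1 - (t+1)/2 := rfl
  have hRt : Rp n t = n/2 + t/2 := rfl
  rw [Fstep]
  by_cases hp : t % 2 = 0
  · rw [if_pos hp, card_FL (show Rp n t < n by omega)]; omega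
  · rw [if_neg hp, card_FR (show Rp n t < n by omega)]; omega

lemma Fstep_disjoint {n t : ℕ} (p : Fin n × Fin n)
    (hp : p ∈ Fstep n t) (hq : p ∈ Fstep n (t+1)) : False := by
  rw [Fstep] at hp hq
  by_cases h : t % 2 = 0
  · rw [if_pos h] at hp
    rw [if_neg (by omega)] at hq
    rw [mem_FL] at hp
    rw [mem_FR] at hq
    omega
  · rw [if_neg h] at hp
    rw [if_pos (by omega)] at hq
    rw [mem_FR] at hp
    rw [mem_FL] at hq
    omega

lemma maxforest_Gstep {n t : ℕ} [NeZero n] (hn4 : 4 ≤ n) (ht : t ≤ n - 2)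
    (F : Finset (Fin n × Fin n)) (hF : IsMaxArbForest (Gstep n t) F) : F = Fstep n t := by
  have hLt : Lp n t = n/2 - 1 - (t+1)/2 := rfl
  have hRt : Rp n t = n/2 + t/2 := rfl
  rw [Gstep] at hF
  rw [Fstep]
  by_cases hp : t % 2 = 0
  · rw [if_pos hp] at hF ⊢
    exact maxforest_Glft (by omega) (by omega) F hF
  · rw [if_neg hp] at hF ⊢
    exact maxforest_Grgt (by omega) (by omega) F hF

lemma tri_card {α : Type*} [DecidableEq α] (A B C : Finset α) :
    (A \ C).card ≤ (A \ B).card + (B \ C).card := by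
  refine le_trans (Finset.card_le_card ?_) (Finset.card_union_le _ _)
  intro x hx
  rw [Finset.mem_sdiff] at hx
  rw [Finset.mem_union, Finset.mem_sdiff, Finset.mem_sdiff]
  by_cases h : x ∈ B
  · exact Or.inr ⟨h, hx.2⟩
  · exact Or.inl ⟨hx.1, h⟩

lemma sum_pairs (g : ℕ → ℝ) : ∀ k, ∑ i ∈ Ico 1 (2*k+1), g i
    = ∑ t ∈ range k, (g (2*t+1) + g (2*t+2)) := by
  intro k
  induction k with
  | zero => simp
  | succ k ih =>
    rw [Finset.sum_range_succ, ← ih, show 2*(k+1)+1 = (2*k+1)+1+1 by ring,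
      Finset.sum_Ico_succ_top (by omega), Finset.sum_Ico_succ_top (by omega)]
    have e1 : (2*k+1)+1 = 2*k+2 := rfl
    rw [e1]
    ring

lemma gauss (k : ℕ) : ∑ t ∈ range k, ((t : ℝ) + 1) = k*(k+1)/2 := by
  induction k with
  | zero => simp
  | succ k ih =>
    rw [Finset.sum_range_succ, ih]
    push_cast
    ring

end Stmt7Aux

/-- Lower bound for adversarial arc arrivals: for every even `n ≥ 4` there is a
fixed sequence of `O(n)` arc insertions on an `n`-vertex digraph such that any
maintained sequence of maximum arborescence forests incurs recourse `Ω(n²)`. -/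
theorem stmt7 : ∃ C c : ℝ, 0 < C ∧ 0 < c ∧ ∀ n : ℕ, 4 ≤ n → Even n →
    ∃ m : ℕ, (m : ℝ) ≤ C * n ∧
      ∃ a : ℕ → Fin n × Fin n,
        ∀ F : ℕ → Finset (Fin n × Fin n),
          (∀ i, 1 ≤ i → i ≤ m → IsMaxArbForest ((Finset.Icc 1 i).image a) (F i)) →
          c * (n : ℝ) ^ 2 ≤ ∑ i ∈ Finset.Ico 1 m, ((F i \ F (i + 1)).card : ℝ) := by
  refine ⟨2, 1/8, by norm_num, by norm_num, ?_⟩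
  intro n hn4 heven
  haveI : NeZero n := ⟨by omega⟩
  have hn2 : n % 2 = 0 := Nat.even_iff.mp heven
  refine ⟨2*(n-2)+1, ?_, Stmt7Aux.aseq n, ?_⟩
  · have hc : ((2*(n-2)+1 : ℕ) : ℝ) = 2*(n:ℝ) - 3 := by
      push_cast [Nat.cast_sub (show 2 ≤ n by omega)]
      ring
    have h4 : (4:ℝ) ≤ n := by exact_mod_cast hn4
    rw [hc]
    linarith
  · intro F hF
    set g : ℕ → ℝ := fun i => ((F i \ F (i+1)).card : ℝ) with hg
    have hforce : ∀ t, t ≤ n - 2 → F (2*t+1) = Stmt7Aux.Fstep n t := by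
      intro t ht
      have h := hF (2*t+1) (by omega) (by omega)
      rw [Stmt7Aux.image_aseq hn4 hn2 t ht] at h
      exact Stmt7Aux.maxforest_Gstep hn4 ht _ h
    have hstep : ∀ t ∈ range (n-2), ((t:ℝ)+1) ≤ g (2*t+1) + g (2*t+2) := by
      intro t htm
      rw [Finset.mem_range] at htm
      have h1 := hforce t (by omega)
      have h2 := hforce (t+1) (by omega)
      have h2' : F (2*t+3) = Stmt7Aux.Fstep n (t+1) := by
        rw [show 2*t+3 = 2*(t+1)+1 by ring]
        exact h2
      have hdisj : (F (2*t+1) \ F (2*t+3)) = F (2*t+1) := by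
        rw [Finset.sdiff_eq_self_iff_disjoint]
        rw [Finset.disjoint_left]
        intro p hp hq
        rw [h1] at hp
        rw [h2'] at hq
        exact Stmt7Aux.Fstep_disjoint p hp hq
      have hcard : (F (2*t+1)).card = t+1 := by
        rw [h1]
        exact Stmt7Aux.Fstep_card hn4 hn2 (by omega)
      have hnat : (t+1 : ℕ) ≤ (F (2*t+1) \ F (2*t+2)).card + (F (2*t+2) \ F (2*t+3)).card := by
        calc t+1 = (F (2*t+1) \ F (2*t+3)).card := by rw [hdisj, hcard]
        _ ≤ _ := Stmt7Aux.tri_card _ _ _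
      show ((t:ℝ)+1) ≤ ((F (2*t+1) \ F (2*t+2)).card : ℝ) + ((F (2*t+2) \ F (2*t+3)).card : ℝ)
      exact_mod_cast hnat
    have h1 : ∑ t ∈ range (n-2), ((t:ℝ)+1) ≤ ∑ t ∈ range (n-2), (g (2*t+1) + g (2*t+2)) :=
      Finset.sum_le_sum hstep
    have h2 : ∑ i ∈ Ico 1 (2*(n-2)+1), g i = ∑ t ∈ range (n-2), (g (2*t+1) + g (2*t+2)) :=
      Stmt7Aux.sum_pairs g (n-2)
    have h3 : (1/8:ℝ) * (n:ℝ)^2 ≤ ∑ t ∈ range (n-2), ((t:ℝ)+1) := by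
      rw [Stmt7Aux.gauss]
      have hcast : ((n-2 : ℕ) : ℝ) = (n:ℝ) - 2 := by
        rw [Nat.cast_sub (by omega)]
        norm_num
      rw [hcast]
      have h4 : (4:ℝ) ≤ n := by exact_mod_cast hn4
      nlinarith [sq_nonneg ((n:ℝ) - 4)]
    calc (1/8:ℝ) * (n:ℝ)^2 ≤ ∑ t ∈ range (n-2), ((t:ℝ)+1) := h3
    _ ≤ ∑ t ∈ range (n-2), (g (2*t+1) + g (2*t+2)) := h1
    _ = ∑ i ∈ Ico 1 (2*(n-2)+1), g i := h2.symm
end
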